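/- arXiv:1402.6886 — 13 statements merged into one kernel-verified Lean document; each statement's English description precedes it below -/
import Mathlib

section
/- Let n > r ≥ 2 be integers, let 0 ≤ a < b, and let λ : (a,b) → ℝ be twice differentiable with λ'(y) > 0 for all y ∈ (a,b), satisfying r·y·λ''(y) = (n−2r)·λ'(y) + (n−r)·y²·λ'(y)³ on (a,b). Then there exist constants c > 0 and k ∈ ℝ with b ≤ c^{r/(n−r)} such that λ(y) = (r/(n−r))·arcsin(y^{(n−r)/r}/c) + k for all y ∈ (a,b). -/
private lemma aux_const {a b : ℝ} {f : ℝ → ℝ}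
    (hf : ∀ y ∈ Set.Ioo a b, HasDerivAt f 0 y) {x y : ℝ}
    (hx : x ∈ Set.Ioo a b) (hy : y ∈ Set.Ioo a b) : f x = f y := by
  apply (convex_Ioo a b).is_const_of_fderivWithin_eq_zero
    (fun z hz => (hf z hz).differentiableAt.differentiableWithinAt) ?_ hx hy
  intro z hz
  have h0 : fderiv ℝ f z = 0 := by
    rw [(hf z hz).hasFDerivAt.fderiv]
    ext t
    simp
  rw [fderivWithin_of_isOpen isOpen_Ioo hz, h0]

/-- For `n > r ≥ 2`, `0 ≤ a < b`, any increasing twice differentiable solution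
`λ` on `(a,b)` of the profile ODE `r·y·λ'' = (n−2r)·λ' + (n−r)·y²·λ'³` is of the form
`λ(y) = (r/(n−r))·arcsin(y^((n−r)/r)/c) + k` with `c > 0`, `b ≤ c^(r/(n−r))`. -/
theorem stmt1 (n r : ℕ) (hr : 2 ≤ r) (hnr : r < n) (a b : ℝ) (ha : 0 ≤ a) (hab : a < b)
    (lam lam' lam'' : ℝ → ℝ)
    (hd1 : ∀ y ∈ Set.Ioo a b, HasDerivAt lam (lam' y) y)
    (hd2 : ∀ y ∈ Set.Ioo a b, HasDerivAt lam' (lam'' y) y)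
    (hpos : ∀ y ∈ Set.Ioo a b, 0 < lam' y)
    (hode : ∀ y ∈ Set.Ioo a b,
      (r : ℝ) * y * lam'' y
        = ((n : ℝ) - 2 * r) * lam' y + ((n : ℝ) - r) * y ^ 2 * (lam' y) ^ 3) :
    ∃ c k : ℝ, 0 < c ∧ b ≤ c ^ ((r : ℝ) / ((n : ℝ) - r)) ∧
      ∀ y ∈ Set.Ioo a b,
        lam y = ((r : ℝ) / ((n : ℝ) - r)) * Real.arcsin (y ^ (((n : ℝ) - r) / r) / c) + k := by
  have hrpos : (0 : ℝ) < (r : ℝ) := by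
    have : 0 < r := by omega
    exact_mod_cast this
  have hnrR : (r : ℝ) < (n : ℝ) := by exact_mod_cast hnr
  set m : ℝ := ((n : ℝ) - r) / r with hm_def
  clear_value m
  have hm : 0 < m := by rw [hm_def]; exact div_pos (by linarith) hrpos
  have hypos : ∀ y ∈ Set.Ioo a b, 0 < y := fun y hy => lt_of_le_of_lt ha hy.1
  -- first integral:  y ↦ (y^m)^2 * ((y·λ')⁻² + 1)  is constant
  have key : ∀ y ∈ Set.Ioo a b,
      HasDerivAt (fun z => (z ^ m) ^ 2 * (((z * lam' z)⁻¹) ^ 2 + 1)) 0 y := by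
    intro y hy
    have hyp : 0 < y := hypos y hy
    have hp : 0 < lam' y := hpos y hy
    have hq : lam'' y
        = (((n : ℝ) - 2 * r) * lam' y + ((n : ℝ) - r) * y ^ 2 * (lam' y) ^ 3)
          / ((r : ℝ) * y) := by
      rw [eq_div_iff (by positivity)]
      linarith [hode y hy]
    have h1 : HasDerivAt (fun z : ℝ => (z ^ m) ^ 2)
        ((2 : ℕ) * (y ^ m) ^ (2 - 1) * (m * y ^ (m - 1))) y :=
      (Real.hasDerivAt_rpow_const (Or.inl hyp.ne')).pow 2
    have h2 : HasDerivAt (fun z => z * lam' z) (1 * lam' y + y * lam'' y) y :=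
      (hasDerivAt_id y).mul (hd2 y hy)
    have hne : y * lam' y ≠ 0 := by positivity
    have h2i := h2.inv hne
    have h3 := (h2i.pow 2).add_const (1 : ℝ)
    have hD := h1.mul h3
    refine hD.congr_deriv ?_
    simp only [Pi.pow_apply, Pi.inv_apply]
    rw [hq, Real.rpow_sub_one hyp.ne', hm_def]
    generalize y ^ (((n : ℝ) - ↑r) / ↑r) = P
    have hy0 : y ≠ 0 := hyp.ne'
    have hp0 : lam' y ≠ 0 := hp.ne'
    have hr0 : (r : ℝ) ≠ 0 := hrpos.ne'
    field_simp
    ring_nf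
    field_simp
    ring
  obtain ⟨y₀, hy₀⟩ : (Set.Ioo a b).Nonempty := Set.nonempty_Ioo.2 hab
  set C : ℝ := (y₀ ^ m) ^ 2 * (((y₀ * lam' y₀)⁻¹) ^ 2 + 1) with hC_def
  have hconst : ∀ y ∈ Set.Ioo a b,
      (y ^ m) ^ 2 * (((y * lam' y)⁻¹) ^ 2 + 1) = C :=
    fun y hy => aux_const key hy hy₀
  clear_value C
  have hClt : ∀ y ∈ Set.Ioo a b, (y ^ m) ^ 2 < C := by
    intro y hy
    have hyp : 0 < y := hypos y hy
    have hp : 0 < lam' y := hpos y hy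
    have h1 : 0 < (y ^ m) ^ 2 := by positivity
    have h2 : 0 < ((y * lam' y)⁻¹) ^ 2 := by positivity
    rw [← hconst y hy]
    nlinarith
  have hC0 : 0 < C := by
    have h2 := hClt y₀ hy₀
    have hy₀p : 0 < y₀ := hypos y₀ hy₀
    have h1 : 0 < (y₀ ^ m) ^ 2 := by positivity
    linarith
  set c : ℝ := Real.sqrt C with hc_def
  have hc : 0 < c := Real.sqrt_pos.2 hC0
  have hc2 : c ^ 2 = C := Real.sq_sqrt hC0.le
  clear_value c
  have hsc : ∀ y ∈ Set.Ioo a b, y ^ m < c := by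
    intro y hy
    have h1 : (y ^ m) ^ 2 < c ^ 2 := by rw [hc2]; exact hClt y hy
    exact lt_of_pow_lt_pow_left₀ 2 hc.le h1
  -- the bound b ≤ c^(r/(n-r))
  have hble : b ≤ c ^ ((r : ℝ) / ((n : ℝ) - r)) := by
    have hKm : c ^ ((r : ℝ) / ((n : ℝ) - r)) = c ^ m⁻¹ := by
      rw [hm_def, inv_div]
    rw [hKm]
    by_contra hcon
    push_neg at hcon
    set y : ℝ := (max a (c ^ m⁻¹) + b) / 2 with hy_def
    have hmaxb : max a (c ^ m⁻¹) < b := max_lt hab hcon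
    have hyIoo : y ∈ Set.Ioo a b := by
      constructor
      · have := le_max_left a (c ^ m⁻¹); rw [hy_def]; linarith
      · rw [hy_def]; linarith
    have hyK : c ^ m⁻¹ < y := by
      have := le_max_right a (c ^ m⁻¹); rw [hy_def]; linarith
    have hyp : 0 < y := hypos y hyIoo
    have h1 : (y ^ m) ^ m⁻¹ < c ^ m⁻¹ :=
      Real.rpow_lt_rpow (Real.rpow_nonneg hyp.le m) (hsc y hyIoo) (inv_pos.2 hm)
    rw [← Real.rpow_mul hyp.le, mul_inv_cancel₀ hm.ne', Real.rpow_one] at h1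
    linarith
  -- the antiderivative
  have hhd : ∀ y ∈ Set.Ioo a b,
      HasDerivAt (fun z => m⁻¹ * Real.arcsin (z ^ m / c)) (lam' y) y := by
    intro y hy
    have hyp : 0 < y := hypos y hy
    have hp : 0 < lam' y := hpos y hy
    have hs0 : 0 < y ^ m := Real.rpow_pos_of_pos hyp m
    have hsyc : y ^ m < c := hsc y hy
    have hx1 : y ^ m / c ≠ -1 := by
      have : (0 : ℝ) < y ^ m / c := by positivity
      linarith
    have hx2 : y ^ m / c ≠ 1 := ne_of_lt ((div_lt_one hc).2 hsyc)
    have harc := Real.hasDerivAt_arcsin hx1 hx2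
    have hin : HasDerivAt (fun z : ℝ => z ^ m / c) (m * y ^ (m - 1) / c) y :=
      (Real.hasDerivAt_rpow_const (Or.inl hyp.ne')).div_const c
    have hcomp := (harc.comp y hin).const_mul m⁻¹
    have hfun : (fun z => m⁻¹ * (Real.arcsin ∘ fun z : ℝ => z ^ m / c) z)
        = fun z => m⁻¹ * Real.arcsin (z ^ m / c) := rfl
    rw [hfun] at hcomp
    -- simplify the derivative value
    set S : ℝ := Real.sqrt (c ^ 2 - (y ^ m) ^ 2) with hS_def
    have hCS : 0 < c ^ 2 - (y ^ m) ^ 2 := by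
      rw [hc2]; linarith [hClt y hy]
    have hSpos : 0 < S := Real.sqrt_pos.2 hCS
    have hS2 : S ^ 2 = c ^ 2 - (y ^ m) ^ 2 := Real.sq_sqrt hCS.le
    have hsqrt1 : Real.sqrt (1 - (y ^ m / c) ^ 2) = S / c := by
      rw [show 1 - (y ^ m / c) ^ 2 = (c ^ 2 - (y ^ m) ^ 2) / c ^ 2 by field_simp,
        Real.sqrt_div hCS.le, Real.sqrt_sq hc.le]
    clear_value S
    have hne : y * lam' y ≠ 0 := by positivity
    have hA : S ^ 2 * (y * lam' y) ^ 2 = (y ^ m) ^ 2 := by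
      have hh : ((y * lam' y)⁻¹) ^ 2 * (y * lam' y) ^ 2 = 1 := by field_simp
      calc S ^ 2 * (y * lam' y) ^ 2
          = (c ^ 2 - (y ^ m) ^ 2) * (y * lam' y) ^ 2 := by rw [hS2]
        _ = ((y ^ m) ^ 2 * (((y * lam' y)⁻¹) ^ 2 + 1) - (y ^ m) ^ 2)
              * (y * lam' y) ^ 2 := by rw [hc2, hconst y hy]
        _ = (y ^ m) ^ 2 * (((y * lam' y)⁻¹) ^ 2 * (y * lam' y) ^ 2) := by ring
        _ = (y ^ m) ^ 2 := by rw [hh, mul_one]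
    have hsp : S * (y * lam' y) = y ^ m := by
      have hsqA : (S * (y * lam' y)) ^ 2 = (y ^ m) ^ 2 := by rw [← hA]; ring
      have h1 : (0 : ℝ) < S * (y * lam' y) := by positivity
      have h2 := congrArg Real.sqrt hsqA
      rwa [Real.sqrt_sq h1.le, Real.sqrt_sq hs0.le] at h2
    have hlp : lam' y = y ^ m / (y * S) := by
      rw [eq_div_iff (by positivity)]
      linear_combination hsp
    have heq : m⁻¹ * (1 / Real.sqrt (1 - (y ^ m / c) ^ 2) * (m * y ^ (m - 1) / c))
        = lam' y := by
      rw [hsqrt1, Real.rpow_sub_one hyp.ne', hlp]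
      generalize y ^ m = P
      have hy0 : y ≠ 0 := hyp.ne'
      have hS0 : S ≠ 0 := hSpos.ne'
      have hc0 : c ≠ 0 := hc.ne'
      have hm0 : m ≠ 0 := hm.ne'
      field_simp
    rw [heq] at hcomp
    exact hcomp
  -- conclude
  refine ⟨c, lam y₀ - m⁻¹ * Real.arcsin (y₀ ^ m / c), hc, hble, ?_⟩
  intro y hy
  have hdiff : ∀ z ∈ Set.Ioo a b,
      HasDerivAt (fun w => lam w - m⁻¹ * Real.arcsin (w ^ m / c)) 0 z := by
    intro z hz
    have := (hd1 z hz).sub (hhd z hz)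
    exact this.congr_deriv (sub_self _)
  have hval := aux_const hdiff hy hy₀
  have hmr : ((r : ℝ) / ((n : ℝ) - r)) = m⁻¹ := by rw [hm_def, inv_div]
  rw [hmr]
  linarith [hval]
end

section
/- Let c > 0 and l > 0, and define λ(y) = −√c·ln(√c + √(c − l²y²)) + √c·ln(l·y) + √(c − l²y²) for y ∈ (0, √c/l). Then λ is differentiable with λ'(y) = √(c − l²y²)/y for all y ∈ (0, √c/l), and consequently ((l² + λ'(y)²)·y²)/(1 + l²·y² + λ'(y)²·y²) = c/(1+c) is constant on (0, √c/l). -/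
/-- For `c > 0`, `l > 0`, the function
`λ(y) = −√c·ln(√c + √(c − l²y²)) + √c·ln(l·y) + √(c − l²y²)` on `(0, √c/l)` has derivative
`λ'(y) = √(c − l²y²)/y` and `((l² + λ'²)·y²)/(1 + l²y² + λ'²y²) = c/(1+c)` is constant. -/
theorem stmt3 (c l : ℝ) (hc : 0 < c) (hl : 0 < l)
    (lam : ℝ → ℝ)
    (hlam : ∀ y : ℝ, lam y
      = -Real.sqrt c * Real.log (Real.sqrt c + Real.sqrt (c - l ^ 2 * y ^ 2))
        + Real.sqrt c * Real.log (l * y) + Real.sqrt (c - l ^ 2 * y ^ 2)) :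
    ∀ y ∈ Set.Ioo (0 : ℝ) (Real.sqrt c / l),
      HasDerivAt lam (Real.sqrt (c - l ^ 2 * y ^ 2) / y) y ∧
      ((l ^ 2 + (Real.sqrt (c - l ^ 2 * y ^ 2) / y) ^ 2) * y ^ 2) /
          (1 + l ^ 2 * y ^ 2 + (Real.sqrt (c - l ^ 2 * y ^ 2) / y) ^ 2 * y ^ 2)
        = c / (1 + c) := by
  intro y hy
  obtain ⟨hy0, hy1⟩ := hy
  have hly : l * y < Real.sqrt c := by rw [mul_comm]; exact (lt_div_iff₀ hl).mp hy1
  have hlt : l ^ 2 * y ^ 2 < c := by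
    have := mul_self_lt_mul_self (by positivity) hly
    calc l ^ 2 * y ^ 2 = (l * y) * (l * y) := by ring
    _ < Real.sqrt c * Real.sqrt c := this
    _ = c := Real.mul_self_sqrt hc.le
  have hu : 0 < c - l ^ 2 * y ^ 2 := by linarith
  set s := Real.sqrt (c - l ^ 2 * y ^ 2) with hs
  have hspos : 0 < s := Real.sqrt_pos.mpr hu
  have hs2 : s ^ 2 = c - l ^ 2 * y ^ 2 := Real.sq_sqrt hu.le
  set a := Real.sqrt c with ha
  have hapos : 0 < a := Real.sqrt_pos.mpr hc
  have ha2 : a ^ 2 = c := Real.sq_sqrt hc.le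
  -- inner derivative
  have hin : HasDerivAt (fun y : ℝ => c - l ^ 2 * y ^ 2) (-(l ^ 2 * (2 * y))) y := by
    simpa using ((hasDerivAt_pow 2 y).const_mul (l ^ 2)).const_sub c
  have hsq : HasDerivAt (fun y : ℝ => Real.sqrt (c - l ^ 2 * y ^ 2))
      (-(l ^ 2 * (2 * y)) / (2 * s)) y := hin.sqrt (ne_of_gt hu)
  have h1 : HasDerivAt (fun y : ℝ => -a * Real.log (a + Real.sqrt (c - l ^ 2 * y ^ 2)))
      (-a * ((-(l ^ 2 * (2 * y)) / (2 * s)) / (a + s))) y := by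
    exact ((hsq.const_add a).log (by positivity)).const_mul (-a)
  have h2 : HasDerivAt (fun y : ℝ => a * Real.log (l * y)) (a * (l / (l * y))) y := by
    have : HasDerivAt (fun y : ℝ => l * y) l y := by
      simpa using (hasDerivAt_id y).const_mul l
    exact (this.log (by positivity)).const_mul a
  have htot : HasDerivAt lam
      (-a * ((-(l ^ 2 * (2 * y)) / (2 * s)) / (a + s)) + a * (l / (l * y))
        + (-(l ^ 2 * (2 * y)) / (2 * s))) y := by
    have := (h1.add h2).add hsq
    refine HasDerivAt.congr_of_eventuallyEq this ?_
    filter_upwards with z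
    rw [hlam z]; rfl
  have hyne : y ≠ 0 := ne_of_gt hy0
  have hsne : s ≠ 0 := ne_of_gt hspos
  have hasne : a + s ≠ 0 := by positivity
  constructor
  · have heq : -a * ((-(l ^ 2 * (2 * y)) / (2 * s)) / (a + s)) + a * (l / (l * y))
        + (-(l ^ 2 * (2 * y)) / (2 * s)) = s / y := by
      field_simp
      linear_combination s*ha2 - s*hs2
    rw [← heq]
    exact htot
  · have hnum : (l ^ 2 + (s / y) ^ 2) * y ^ 2 = c := by
      field_simp
      linarith [hs2]
    have hden : 1 + l ^ 2 * y ^ 2 + (s / y) ^ 2 * y ^ 2 = 1 + c := by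
      field_simp
      linarith [hs2]
    rw [hnum, hden]
end

section
/- Let n > 2 be an integer and c ≠ 0 a real number, and set λ(y) = c·ln(y) for y > 0 and W(y)² = 1 + y²·λ'(y)² = 1 + c². Then for all y > 0: −(d/dy)[ y·(n−1)·λ'(y)²/W(y)² ] + (n−1)(n−3)·λ'(y)²/W(y)² = n(n−1)·k/y², where k = (n−2)·c²/(n·(1+c²)); moreover 0 < k < (n−2)/n. -/
/-- For `n > 2` and `c ≠ 0`, the graph `t = c·ln y` (with `λ'(y) = c/y`,
`W² = 1 + c²`) satisfies `−(d/dy)[y(n−1)λ'²/W²] + (n−1)(n−3)λ'²/W² = n(n−1)k/y²` for all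
`y > 0`, where `k = (n−2)c²/(n(1+c²))`, and `0 < k < (n−2)/n`. -/
theorem stmt4 (n : ℕ) (hn : 2 < n) (c : ℝ) (hc : c ≠ 0) :
    0 < ((n : ℝ) - 2) * c ^ 2 / ((n : ℝ) * (1 + c ^ 2)) ∧
    ((n : ℝ) - 2) * c ^ 2 / ((n : ℝ) * (1 + c ^ 2)) < ((n : ℝ) - 2) / (n : ℝ) ∧
    ∀ y : ℝ, 0 < y →
      HasDerivAt (fun t : ℝ => c * Real.log t) (c / y) y ∧
      1 + y ^ 2 * (c / y) ^ 2 = 1 + c ^ 2 ∧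
      ∃ D : ℝ,
        HasDerivAt (fun t : ℝ => t * ((n : ℝ) - 1) * (c / t) ^ 2 / (1 + c ^ 2)) D y ∧
        -D + ((n : ℝ) - 1) * ((n : ℝ) - 3) * (c / y) ^ 2 / (1 + c ^ 2)
          = (n : ℝ) * ((n : ℝ) - 1) * (((n : ℝ) - 2) * c ^ 2 / ((n : ℝ) * (1 + c ^ 2))) / y ^ 2 := by
  have hn2 : (2 : ℝ) < (n : ℝ) := by exact_mod_cast hn
  have hnpos : (0 : ℝ) < n := by linarith
  have hc2 : (0 : ℝ) < c ^ 2 := by positivity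
  have hW : (0 : ℝ) < 1 + c ^ 2 := by positivity
  refine ⟨div_pos (mul_pos (by linarith) hc2) (by positivity), ?_, ?_⟩
  · rw [div_lt_div_iff₀ (by positivity) hnpos]
    have h1 : c ^ 2 < 1 + c ^ 2 := by linarith
    nlinarith
  · intro y hy
    have hy0 : y ≠ 0 := ne_of_gt hy
    refine ⟨?_, by field_simp, ?_⟩
    · have := (Real.hasDerivAt_log hy0).const_mul c
      simpa [mul_one_div, div_eq_mul_inv] using this
    · refine ⟨-(((n : ℝ) - 1) * c ^ 2 / (1 + c ^ 2)) / y ^ 2, ?_, ?_⟩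
      · have h1 : HasDerivAt (fun t : ℝ => (((n : ℝ) - 1) * c ^ 2 / (1 + c ^ 2)) * t⁻¹)
            ((((n : ℝ) - 1) * c ^ 2 / (1 + c ^ 2)) * (-(y ^ 2)⁻¹)) y := by
          have := (hasDerivAt_inv hy0).const_mul (((n : ℝ) - 1) * c ^ 2 / (1 + c ^ 2))
          simpa using this
        have heq : (fun t : ℝ => t * ((n : ℝ) - 1) * (c / t) ^ 2 / (1 + c ^ 2)) =ᶠ[nhds y]
            (fun t : ℝ => (((n : ℝ) - 1) * c ^ 2 / (1 + c ^ 2)) * t⁻¹) := by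
          filter_upwards [eventually_ne_nhds hy0] with t ht
          field_simp
        have := h1.congr_of_eventuallyEq heq
        exact this.congr_deriv (by ring)
      · have hne : (n : ℝ) ≠ 0 := ne_of_gt hnpos
        field_simp
        ring
end

section
/- Let n ≥ r ≥ 2 be integers, H > 0, and define I(ξ) = ∫₀^ξ sinh(s)^{n−1}/cosh(s)^{r−1} ds and q(ξ) = sinh(ξ)^{2(n−r)/r} − (n·H·I(ξ))^{2/r}. Suppose ρ̄ > 0 is such that q(ξ) > 0 for all ξ ∈ (0, ρ̄), and define λ(ρ) = ∫₀^ρ √( (n·H·I(ξ))^{2/r} / q(ξ) ) dξ for ρ ∈ (0, ρ̄). Then λ is differentiable on (0, ρ̄) and satisfies the first-integral identity sinh(ρ)^{n−r}·( λ'(ρ)² / (1 + λ'(ρ)²) )^{r/2} = n·H·I(ρ) for all ρ ∈ (0, ρ̄). -/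
open intervalIntegral MeasureTheory

/-- the rotational profile `λ(ρ) = ∫₀^ρ √((nHI)^(2/r)/q)` is differentiable on
`(0, ρ̄)` (where `q > 0`) and satisfies the first integral identity
`sinh(ρ)^(n−r)·(λ'²/(1+λ'²))^(r/2) = nH·I(ρ)`. -/
theorem stmt5 (n r : ℕ) (hr : 2 ≤ r) (hn : r ≤ n) (H : ℝ) (hH : 0 < H)
    (ρbar : ℝ) (hρbar : 0 < ρbar) (I q lam : ℝ → ℝ)
    (hI : ∀ ξ : ℝ, I ξ
      = ∫ s in (0 : ℝ)..ξ, Real.sinh s ^ ((n : ℝ) - 1) / Real.cosh s ^ ((r : ℝ) - 1))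
    (hq : ∀ ξ : ℝ, q ξ
      = Real.sinh ξ ^ (2 * ((n : ℝ) - r) / r) - ((n : ℝ) * H * I ξ) ^ (2 / (r : ℝ)))
    (hqpos : ∀ ξ ∈ Set.Ioo (0 : ℝ) ρbar, 0 < q ξ)
    (hlam : ∀ ρ : ℝ, lam ρ
      = ∫ ξ in (0 : ℝ)..ρ, Real.sqrt ((((n : ℝ) * H * I ξ) ^ (2 / (r : ℝ))) / q ξ)) :
    ∀ ρ ∈ Set.Ioo (0 : ℝ) ρbar, ∃ d : ℝ, HasDerivAt lam d ρ ∧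
      Real.sinh ρ ^ ((n : ℝ) - r) * (d ^ 2 / (1 + d ^ 2)) ^ ((r : ℝ) / 2)
        = (n : ℝ) * H * I ρ := by
  intro ρ hρ
  obtain ⟨hρ0, hρρbar⟩ := hρ
  have hr0 : (0:ℝ) < r := by positivity
  have hrn0 : (r:ℝ) ≠ 0 := ne_of_gt hr0
  have hn1 : (1:ℝ) ≤ (n:ℝ) - 1 := by
    have : (2:ℝ) ≤ n := by exact_mod_cast hr.trans hn
    linarith
  have hr1 : (0:ℝ) ≤ (r:ℝ) - 1 := by
    have : (2:ℝ) ≤ r := by exact_mod_cast hr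
    linarith
  have hnr : (0:ℝ) ≤ (n:ℝ) - r := by
    have : (r:ℝ) ≤ n := by exact_mod_cast hn
    linarith
  have h2r : (0:ℝ) ≤ 2 / (r:ℝ) := by positivity
  have hnH : (0:ℝ) < (n:ℝ) * H := by
    have h2n : (2:ℝ) ≤ n := by exact_mod_cast hr.trans hn
    nlinarith
  -- the integrand of I
  set g : ℝ → ℝ := fun s => Real.sinh s ^ ((n : ℝ) - 1) / Real.cosh s ^ ((r : ℝ) - 1) with hgdef
  have hgcont : Continuous g := by
    apply Continuous.div
    · exact Real.continuous_sinh.rpow_const fun x => Or.inr (by linarith)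
    · exact Real.continuous_cosh.rpow_const fun x => Or.inr hr1
    · intro x
      exact ne_of_gt (Real.rpow_pos_of_pos (Real.cosh_pos x) _)
  -- I is continuous
  have hIfun : I = fun x => ∫ s in (0:ℝ)..x, g s := funext hI
  have hIderiv : ∀ x : ℝ, HasDerivAt I (g x) x := by
    intro x
    rw [hIfun]
    exact (hgcont.integral_hasStrictDerivAt 0 x).hasDerivAt
  have hIcont : Continuous I := continuous_iff_continuousAt.mpr fun x => (hIderiv x).continuousAt
  -- I nonneg on [0, ∞)
  have hg_nonneg : ∀ s : ℝ, 0 ≤ s → 0 ≤ g s := by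
    intro s hs
    apply div_nonneg
    · exact Real.rpow_nonneg (Real.sinh_nonneg_iff.mpr hs) _
    · exact (Real.rpow_pos_of_pos (Real.cosh_pos s) _).le
  have hInonneg : ∀ x : ℝ, 0 ≤ x → 0 ≤ I x := by
    intro x hx
    rw [hI x]
    exact intervalIntegral.integral_nonneg hx fun s hs => hg_nonneg s hs.1
  -- A, continuity of A, q, f
  set A : ℝ → ℝ := fun ξ => ((n : ℝ) * H * I ξ) ^ (2 / (r:ℝ)) with hAdef
  have hAcont : Continuous A :=
    (continuous_const.mul hIcont).rpow_const fun x => Or.inr h2r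
  have hqfun : q = fun ξ => Real.sinh ξ ^ (2 * ((n : ℝ) - r) / r) - A ξ := funext hq
  have hqcont : Continuous q := by
    rw [hqfun]
    exact (Real.continuous_sinh.rpow_const fun x => Or.inr (by positivity)).sub hAcont
  set f : ℝ → ℝ := fun ξ => Real.sqrt ((((n : ℝ) * H * I ξ) ^ (2 / (r : ℝ))) / q ξ) with hfdef
  have hfA : f = fun ξ => Real.sqrt (A ξ / q ξ) := rfl
  have hfmeas : Measurable f := by
    rw [hfA]
    exact Real.continuous_sqrt.measurable.comp (hAcont.measurable.div hqcont.measurable)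
  have hfcontAt : ∀ x ∈ Set.Ioo (0:ℝ) ρbar, ContinuousAt f x := by
    intro x hx
    rw [hfA]
    exact Real.continuous_sqrt.continuousAt.comp
      ((hAcont.continuousAt).div (hqcont.continuousAt) (ne_of_gt (hqpos x hx)))
  have hnHI_nonneg : ∀ x : ℝ, 0 ≤ x → 0 ≤ (n:ℝ) * H * I x := by
    intro x hx
    have := hInonneg x hx
    positivity
  have hAnonneg : ∀ x : ℝ, 0 ≤ x → 0 ≤ A x := fun x hx => Real.rpow_nonneg (hnHI_nonneg x hx) _
  -- choose ε so that the auxiliary continuous function is < 1 on [0, ε]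
  set h : ℝ → ℝ := fun ξ => (2:ℝ) ^ ((r:ℝ)/2) * ((n:ℝ) * H * ξ) * Real.sinh ξ ^ ((r:ℝ)-1)
    with hhdef
  have hhcont : Continuous h := by
    apply Continuous.mul
    · exact continuous_const.mul (continuous_const.mul continuous_id)
    · exact Real.continuous_sinh.rpow_const fun x => Or.inr hr1
  have hh0 : h 0 = 0 := by simp [hhdef]
  have hhev : ∀ᶠ ξ in nhds (0:ℝ), h ξ < 1 := by
    exact hhcont.continuousAt.eventually_lt
      (continuousAt_const : ContinuousAt (fun _ : ℝ => (1:ℝ)) 0) (by rw [hh0]; norm_num)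
  obtain ⟨ε0, hε0pos, hε0⟩ := Metric.eventually_nhds_iff_ball.mp hhev
  set ε : ℝ := min (ε0/2) (ρ/2) with hεdef
  have hεpos : 0 < ε := lt_min (by linarith) (by linarith)
  have hερ : ε < ρ := lt_of_le_of_lt (min_le_right _ _) (by linarith)
  have hεball : ∀ ξ : ℝ, 0 ≤ ξ → ξ ≤ ε → h ξ < 1 := by
    intro ξ h0 h1
    apply hε0
    rw [Metric.mem_ball, Real.dist_eq, sub_zero, abs_of_nonneg h0]
    have : ε ≤ ε0 / 2 := min_le_left _ _
    linarith
  -- key bound: f ≤ 1 on (0, ε]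
  have hbound : ∀ ξ : ℝ, 0 < ξ → ξ ≤ ε → f ξ ≤ 1 := by
    intro ξ hξ0 hξε
    have hξρbar : ξ ∈ Set.Ioo (0:ℝ) ρbar := ⟨hξ0, by
      have := hερ; exact lt_trans (lt_of_le_of_lt hξε hερ) hρρbar⟩
    have hqξ : 0 < q ξ := hqpos ξ hξρbar
    have hsξ : 0 < Real.sinh ξ := Real.sinh_pos_iff.mpr hξ0
    -- I ξ ≤ ξ * sinh ξ ^ (n-1)
    have hIle : I ξ ≤ ξ * Real.sinh ξ ^ ((n:ℝ)-1) := by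
      rw [hI ξ]
      have hle : ∀ s ∈ Set.Icc (0:ℝ) ξ, g s ≤ Real.sinh ξ ^ ((n:ℝ)-1) := by
        intro s hs
        have h1 : g s ≤ Real.sinh s ^ ((n:ℝ)-1) := by
          rw [hgdef]
          apply div_le_self (Real.rpow_nonneg (Real.sinh_nonneg_iff.mpr hs.1) _)
          exact Real.one_le_rpow (Real.one_le_cosh s) hr1
        have h2 : Real.sinh s ^ ((n:ℝ)-1) ≤ Real.sinh ξ ^ ((n:ℝ)-1) :=
          Real.rpow_le_rpow (Real.sinh_nonneg_iff.mpr hs.1) (Real.sinh_le_sinh.mpr hs.2)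
            (by linarith)
        exact h1.trans h2
      calc (∫ s in (0:ℝ)..ξ, g s) ≤ ∫ _s in (0:ℝ)..ξ, Real.sinh ξ ^ ((n:ℝ)-1) := by
              apply intervalIntegral.integral_mono_on hξ0.le
                (hgcont.intervalIntegrable 0 ξ) (intervalIntegrable_const) hle
        _ = ξ * Real.sinh ξ ^ ((n:ℝ)-1) := by
              rw [intervalIntegral.integral_const, sub_zero, smul_eq_mul]
    -- so n H I ξ ≤ n H ξ sinh^{n-1}
    have hBle : (n:ℝ) * H * I ξ ≤ (n:ℝ) * H * ξ * Real.sinh ξ ^ ((n:ℝ)-1) := by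
      have := mul_le_mul_of_nonneg_left hIle hnH.le
      linarith [this]
    -- key inequality times sinh^{n-r}
    have hsinh_split : Real.sinh ξ ^ ((r:ℝ)-1) * Real.sinh ξ ^ ((n:ℝ)-r)
        = Real.sinh ξ ^ ((n:ℝ)-1) := by
      rw [← Real.rpow_add hsξ]; congr 1; ring
    have hkey : (2:ℝ) ^ ((r:ℝ)/2) * ((n:ℝ) * H * ξ * Real.sinh ξ ^ ((n:ℝ)-1))
        ≤ Real.sinh ξ ^ ((n:ℝ)-r) := by
      have h1 := (hεball ξ hξ0.le hξε).le
      have hS : 0 ≤ Real.sinh ξ ^ ((n:ℝ)-r) := (Real.rpow_pos_of_pos hsξ _).le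
      have := mul_le_mul_of_nonneg_right h1 hS
      rw [one_mul] at this
      calc (2:ℝ) ^ ((r:ℝ)/2) * ((n:ℝ) * H * ξ * Real.sinh ξ ^ ((n:ℝ)-1))
          = h ξ * Real.sinh ξ ^ ((n:ℝ)-r) := by
            rw [hhdef]; dsimp only; rw [← hsinh_split]; ring
        _ ≤ Real.sinh ξ ^ ((n:ℝ)-r) := this
    -- raise to the power 2/r
    have hLHSnn : (0:ℝ) ≤ (2:ℝ) ^ ((r:ℝ)/2) * ((n:ℝ) * H * ξ * Real.sinh ξ ^ ((n:ℝ)-1)) := by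
      have : (0:ℝ) ≤ Real.sinh ξ ^ ((n:ℝ)-1) := (Real.rpow_pos_of_pos hsξ _).le
      positivity
    have hpow := Real.rpow_le_rpow hLHSnn hkey h2r
    have hleft : ((2:ℝ) ^ ((r:ℝ)/2) * ((n:ℝ) * H * ξ * Real.sinh ξ ^ ((n:ℝ)-1))) ^ (2/(r:ℝ))
        = 2 * ((n:ℝ) * H * ξ * Real.sinh ξ ^ ((n:ℝ)-1)) ^ (2/(r:ℝ)) := by
      have h2pow : (((2:ℝ) ^ ((r:ℝ)/2)) : ℝ) ^ (2/(r:ℝ)) = 2 := by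
        rw [← Real.rpow_mul (by norm_num : (0:ℝ) ≤ 2),
          show ((r:ℝ)/2) * (2/(r:ℝ)) = 1 by field_simp, Real.rpow_one]
      rw [Real.mul_rpow (by positivity) (by
        have : (0:ℝ) ≤ Real.sinh ξ ^ ((n:ℝ)-1) := (Real.rpow_pos_of_pos hsξ _).le
        positivity), h2pow]
    have hright : (Real.sinh ξ ^ ((n:ℝ)-r)) ^ (2/(r:ℝ))
        = Real.sinh ξ ^ (2 * ((n:ℝ) - r) / r) := by
      rw [← Real.rpow_mul hsξ.le]; congr 1; ring
    rw [hleft, hright] at hpow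
    -- A ξ ≤ (n H ξ sinh^{n-1})^{2/r}
    have hAle : A ξ ≤ ((n:ℝ) * H * ξ * Real.sinh ξ ^ ((n:ℝ)-1)) ^ (2/(r:ℝ)) := by
      rw [hAdef]
      exact Real.rpow_le_rpow (hnHI_nonneg ξ hξ0.le) (by linarith [hBle]) h2r
    -- 2 A ξ ≤ sinh^{2(n-r)/r} = q ξ + A ξ, so A ξ ≤ q ξ
    have h2A : 2 * A ξ ≤ Real.sinh ξ ^ (2 * ((n:ℝ) - r) / r) := by
      linarith [hAle, hpow]
    have hAq : A ξ ≤ q ξ := by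
      have hqe : q ξ = Real.sinh ξ ^ (2 * ((n:ℝ) - r) / r) - A ξ := hq ξ
      linarith [h2A, hqe]
    rw [hfA]
    apply Real.sqrt_le_one.mpr
    rw [div_le_one hqξ]
    exact hAq
  -- interval integrability of f on [0, ρ]
  have hint1 : IntervalIntegrable f volume 0 ε := by
    rw [intervalIntegrable_iff_integrableOn_Ioc_of_le hεpos.le]
    apply Measure.integrableOn_of_bounded (M := 1) measure_Ioc_lt_top.ne
      hfmeas.aestronglyMeasurable
    filter_upwards [ae_restrict_mem measurableSet_Ioc] with x hx
    rw [Real.norm_eq_abs, abs_of_nonneg (Real.sqrt_nonneg _)]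
    exact hbound x hx.1 hx.2
  have hint2 : IntervalIntegrable f volume ε ρ := by
    apply ContinuousOn.intervalIntegrable
    intro x hx
    rw [Set.uIcc_of_le hερ.le] at hx
    exact (hfcontAt x ⟨lt_of_lt_of_le hεpos hx.1, lt_of_le_of_lt hx.2 hρρbar⟩).continuousWithinAt
  have hint : IntervalIntegrable f volume 0 ρ := hint1.trans hint2
  -- the derivative
  have hlamfun : lam = fun x => ∫ ξ in (0:ℝ)..x, f ξ := funext hlam
  have hderiv : HasDerivAt lam (f ρ) ρ := by
    rw [hlamfun]
    exact intervalIntegral.integral_hasDerivAt_right hint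
      (hfmeas.stronglyMeasurable.stronglyMeasurableAtFilter)
      (hfcontAt ρ ⟨hρ0, hρρbar⟩)
  refine ⟨f ρ, hderiv, ?_⟩
  -- the algebraic identity
  have hqρ : 0 < q ρ := hqpos ρ ⟨hρ0, hρρbar⟩
  have hsρ : 0 < Real.sinh ρ := Real.sinh_pos_iff.mpr hρ0
  have hAρ : 0 ≤ A ρ := hAnonneg ρ hρ0.le
  have hd2 : f ρ ^ 2 = A ρ / q ρ := by
    rw [hfA]
    exact Real.sq_sqrt (div_nonneg hAρ hqρ.le)
  set S : ℝ := Real.sinh ρ ^ (2 * ((n:ℝ) - r) / r) with hSdef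
  have hSpos : 0 < S := Real.rpow_pos_of_pos hsρ _
  have hqS : q ρ = S - A ρ := hq ρ
  have hfrac : f ρ ^ 2 / (1 + f ρ ^ 2) = A ρ / S := by
    rw [hd2]
    have h1 : 1 + A ρ / q ρ = S / q ρ := by
      field_simp
      linarith [hqS]
    rw [h1, div_div_div_cancel_right₀ (ne_of_gt hqρ)]
  rw [hfrac]
  have hAS : (A ρ / S) ^ ((r:ℝ)/2) = A ρ ^ ((r:ℝ)/2) / S ^ ((r:ℝ)/2) :=
    Real.div_rpow hAρ hSpos.le _
  have hApow : A ρ ^ ((r:ℝ)/2) = (n:ℝ) * H * I ρ := by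
    rw [hAdef, ← Real.rpow_mul (hnHI_nonneg ρ hρ0.le)]
    rw [div_mul_div_comm, mul_comm (2:ℝ) ((r:ℝ))]
    rw [div_self (by positivity), Real.rpow_one]
  have hSpow : S ^ ((r:ℝ)/2) = Real.sinh ρ ^ ((n:ℝ) - r) := by
    rw [hSdef, ← Real.rpow_mul hsρ.le]
    congr 1
    field_simp
  rw [hAS, hApow, hSpow, mul_div_cancel₀]
  exact ne_of_gt (Real.rpow_pos_of_pos hsρ _)
end

section
/- Let n ≥ r ≥ 2 be integers, H > 0, I(ξ) = ∫₀^ξ sinh(s)^{n−1}/cosh(s)^{r−1} ds, q(ξ) = sinh(ξ)^{2(n−r)/r} − (n·H·I(ξ))^{2/r}, and suppose q(ξ) > 0 for all ξ ∈ (0, ρ̄) for some ρ̄ > 0. Then the function λ(ρ) = ∫₀^ρ √( (n·H·I(ξ))^{2/r} / q(ξ) ) dξ is twice differentiable on (0, ρ̄) with λ'(ρ) > 0 and λ''(ρ) > 0 for every ρ ∈ (0, ρ̄). -/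
/-- the rotational profile `λ(ρ) = ∫₀^ρ √((nHI)^(2/r)/q)` is twice differentiable
on `(0, ρ̄)` (where `q > 0`) with `λ' > 0` and `λ'' > 0` there. -/
theorem stmt6 (n r : ℕ) (hr : 2 ≤ r) (hn : r ≤ n) (H : ℝ) (hH : 0 < H)
    (ρbar : ℝ) (hρbar : 0 < ρbar) (I q lam : ℝ → ℝ)
    (hI : ∀ ξ : ℝ, I ξ
      = ∫ s in (0 : ℝ)..ξ, Real.sinh s ^ ((n : ℝ) - 1) / Real.cosh s ^ ((r : ℝ) - 1))
    (hq : ∀ ξ : ℝ, q ξ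
      = Real.sinh ξ ^ (2 * ((n : ℝ) - r) / r) - ((n : ℝ) * H * I ξ) ^ (2 / (r : ℝ)))
    (hqpos : ∀ ξ ∈ Set.Ioo (0 : ℝ) ρbar, 0 < q ξ)
    (hlam : ∀ ρ : ℝ, lam ρ
      = ∫ ξ in (0 : ℝ)..ρ, Real.sqrt ((((n : ℝ) * H * I ξ) ^ (2 / (r : ℝ))) / q ξ)) :
    ∃ lam' lam'' : ℝ → ℝ, ∀ ρ ∈ Set.Ioo (0 : ℝ) ρbar,
      HasDerivAt lam (lam' ρ) ρ ∧ HasDerivAt lam' (lam'' ρ) ρ ∧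
      0 < lam' ρ ∧ 0 < lam'' ρ := by
  have hrR : (2:ℝ) ≤ (r:ℝ) := by exact_mod_cast hr
  have hnR : (r:ℝ) ≤ (n:ℝ) := by exact_mod_cast hn
  have hr0 : (0:ℝ) < (r:ℝ) := by linarith
  have hn0 : ((n:ℝ)) ≠ 0 := by
    have : (0:ℝ) < (n:ℝ) := by linarith
    exact this.ne'
  have he0 : (0:ℝ) < 2/(r:ℝ) := by positivity
  -- basic power identity
  have hpow : ∀ (x : ℝ), x ≠ 0 → ∀ p : ℝ, x ^ (p-1) * x = x ^ p := by
    intro x hx p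
    rw [← Real.rpow_add_one hx]
    congr 1; ring
  set m : ℝ := 2 * ((n:ℝ) - (r:ℝ)) / (r:ℝ) with hmdef
  have hm0 : 0 ≤ m := by
    have : (0:ℝ) ≤ (n:ℝ) - r := by linarith
    positivity
  -- the integrand of I
  set g : ℝ → ℝ := fun s => Real.sinh s ^ ((n:ℝ)-1) / Real.cosh s ^ ((r:ℝ)-1) with hgdef
  have hgcont : Continuous g := by
    apply Continuous.div
    · exact Real.continuous_sinh.rpow_const (fun s => Or.inr (by linarith))
    · exact Real.continuous_cosh.rpow_const (fun s => Or.inr (by linarith))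
    · exact fun s => (Real.rpow_pos_of_pos (Real.cosh_pos s) _).ne'
  have hIfun : I = fun x => ∫ s in (0:ℝ)..x, g s := by
    funext x; rw [hI]
  have hIderiv : ∀ ξ : ℝ, HasDerivAt I (g ξ) ξ := by
    intro ξ
    rw [hIfun]
    exact intervalIntegral.integral_hasDerivAt_right (hgcont.intervalIntegrable 0 ξ)
      hgcont.stronglyMeasurable.stronglyMeasurableAtFilter hgcont.continuousAt
  have hIcont : Continuous I := by
    have : Differentiable ℝ I := fun ξ => (hIderiv ξ).differentiableAt
    exact this.continuous
  have hgpos : ∀ s : ℝ, 0 < s → 0 < g s := by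
    intro s hs
    exact div_pos (Real.rpow_pos_of_pos (Real.sinh_pos_iff.mpr hs) _)
      (Real.rpow_pos_of_pos (Real.cosh_pos s) _)
  have hIpos : ∀ ξ : ℝ, 0 < ξ → 0 < I ξ := by
    intro ξ hξ
    rw [hIfun]
    exact intervalIntegral.intervalIntegral_pos_of_pos_on (hgcont.intervalIntegrable 0 ξ)
      (fun x hx => hgpos x hx.1) hξ
  have hI0 : I 0 = 0 := by rw [hI 0, intervalIntegral.integral_same]
  -- the function A
  set A : ℝ → ℝ := fun ξ => ((n:ℝ) * H * I ξ) ^ (2 / (r:ℝ)) with hAdef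
  have hAcont : Continuous A :=
    (continuous_const.mul hIcont).rpow_const (fun x => Or.inr he0.le)
  have hA0 : A 0 = 0 := by
    simp only [hAdef, hI0, mul_zero, Real.zero_rpow (ne_of_gt he0)]
  have hqfun : q = fun ξ => Real.sinh ξ ^ m - A ξ := by
    funext ξ; rw [hq ξ]
  have hqcont : Continuous q := by
    rw [hqfun]
    exact (Real.continuous_sinh.rpow_const (fun x => Or.inr hm0)).sub hAcont
  -- the function f = A/q and its key properties on (0, ρbar)
  set f : ℝ → ℝ := fun ξ => A ξ / q ξ with hfdef
  have main : ∀ ρ ∈ Set.Ioo (0:ℝ) ρbar,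
      HasDerivAt f (deriv f ρ) ρ ∧ 0 < deriv f ρ ∧ 0 < f ρ := by
    intro ρ hρ
    have hsρ : 0 < Real.sinh ρ := Real.sinh_pos_iff.mpr hρ.1
    have hcρ : 0 < Real.cosh ρ := Real.cosh_pos ρ
    have hxρ : 0 < (n:ℝ) * H * I ρ := by
      have := hIpos ρ hρ.1
      positivity
    have hqρ : 0 < q ρ := hqpos ρ hρ
    have hAρ : 0 < A ρ := Real.rpow_pos_of_pos hxρ _
    -- derivative of A at ρ
    have hAder : HasDerivAt A
        ((((n:ℝ)*H) * g ρ) * (2/(r:ℝ)) * ((n:ℝ) * H * I ρ) ^ (2/(r:ℝ) - 1)) ρ :=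
      ((hIderiv ρ).const_mul ((n:ℝ)*H)).rpow_const (Or.inl hxρ.ne')
    -- derivative of q at ρ
    have hBder : HasDerivAt (fun ξ => Real.sinh ξ ^ m)
        (Real.cosh ρ * m * Real.sinh ρ ^ (m-1)) ρ :=
      (Real.hasDerivAt_sinh ρ).rpow_const (Or.inl hsρ.ne')
    have hqder : HasDerivAt q
        (Real.cosh ρ * m * Real.sinh ρ ^ (m-1)
          - (((n:ℝ)*H) * g ρ) * (2/(r:ℝ)) * ((n:ℝ) * H * I ρ) ^ (2/(r:ℝ) - 1)) ρ := by
      rw [hqfun]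
      exact hBder.sub hAder
    -- derivative of f at ρ
    have hfder : HasDerivAt f
        ((((((n:ℝ)*H) * g ρ) * (2/(r:ℝ)) * ((n:ℝ) * H * I ρ) ^ (2/(r:ℝ) - 1)) * q ρ
          - A ρ * (Real.cosh ρ * m * Real.sinh ρ ^ (m-1)
            - (((n:ℝ)*H) * g ρ) * (2/(r:ℝ)) * ((n:ℝ) * H * I ρ) ^ (2/(r:ℝ) - 1))) / q ρ ^ 2) ρ :=
      hAder.div hqder hqρ.ne'
    -- key inequality: (n - r) * I ρ < sinh ρ ^ n / cosh ρ ^ r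
    have Fkey : ((n:ℝ) - (r:ℝ)) * I ρ < Real.sinh ρ ^ ((n:ℝ)) / Real.cosh ρ ^ ((r:ℝ)) := by
      set φ : ℝ → ℝ :=
        fun ξ => Real.sinh ξ ^ ((n:ℝ)) / Real.cosh ξ ^ ((r:ℝ)) - ((n:ℝ) - (r:ℝ)) * I ξ with hφdef
      have hφcont : Continuous φ := by
        apply Continuous.sub
        · apply Continuous.div
          · exact Real.continuous_sinh.rpow_const (fun s => Or.inr (by positivity))
          · exact Real.continuous_cosh.rpow_const (fun s => Or.inr (by positivity))
          · exact fun s => (Real.rpow_pos_of_pos (Real.cosh_pos s) _).ne'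
        · exact continuous_const.mul hIcont
      have hφmono : StrictMonoOn φ (Set.Icc 0 ρ) := by
        apply strictMonoOn_of_deriv_pos (convex_Icc _ _) hφcont.continuousOn
        intro x hx
        rw [interior_Icc] at hx
        have hsx : 0 < Real.sinh x := Real.sinh_pos_iff.mpr hx.1
        have hcx : 0 < Real.cosh x := Real.cosh_pos x
        have hu : HasDerivAt (fun ξ => Real.sinh ξ ^ ((n:ℝ)))
            (Real.cosh x * (n:ℝ) * Real.sinh x ^ ((n:ℝ)-1)) x :=
          (Real.hasDerivAt_sinh x).rpow_const (Or.inl hsx.ne')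
        have hv : HasDerivAt (fun ξ => Real.cosh ξ ^ ((r:ℝ)))
            (Real.sinh x * (r:ℝ) * Real.cosh x ^ ((r:ℝ)-1)) x :=
          (Real.hasDerivAt_cosh x).rpow_const (Or.inl hcx.ne')
        have hφder : HasDerivAt φ
            ((Real.cosh x * (n:ℝ) * Real.sinh x ^ ((n:ℝ)-1) * Real.cosh x ^ ((r:ℝ))
              - Real.sinh x ^ ((n:ℝ)) * (Real.sinh x * (r:ℝ) * Real.cosh x ^ ((r:ℝ)-1)))
                / (Real.cosh x ^ ((r:ℝ)))^2
              - ((n:ℝ) - (r:ℝ)) * g x) x :=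
          (hu.div hv (Real.rpow_pos_of_pos hcx _).ne').sub ((hIderiv x).const_mul _)
        rw [hφder.deriv]
        -- show positivity of the derivative
        have hsn : Real.sinh x ^ ((n:ℝ)) = Real.sinh x ^ ((n:ℝ)-1) * Real.sinh x :=
          (hpow _ hsx.ne' _).symm
        have hcr : Real.cosh x ^ ((r:ℝ)) = Real.cosh x ^ ((r:ℝ)-1) * Real.cosh x :=
          (hpow _ hcx.ne' _).symm
        set a := Real.sinh x ^ ((n:ℝ)-1) with hadef2
        set b := Real.cosh x ^ ((r:ℝ)-1) with hbdef2
        have ha : 0 < a := Real.rpow_pos_of_pos hsx _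
        have hb : 0 < b := Real.rpow_pos_of_pos hcx _
        have h1 : Real.cosh x ^ 2 - Real.sinh x ^ 2 = 1 := Real.cosh_sq_sub_sinh_sq x
        rw [hsn, hcr, hgdef]
        simp only
        rw [← hadef2, ← hbdef2]
        have key : (Real.cosh x * (n:ℝ) * a * (b * Real.cosh x)
              - (a * Real.sinh x) * (Real.sinh x * (r:ℝ) * b)) / (b * Real.cosh x)^2
            - ((n:ℝ) - (r:ℝ)) * (a / b) = a * (r:ℝ) / (b * Real.cosh x ^ 2) := by
          field_simp
          linear_combination ((r:ℝ)) * h1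
        rw [key]
        positivity
      have h0mem : (0:ℝ) ∈ Set.Icc (0:ℝ) ρ := Set.left_mem_Icc.mpr hρ.1.le
      have hρmem : ρ ∈ Set.Icc (0:ℝ) ρ := Set.right_mem_Icc.mpr hρ.1.le
      have := hφmono h0mem hρmem hρ.1
      have hφ0 : φ 0 = 0 := by
        simp [hφdef, hI0, Real.sinh_zero, Real.zero_rpow hn0]
        omega
      rw [hφ0] at this
      simp only [hφdef] at this
      linarith
    -- positivity of the numerator of f'
    have hNpos : 0 <
        ((((n:ℝ)*H) * g ρ) * (2/(r:ℝ)) * ((n:ℝ) * H * I ρ) ^ (2/(r:ℝ) - 1)) * q ρ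
          - A ρ * (Real.cosh ρ * m * Real.sinh ρ ^ (m-1)
            - (((n:ℝ)*H) * g ρ) * (2/(r:ℝ)) * ((n:ℝ) * H * I ρ) ^ (2/(r:ℝ) - 1)) := by
      have hX1 : (0:ℝ) < ((n:ℝ) * H * I ρ) ^ (2/(r:ℝ) - 1) := Real.rpow_pos_of_pos hxρ _
      have hS1 : (0:ℝ) < Real.sinh ρ ^ (m - 1) := Real.rpow_pos_of_pos hsρ _
      have hxA : A ρ = ((n:ℝ) * H * I ρ) ^ (2/(r:ℝ) - 1) * ((n:ℝ) * H * I ρ) :=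
        (hpow _ hxρ.ne' _).symm
      have hsm : Real.sinh ρ ^ m = Real.sinh ρ ^ (m-1) * Real.sinh ρ :=
        (hpow _ hsρ.ne' _).symm
      have hcr : Real.cosh ρ ^ ((r:ℝ)) = Real.cosh ρ ^ ((r:ℝ)-1) * Real.cosh ρ :=
        (hpow _ hcρ.ne' _).symm
      have hsn : Real.sinh ρ ^ ((n:ℝ)) = Real.sinh ρ ^ ((n:ℝ)-1) * Real.sinh ρ :=
        (hpow _ hsρ.ne' _).symm
      have hqρ' : q ρ = Real.sinh ρ ^ m - A ρ := by rw [hqfun]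
      have hb : (0:ℝ) < Real.cosh ρ ^ ((r:ℝ)-1) := Real.rpow_pos_of_pos hcρ _
      -- rewrite the numerator as a product of positive things
      have hgρ : g ρ = Real.sinh ρ ^ ((n:ℝ)-1) / Real.cosh ρ ^ ((r:ℝ)-1) := by rw [hgdef]
      have identity :
          ((((n:ℝ)*H) * g ρ) * (2/(r:ℝ)) * ((n:ℝ) * H * I ρ) ^ (2/(r:ℝ) - 1)) * q ρ
            - A ρ * (Real.cosh ρ * m * Real.sinh ρ ^ (m-1)
              - (((n:ℝ)*H) * g ρ) * (2/(r:ℝ)) * ((n:ℝ) * H * I ρ) ^ (2/(r:ℝ) - 1))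
          = (2/(r:ℝ)) * ((n:ℝ) * H * I ρ) ^ (2/(r:ℝ) - 1) * Real.sinh ρ ^ (m-1)
              * ((n:ℝ)*H) * Real.cosh ρ
              * (Real.sinh ρ ^ ((n:ℝ)) / Real.cosh ρ ^ ((r:ℝ)) - ((n:ℝ) - (r:ℝ)) * I ρ) := by
        rw [hqρ', hgρ, hxA, hsm, hsn, hcr, hmdef]
        field_simp
        ring
      rw [identity]
      have hdiff : 0 < Real.sinh ρ ^ ((n:ℝ)) / Real.cosh ρ ^ ((r:ℝ)) - ((n:ℝ) - (r:ℝ)) * I ρ := by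
        linarith
      positivity
    have hfρ : 0 < f ρ := div_pos hAρ hqρ
    have hdpos : 0 < (((((n:ℝ)*H) * g ρ) * (2/(r:ℝ)) * ((n:ℝ) * H * I ρ) ^ (2/(r:ℝ) - 1)) * q ρ
          - A ρ * (Real.cosh ρ * m * Real.sinh ρ ^ (m-1)
            - (((n:ℝ)*H) * g ρ) * (2/(r:ℝ)) * ((n:ℝ) * H * I ρ) ^ (2/(r:ℝ) - 1))) / q ρ ^ 2 :=
      div_pos hNpos (by positivity)
    refine ⟨?_, ?_, hfρ⟩
    · rw [hfder.deriv]; exact hfder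
    · rw [hfder.deriv]; exact hdpos
  -- f is strictly monotone on (0, ρbar)
  have hmono : StrictMonoOn f (Set.Ioo 0 ρbar) := by
    apply strictMonoOn_of_deriv_pos (convex_Ioo _ _)
    · exact fun ρ hρ => (main ρ hρ).1.differentiableAt.continuousAt.continuousWithinAt
    · intro x hx
      rw [interior_Ioo] at hx
      exact (main x hx).2.1
  have hf0 : f 0 = 0 := by
    simp only [hfdef, hA0, zero_div]
  -- the integrand of lam
  have hlamfun : lam = fun u => ∫ ξ in (0:ℝ)..u, Real.sqrt (f ξ) := by
    funext u; rw [hlam u]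
  have hhmeas : MeasureTheory.StronglyMeasurable (fun ξ => Real.sqrt (f ξ)) :=
    (Real.continuous_sqrt.measurable.comp (hAcont.measurable.div hqcont.measurable)).stronglyMeasurable
  refine ⟨fun ρ => Real.sqrt (f ρ), deriv (fun ρ => Real.sqrt (f ρ)), ?_⟩
  intro ρ hρ
  obtain ⟨hfd, hfd_pos, hfρ⟩ := main ρ hρ
  have hqρ : 0 < q ρ := hqpos ρ hρ
  -- interval integrability of the integrand via monotonicity
  have hint : IntervalIntegrable (fun ξ => Real.sqrt (f ξ)) MeasureTheory.volume 0 ρ := by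
    apply MonotoneOn.intervalIntegrable
    rw [Set.uIcc_of_le hρ.1.le]
    intro x hx y hy hxy
    show Real.sqrt (f x) ≤ Real.sqrt (f y)
    rcases eq_or_lt_of_le hx.1 with h0 | h0
    · rw [← h0, hf0, Real.sqrt_zero]
      exact Real.sqrt_nonneg _
    · have hxm : x ∈ Set.Ioo (0:ℝ) ρbar := ⟨h0, lt_of_le_of_lt hx.2 hρ.2⟩
      have hym : y ∈ Set.Ioo (0:ℝ) ρbar := ⟨lt_of_lt_of_le h0 hxy, lt_of_le_of_lt hy.2 hρ.2⟩
      exact Real.sqrt_le_sqrt (hmono.monotoneOn hxm hym hxy)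
  -- continuity of the integrand at ρ
  have hcontAt : ContinuousAt (fun ξ => Real.sqrt (f ξ)) ρ :=
    Real.continuous_sqrt.continuousAt.comp
      ((hAcont.continuousAt.div hqcont.continuousAt hqρ.ne'))
  have hlamder : HasDerivAt lam (Real.sqrt (f ρ)) ρ := by
    rw [hlamfun]
    exact intervalIntegral.integral_hasDerivAt_right hint
      hhmeas.stronglyMeasurableAtFilter hcontAt
  have hlam'der : HasDerivAt (fun ρ => Real.sqrt (f ρ)) (deriv f ρ / (2 * Real.sqrt (f ρ))) ρ :=
    hfd.sqrt hfρ.ne'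
  refine ⟨hlamder, ?_, Real.sqrt_pos.mpr hfρ, ?_⟩
  · rw [hlam'der.deriv]; exact hlam'der
  · rw [hlam'der.deriv]
    exact div_pos hfd_pos (by positivity)
end

section
/- Let n ≥ r ≥ 2 be integers and H > 0, and define I(ξ) = ∫₀^ξ sinh(s)^{n−1}/cosh(s)^{r−1} ds, q(ξ) = sinh(ξ)^{2(n−r)/r} − (n·H·I(ξ))^{2/r}, and λ(ρ) = ∫₀^ρ √( (n·H·I(ξ))^{2/r} / q(ξ) ) dξ. Then q(ξ) > 0 for all ξ > 0 sufficiently small, and λ(ρ)/ρ² tends to H^{1/r}/2 as ρ → 0⁺. -/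
open Real intervalIntegral Set Filter


noncomputable def auxT (H c w ρ : ℝ) : ℝ := (H * Real.cosh ρ ^ c) ^ w
noncomputable def auxS (H d w ρ : ℝ) : ℝ := (H * Real.cosh ρ ^ (-d)) ^ w
noncomputable def auxLo (H d e w ρ : ℝ) : ℝ :=
  Real.sqrt (auxS H d w ρ / Real.cosh ρ ^ e)
noncomputable def auxHi (H c w ρ : ℝ) : ℝ :=
  Real.sqrt (auxT H c w ρ / (1 - auxT H c w ρ * ρ ^ 2))

lemma auxT_contAt (H c w : ℝ) (hH : 0 < H) : ContinuousAt (auxT H c w) 0 := by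
  apply ContinuousAt.rpow_const
  · exact (continuousAt_const.mul (((Real.continuous_cosh).continuousAt).rpow_const
      (Or.inl (by simp [Real.cosh_zero]))))
  · left; simp [Real.cosh_zero, Real.one_rpow]; exact hH.ne'

lemma auxT_zero (H c w : ℝ) : auxT H c w 0 = H ^ w := by
  simp [auxT, Real.cosh_zero, Real.one_rpow]

lemma auxS_contAt (H d w : ℝ) (hH : 0 < H) : ContinuousAt (auxS H d w) 0 := by
  apply ContinuousAt.rpow_const
  · exact (continuousAt_const.mul (((Real.continuous_cosh).continuousAt).rpow_const
      (Or.inl (by simp [Real.cosh_zero]))))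
  · left; simp [Real.cosh_zero, Real.one_rpow]; exact hH.ne'

lemma auxS_zero (H d w : ℝ) : auxS H d w 0 = H ^ w := by
  simp [auxS, Real.cosh_zero, Real.one_rpow]

lemma sqrt_rpow_half (H w : ℝ) (hH : 0 ≤ H) : Real.sqrt (H ^ w) = H ^ (w / 2) := by
  rw [Real.sqrt_eq_rpow, ← Real.rpow_mul hH]
  ring_nf

lemma auxLo_tendsto (H d e w : ℝ) (hH : 0 < H) :
    Filter.Tendsto (auxLo H d e w) (nhds 0) (nhds (H ^ (w / 2))) := by
  have h1 : ContinuousAt (fun ρ => auxS H d w ρ / Real.cosh ρ ^ e) 0 := by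
    apply ContinuousAt.div (auxS_contAt H d w hH)
    · exact ((Real.continuous_cosh).continuousAt).rpow_const (Or.inl (by simp [Real.cosh_zero]))
    · simp [Real.cosh_zero, Real.one_rpow]
  have h2 : ContinuousAt (auxLo H d e w) 0 :=
    Real.continuous_sqrt.continuousAt.comp h1
  have h3 : auxLo H d e w 0 = H ^ (w / 2) := by
    rw [auxLo, auxS_zero]
    simp [Real.cosh_zero, Real.one_rpow]
    exact sqrt_rpow_half H w hH.le
  rw [← h3]; exact h2.tendsto

lemma auxHi_tendsto (H c w : ℝ) (hH : 0 < H) :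
    Filter.Tendsto (auxHi H c w) (nhds 0) (nhds (H ^ (w / 2))) := by
  have h1 : ContinuousAt (fun ρ => auxT H c w ρ / (1 - auxT H c w ρ * ρ ^ 2)) 0 := by
    apply ContinuousAt.div (auxT_contAt H c w hH)
    · exact continuousAt_const.sub ((auxT_contAt H c w hH).mul
        ((continuous_pow 2).continuousAt))
    · simp [auxT_zero]
  have h2 : ContinuousAt (auxHi H c w) 0 :=
    Real.continuous_sqrt.continuousAt.comp h1
  have h3 : auxHi H c w 0 = H ^ (w / 2) := by
    rw [auxHi, auxT_zero]
    norm_num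
    exact sqrt_rpow_half H w hH.le
  rw [← h3]; exact h2.tendsto




lemma aux_g_cont (c d : ℝ) (hc : 0 ≤ c) (hd : 0 ≤ d) :
    Continuous (fun s => Real.sinh s ^ c / Real.cosh s ^ d) := by
  apply Continuous.div
  · exact (Real.continuous_rpow_const hc).comp Real.continuous_sinh
  · exact (Real.continuous_rpow_const hd).comp Real.continuous_cosh
  · intro s; exact (Real.rpow_pos_of_pos (Real.cosh_pos s) d).ne'

lemma aux_sinh_le (x : ℝ) (hx : 0 ≤ x) : Real.sinh x ≤ x * Real.cosh x := by
  have h : ∫ t in (0:ℝ)..x, Real.cosh t = Real.sinh x - Real.sinh 0 := by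
    apply intervalIntegral.integral_eq_sub_of_hasDerivAt
    · intro t _; exact Real.hasDerivAt_sinh t
    · exact Real.continuous_cosh.intervalIntegrable 0 x
  have h2 : ∫ t in (0:ℝ)..x, Real.cosh t ≤ ∫ t in (0:ℝ)..x, Real.cosh x := by
    apply intervalIntegral.integral_mono_on hx
      (Real.continuous_cosh.intervalIntegrable 0 x) intervalIntegrable_const
    intro t ht
    rw [Real.cosh_le_cosh, abs_of_nonneg ht.1, abs_of_nonneg hx]
    exact ht.2
  simp only [Real.sinh_zero, sub_zero] at h
  rw [← h]; simpa [mul_comm] using h2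

lemma aux_self_le_sinh (x : ℝ) (hx : 0 ≤ x) : x ≤ Real.sinh x := by
  rcases eq_or_lt_of_le hx with h | h
  · simp [← h]
  · exact (Real.self_lt_sinh_iff.2 h).le

lemma aux_I_bounds (c d K ρ ξ : ℝ) (hc : 1 ≤ c) (hd : 0 ≤ d) (hξ : 0 ≤ ξ) (hξρ : ξ ≤ ρ)
    (hK1 : 1 ≤ K) (hcosh : Real.cosh ρ ≤ K) :
    K ^ (-d) * (ξ ^ (c+1) / (c+1)) ≤ (∫ s in (0:ℝ)..ξ, Real.sinh s ^ c / Real.cosh s ^ d)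
    ∧ (∫ s in (0:ℝ)..ξ, Real.sinh s ^ c / Real.cosh s ^ d) ≤ K ^ c * (ξ ^ (c+1) / (c+1)) := by
  have hc0 : (0:ℝ) ≤ c := by linarith
  have hgint : IntervalIntegrable (fun s => Real.sinh s ^ c / Real.cosh s ^ d) MeasureTheory.volume 0 ξ :=
    (aux_g_cont c d hc0 hd).intervalIntegrable 0 ξ
  have hK0 : (0:ℝ) < K := by linarith
  have hrint : ∫ s in (0:ℝ)..ξ, s ^ c = ξ ^ (c+1) / (c+1) := by
    rw [integral_rpow (Or.inl (by linarith))]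
    rw [Real.zero_rpow (by linarith), sub_zero]
  have hcoshs : ∀ s ∈ Icc (0:ℝ) ξ, Real.cosh s ≤ K := by
    intro s hs
    refine le_trans ?_ hcosh
    rw [Real.cosh_le_cosh, abs_of_nonneg hs.1, abs_of_nonneg (le_trans hξ hξρ)]
    exact le_trans hs.2 hξρ
  constructor
  · calc K ^ (-d) * (ξ ^ (c+1) / (c+1)) = ∫ s in (0:ℝ)..ξ, K ^ (-d) * s ^ c := by
          rw [intervalIntegral.integral_const_mul, hrint]
      _ ≤ _ := by
          apply intervalIntegral.integral_mono_on hξ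
            ((continuous_const.mul (Real.continuous_rpow_const hc0)).intervalIntegrable 0 ξ) hgint
          intro s hs
          have h1 : s ^ c ≤ Real.sinh s ^ c :=
            Real.rpow_le_rpow hs.1 (aux_self_le_sinh s hs.1) hc0
          have h2 : Real.cosh s ^ d ≤ K ^ d :=
            Real.rpow_le_rpow (Real.cosh_pos s).le (hcoshs s hs) hd
          rw [Real.rpow_neg hK0.le]; simp only [Pi.mul_apply]; rw [inv_mul_eq_div]
          exact div_le_div₀ (Real.rpow_nonneg (Real.sinh_nonneg_iff.2 hs.1) c) h1
            (Real.rpow_pos_of_pos (Real.cosh_pos s) d) h2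
  · calc (∫ s in (0:ℝ)..ξ, Real.sinh s ^ c / Real.cosh s ^ d)
        ≤ ∫ s in (0:ℝ)..ξ, K ^ c * s ^ c := by
          apply intervalIntegral.integral_mono_on hξ hgint
            ((continuous_const.mul (Real.continuous_rpow_const hc0)).intervalIntegrable 0 ξ)
          intro s hs
          have h1 : Real.sinh s ^ c ≤ (K * s) ^ c := by
            apply Real.rpow_le_rpow (Real.sinh_nonneg_iff.2 hs.1) ?_ hc0
            calc Real.sinh s ≤ s * Real.cosh s := aux_sinh_le s hs.1
              _ ≤ s * K := by nlinarith [hcoshs s hs, hs.1]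
              _ = K * s := mul_comm _ _
          have h2 : (1:ℝ) ≤ Real.cosh s ^ d := by
            calc (1:ℝ) = 1 ^ d := (Real.one_rpow d).symm
              _ ≤ Real.cosh s ^ d := Real.rpow_le_rpow zero_le_one (Real.one_le_cosh s) hd
          calc Real.sinh s ^ c / Real.cosh s ^ d ≤ Real.sinh s ^ c / 1 :=
                div_le_div_of_nonneg_left (Real.rpow_nonneg (Real.sinh_nonneg_iff.2 hs.1) c)
                  one_pos h2 |>.trans_eq rfl
            _ = Real.sinh s ^ c := div_one _
            _ ≤ (K * s) ^ c := h1
            _ = K ^ c * s ^ c := Real.mul_rpow hK0.le hs.1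
      _ = K ^ c * (ξ ^ (c+1) / (c+1)) := by
          rw [intervalIntegral.integral_const_mul, hrint]
lemma aux_core (n r : ℕ) (hr : 2 ≤ r) (hn : r ≤ n) (H : ℝ) (hH : 0 < H)
    (I q : ℝ → ℝ)
    (hI : ∀ ξ : ℝ, I ξ
      = ∫ s in (0 : ℝ)..ξ, Real.sinh s ^ ((n : ℝ) - 1) / Real.cosh s ^ ((r : ℝ) - 1))
    (hq : ∀ ξ : ℝ, q ξ
      = Real.sinh ξ ^ (2 * ((n : ℝ) - r) / r) - ((n : ℝ) * H * I ξ) ^ (2 / (r : ℝ)))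
    (ρ ξ : ℝ) (hρ : 0 < ρ)
    (hu : auxT H ((n:ℝ)-1) (2/(r:ℝ)) ρ * ρ^2 < 1/2)
    (hξ : 0 < ξ) (hξρ : ξ ≤ ρ) :
    0 < q ξ ∧
    auxLo H ((r:ℝ)-1) (2*((n:ℝ)-(r:ℝ))/(r:ℝ)) (2/(r:ℝ)) ρ * ξ
      ≤ Real.sqrt ((((n:ℝ)*H*I ξ)^(2/(r:ℝ))) / q ξ) ∧
    Real.sqrt ((((n:ℝ)*H*I ξ)^(2/(r:ℝ))) / q ξ) ≤ auxHi H ((n:ℝ)-1) (2/(r:ℝ)) ρ * ξ := by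
  have hrr : (2:ℝ) ≤ (r:ℝ) := by exact_mod_cast hr
  have hnn : (r:ℝ) ≤ (n:ℝ) := by exact_mod_cast hn
  have hrpos : (0:ℝ) < (r:ℝ) := by linarith
  set c : ℝ := (n:ℝ) - 1 with hc_def
  set d : ℝ := (r:ℝ) - 1 with hd_def
  set e : ℝ := 2 * ((n:ℝ) - (r:ℝ)) / (r:ℝ) with he_def
  set w : ℝ := 2 / (r:ℝ) with hw_def
  have hc1 : 1 ≤ c := by rw [hc_def]; linarith
  have hd0 : 0 ≤ d := by rw [hd_def]; linarith
  have he0 : 0 ≤ e := by rw [he_def]; apply div_nonneg; linarith; linarith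
  have hw0 : 0 < w := by rw [hw_def]; positivity
  have hcN : c + 1 = (n:ℝ) := by rw [hc_def]; ring
  have hNpos : (0:ℝ) < (n:ℝ) := by linarith
  have hNw : (n:ℝ) * w = e + 2 := by rw [hw_def, he_def]; field_simp; ring
  set K : ℝ := Real.cosh ρ with hK_def
  have hK1 : 1 ≤ K := Real.one_le_cosh ρ
  have hK0 : (0:ℝ) < K := by linarith
  -- I bounds
  obtain ⟨hIl, hIu⟩ := aux_I_bounds c d K ρ ξ hc1 hd0 hξ.le hξρ hK1 le_rfl
  rw [← hI ξ] at hIl hIu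
  rw [hcN] at hIl hIu
  -- base bounds for n*H*I ξ
  have hbl : H * K^(-d) * ξ^((n:ℝ)) ≤ (n:ℝ) * H * I ξ := by
    have := mul_le_mul_of_nonneg_left hIl (by positivity : (0:ℝ) ≤ (n:ℝ) * H)
    calc H * K^(-d) * ξ^((n:ℝ)) = (n:ℝ) * H * (K^(-d) * (ξ^((n:ℝ)) / (n:ℝ))) := by
          field_simp
      _ ≤ (n:ℝ) * H * I ξ := this
  have hbu : (n:ℝ) * H * I ξ ≤ H * K^c * ξ^((n:ℝ)) := by
    have := mul_le_mul_of_nonneg_left hIu (by positivity : (0:ℝ) ≤ (n:ℝ) * H)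
    calc (n:ℝ) * H * I ξ ≤ (n:ℝ) * H * (K^c * (ξ^((n:ℝ)) / (n:ℝ))) := this
      _ = H * K^c * ξ^((n:ℝ)) := by field_simp
  have hbase0 : (0:ℝ) ≤ H * K^(-d) * ξ^((n:ℝ)) := by positivity
  -- P bounds
  set P : ℝ := ((n:ℝ) * H * I ξ) ^ w with hP_def
  have hrw_pow : ∀ A : ℝ, 0 ≤ A → (A * ξ^((n:ℝ)))^w = A^w * ξ^(e+2) := by
    intro A hA
    rw [Real.mul_rpow hA (Real.rpow_nonneg hξ.le _), ← Real.rpow_mul hξ.le, hNw]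
  have hPl : auxS H d w ρ * ξ^(e+2) ≤ P := by
    have h1 : (H * K^(-d) * ξ^((n:ℝ)))^w ≤ P :=
      Real.rpow_le_rpow hbase0 hbl hw0.le
    rwa [hrw_pow (H * K^(-d)) (by positivity)] at h1
  have hPu : P ≤ auxT H c w ρ * ξ^(e+2) := by
    have h1 : P ≤ (H * K^c * ξ^((n:ℝ)))^w :=
      Real.rpow_le_rpow (le_trans hbase0 hbl) hbu hw0.le
    rwa [hrw_pow (H * K^c) (by positivity)] at h1
  have hP0 : 0 ≤ P := Real.rpow_nonneg (le_trans hbase0 hbl) _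
  -- split ξ^(e+2)
  have hsplit : ξ^(e+2) = ξ^e * ξ^2 := by
    rw [Real.rpow_add hξ, show (2:ℝ) = ((2:ℕ):ℝ) by norm_num, Real.rpow_natCast]
  have hxe : (0:ℝ) < ξ^e := Real.rpow_pos_of_pos hξ e
  have hT0 : 0 ≤ auxT H c w ρ := Real.rpow_nonneg (by positivity) _
  have hS0 : 0 ≤ auxS H d w ρ := Real.rpow_nonneg (by positivity) _
  -- q bounds
  have hq_eq : q ξ = Real.sinh ξ ^ e - P := hq ξ
  have hsinh_l : ξ^e ≤ Real.sinh ξ ^ e :=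
    Real.rpow_le_rpow hξ.le (aux_self_le_sinh ξ hξ.le) he0
  have hsinh_u : Real.sinh ξ ^ e ≤ K^e * ξ^e := by
    have h1 : Real.sinh ξ ≤ K * ξ := by
      calc Real.sinh ξ ≤ ξ * Real.cosh ξ := aux_sinh_le ξ hξ.le
        _ ≤ ξ * K := by
            have hc : Real.cosh ξ ≤ K := by
              rw [hK_def, Real.cosh_le_cosh, abs_of_nonneg hξ.le, abs_of_nonneg (by linarith)]
              exact hξρ
            exact mul_le_mul_of_nonneg_left hc hξ.le
        _ = K * ξ := mul_comm _ _
    calc Real.sinh ξ ^ e ≤ (K * ξ)^e :=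
          Real.rpow_le_rpow (Real.sinh_nonneg_iff.2 hξ.le) h1 he0
      _ = K^e * ξ^e := Real.mul_rpow hK0.le hξ.le
  have hxx : ξ^2 ≤ ρ^2 := by apply pow_le_pow_left₀ hξ.le hξρ
  have hql : ξ^e * (1 - auxT H c w ρ * ρ^2) ≤ q ξ := by
    rw [hq_eq]
    have h2 : P ≤ auxT H c w ρ * (ξ^e * ξ^2) := by rw [← hsplit]; exact hPu
    have h3 : auxT H c w ρ * (ξ^e * ξ^2) ≤ auxT H c w ρ * (ξ^e * ρ^2) := by
      apply mul_le_mul_of_nonneg_left _ hT0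
      exact mul_le_mul_of_nonneg_left hxx hxe.le
    have h4 : auxT H c w ρ * (ξ^e * ρ^2) = ξ^e * (auxT H c w ρ * ρ^2) := by ring
    linarith
  have huu : auxT H c w ρ * ρ^2 < 1/2 := hu
  have hqpos : 0 < q ξ := by
    have : (0:ℝ) < ξ^e * (1 - auxT H c w ρ * ρ^2) := mul_pos hxe (by linarith)
    linarith
  have hqu : q ξ ≤ K^e * ξ^e := by
    rw [hq_eq]; linarith
  refine ⟨hqpos, ?_, ?_⟩
  · -- lower bound on sqrt
    have hr1 : auxS H d w ρ / K^e * ξ^2 ≤ P / q ξ := by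
      have h1 : auxS H d w ρ * ξ^(e+2) / (K^e * ξ^e) ≤ P / q ξ :=
        div_le_div₀ hP0 hPl (by positivity) hqu
      calc auxS H d w ρ / K^e * ξ^2 = auxS H d w ρ * ξ^(e+2) / (K^e * ξ^e) := by
            rw [hsplit]; field_simp
        _ ≤ P / q ξ := h1
    calc auxLo H d e w ρ * ξ = Real.sqrt (auxS H d w ρ / K^e * ξ^2) := by
          rw [auxLo, Real.sqrt_mul (by positivity), Real.sqrt_sq hξ.le]
      _ ≤ Real.sqrt (P / q ξ) := Real.sqrt_le_sqrt hr1
  · -- upper bound on sqrt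
    have hden : 0 < 1 - auxT H c w ρ * ρ^2 := by linarith
    have hr2 : P / q ξ ≤ auxT H c w ρ / (1 - auxT H c w ρ * ρ^2) * ξ^2 := by
      have h1 : P / q ξ ≤ auxT H c w ρ * ξ^(e+2) / (ξ^e * (1 - auxT H c w ρ * ρ^2)) :=
        div_le_div₀ (by positivity) hPu (by positivity) hql
      calc P / q ξ ≤ auxT H c w ρ * ξ^(e+2) / (ξ^e * (1 - auxT H c w ρ * ρ^2)) := h1
        _ = auxT H c w ρ / (1 - auxT H c w ρ * ρ^2) * ξ^2 := by
            rw [hsplit]; field_simp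
    calc Real.sqrt (P / q ξ) ≤
          Real.sqrt (auxT H c w ρ / (1 - auxT H c w ρ * ρ^2) * ξ^2) := Real.sqrt_le_sqrt hr2
      _ = auxHi H c w ρ * ξ := by
          rw [auxHi, Real.sqrt_mul (by positivity), Real.sqrt_sq hξ.le]

lemma aux_lam_bounds (n r : ℕ) (hr : 2 ≤ r) (hn : r ≤ n) (H : ℝ) (hH : 0 < H)
    (I q lam : ℝ → ℝ)
    (hI : ∀ ξ : ℝ, I ξ
      = ∫ s in (0 : ℝ)..ξ, Real.sinh s ^ ((n : ℝ) - 1) / Real.cosh s ^ ((r : ℝ) - 1))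
    (hq : ∀ ξ : ℝ, q ξ
      = Real.sinh ξ ^ (2 * ((n : ℝ) - r) / r) - ((n : ℝ) * H * I ξ) ^ (2 / (r : ℝ)))
    (hlam : ∀ ρ : ℝ, lam ρ
      = ∫ ξ in (0 : ℝ)..ρ, Real.sqrt ((((n : ℝ) * H * I ξ) ^ (2 / (r : ℝ))) / q ξ))
    (ρ : ℝ) (hρ : 0 < ρ)
    (hu : auxT H ((n:ℝ)-1) (2/(r:ℝ)) ρ * ρ^2 < 1/2) :
    auxLo H ((r:ℝ)-1) (2*((n:ℝ)-(r:ℝ))/(r:ℝ)) (2/(r:ℝ)) ρ * (ρ^2/2) ≤ lam ρ ∧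
    lam ρ ≤ auxHi H ((n:ℝ)-1) (2/(r:ℝ)) ρ * (ρ^2/2) := by
  have hrr : (2:ℝ) ≤ (r:ℝ) := by exact_mod_cast hr
  have hnn : (r:ℝ) ≤ (n:ℝ) := by exact_mod_cast hn
  have hw0 : (0:ℝ) < 2/(r:ℝ) := by positivity
  have he0 : (0:ℝ) ≤ 2 * ((n:ℝ)-(r:ℝ))/(r:ℝ) := by
    apply div_nonneg; linarith; linarith
  set f : ℝ → ℝ := fun ξ => Real.sqrt ((((n:ℝ)*H*I ξ)^(2/(r:ℝ))) / q ξ) with hf_def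
  have hI0 : I 0 = 0 := by rw [hI 0, intervalIntegral.integral_same]
  have hf0 : f 0 = 0 := by
    rw [hf_def]
    simp only [hI0, mul_zero, Real.zero_rpow hw0.ne', zero_div, Real.sqrt_zero]
  have hIcont : Continuous I := by
    have hI_eq : I = fun ξ => ∫ s in (0:ℝ)..ξ,
        Real.sinh s ^ ((n : ℝ) - 1) / Real.cosh s ^ ((r : ℝ) - 1) := funext hI
    rw [hI_eq]
    exact intervalIntegral.continuous_primitive
      (fun a b => (aux_g_cont _ _ (by linarith) (by linarith)).intervalIntegrable a b) 0
  have hPcont : Continuous (fun ξ => (((n:ℝ)*H*I ξ)^(2/(r:ℝ)))) :=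
    (Real.continuous_rpow_const hw0.le).comp (continuous_const.mul hIcont)
  have hqcont : Continuous q := by
    have hq_eq : q = fun ξ => Real.sinh ξ ^ (2 * ((n : ℝ) - r) / r)
        - ((n : ℝ) * H * I ξ) ^ (2 / (r : ℝ)) := funext hq
    rw [hq_eq]
    exact (((Real.continuous_rpow_const he0).comp Real.continuous_sinh)).sub hPcont
  have hhi0 : 0 ≤ auxHi H ((n:ℝ)-1) (2/(r:ℝ)) ρ := Real.sqrt_nonneg _
  have hub : ∀ x ∈ Icc (0:ℝ) ρ, f x ≤ auxHi H ((n:ℝ)-1) (2/(r:ℝ)) ρ * x := by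
    intro x hx
    rcases eq_or_lt_of_le hx.1 with h0 | h0
    · rw [← h0, hf0, mul_zero]
    · exact (aux_core n r hr hn H hH I q hI hq ρ x hρ hu h0 hx.2).2.2
  have hlb : ∀ x ∈ Icc (0:ℝ) ρ,
      auxLo H ((r:ℝ)-1) (2*((n:ℝ)-(r:ℝ))/(r:ℝ)) (2/(r:ℝ)) ρ * x ≤ f x := by
    intro x hx
    rcases eq_or_lt_of_le hx.1 with h0 | h0
    · rw [← h0, mul_zero]; exact Real.sqrt_nonneg _
    · exact (aux_core n r hr hn H hH I q hI hq ρ x hρ hu h0 hx.2).2.1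
  have hfcont : ContinuousOn f (Icc 0 ρ) := by
    intro x hx
    rcases eq_or_lt_of_le hx.1 with h0 | h0
    · rw [← h0] at hx ⊢
      unfold ContinuousWithinAt
      rw [hf0]
      apply squeeze_zero' (g := fun t => auxHi H ((n:ℝ)-1) (2/(r:ℝ)) ρ * t)
      · exact Filter.eventually_of_mem self_mem_nhdsWithin
          (fun t _ => Real.sqrt_nonneg _)
      · exact Filter.eventually_of_mem self_mem_nhdsWithin hub
      · have : Filter.Tendsto (fun t => auxHi H ((n:ℝ)-1) (2/(r:ℝ)) ρ * t)
            (nhds 0) (nhds (auxHi H ((n:ℝ)-1) (2/(r:ℝ)) ρ * 0)) :=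
          (continuous_const.mul continuous_id).tendsto 0
        rw [mul_zero] at this
        exact this.mono_left nhdsWithin_le_nhds
    · apply ContinuousAt.continuousWithinAt
      have hqx : q x ≠ 0 :=
        (aux_core n r hr hn H hH I q hI hq ρ x hρ hu h0 hx.2).1.ne'
      exact Real.continuous_sqrt.continuousAt.comp
        ((hPcont.continuousAt).div (hqcont.continuousAt) hqx)
  have hfint : IntervalIntegrable f MeasureTheory.volume 0 ρ :=
    hfcont.intervalIntegrable_of_Icc hρ.le
  have hlin : ∀ a : ℝ, IntervalIntegrable (fun x => a * x) MeasureTheory.volume 0 ρ :=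
    fun a => (continuous_const.mul continuous_id).intervalIntegrable 0 ρ
  have hint_lin : ∀ a : ℝ, (∫ x in (0:ℝ)..ρ, a * x) = a * (ρ^2/2) := by
    intro a
    rw [intervalIntegral.integral_const_mul]
    rw [integral_id]
    norm_num
  have hlam' : lam ρ = ∫ x in (0:ℝ)..ρ, f x := hlam ρ
  constructor
  · rw [hlam', ← hint_lin]
    exact intervalIntegral.integral_mono_on hρ.le (hlin _) hfint hlb
  · rw [hlam', ← hint_lin]
    exact intervalIntegral.integral_mono_on hρ.le hfint (hlin _) hub


/-- `q > 0` near `0⁺` and the rotational profile satisfies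
`λ(ρ)/ρ² → H^(1/r)/2` as `ρ → 0⁺`. -/
theorem stmt7 (n r : ℕ) (hr : 2 ≤ r) (hn : r ≤ n) (H : ℝ) (hH : 0 < H)
    (I q lam : ℝ → ℝ)
    (hI : ∀ ξ : ℝ, I ξ
      = ∫ s in (0 : ℝ)..ξ, Real.sinh s ^ ((n : ℝ) - 1) / Real.cosh s ^ ((r : ℝ) - 1))
    (hq : ∀ ξ : ℝ, q ξ
      = Real.sinh ξ ^ (2 * ((n : ℝ) - r) / r) - ((n : ℝ) * H * I ξ) ^ (2 / (r : ℝ)))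
    (hlam : ∀ ρ : ℝ, lam ρ
      = ∫ ξ in (0 : ℝ)..ρ, Real.sqrt ((((n : ℝ) * H * I ξ) ^ (2 / (r : ℝ))) / q ξ)) :
    (∃ ε > (0 : ℝ), ∀ ξ ∈ Set.Ioo (0 : ℝ) ε, 0 < q ξ) ∧
    Filter.Tendsto (fun ρ : ℝ => lam ρ / ρ ^ 2) (nhdsWithin 0 (Set.Ioi 0))
      (nhds (H ^ (1 / (r : ℝ)) / 2)) := by
  have hrr : (2:ℝ) ≤ (r:ℝ) := by exact_mod_cast hr
  have hucont : ContinuousAt (fun ρ => auxT H ((n:ℝ)-1) (2/(r:ℝ)) ρ * ρ^2) 0 :=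
    (auxT_contAt H _ _ hH).mul (continuous_pow 2).continuousAt
  have hev : ∀ᶠ ρ in nhds (0:ℝ), auxT H ((n:ℝ)-1) (2/(r:ℝ)) ρ * ρ^2 < 1/2 := by
    have h0 : (fun ρ => auxT H ((n:ℝ)-1) (2/(r:ℝ)) ρ * ρ^2) 0 ∈ Iio (1/2 : ℝ) := by
      simp [Set.mem_Iio]
    exact hucont (Iio_mem_nhds (by simpa using h0))
  obtain ⟨δ₀, hδ₀, hδ⟩ := Metric.eventually_nhds_iff.1 hev
  have hu' : ∀ ρ : ℝ, 0 < ρ → ρ < δ₀ → auxT H ((n:ℝ)-1) (2/(r:ℝ)) ρ * ρ^2 < 1/2 := by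
    intro ρ h1 h2
    exact hδ (by rw [Real.dist_eq, sub_zero, abs_of_pos h1]; exact h2)
  constructor
  · exact ⟨δ₀, hδ₀, fun ξ hξ =>
      (aux_core n r hr hn H hH I q hI hq ξ ξ hξ.1 (hu' ξ hξ.1 hξ.2) hξ.1 le_rfl).1⟩
  · have hlo : Filter.Tendsto (auxLo H ((r:ℝ)-1) (2*((n:ℝ)-(r:ℝ))/(r:ℝ)) (2/(r:ℝ)))
        (nhds 0) (nhds (H ^ (1/(r:ℝ)))) := by
      rw [show (1/(r:ℝ)) = (2/(r:ℝ))/2 by ring]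
      exact auxLo_tendsto H _ _ _ hH
    have hhi : Filter.Tendsto (auxHi H ((n:ℝ)-1) (2/(r:ℝ)))
        (nhds 0) (nhds (H ^ (1/(r:ℝ)))) := by
      rw [show (1/(r:ℝ)) = (2/(r:ℝ))/2 by ring]
      exact auxHi_tendsto H _ _ hH
    have hmem : Set.Ioo (0:ℝ) δ₀ ∈ nhdsWithin (0:ℝ) (Set.Ioi 0) :=
      Ioo_mem_nhdsGT_of_mem ⟨le_refl 0, hδ₀⟩
    apply tendsto_of_tendsto_of_tendsto_of_le_of_le'
      (g := fun ρ => auxLo H ((r:ℝ)-1) (2*((n:ℝ)-(r:ℝ))/(r:ℝ)) (2/(r:ℝ)) ρ / 2)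
      (h := fun ρ => auxHi H ((n:ℝ)-1) (2/(r:ℝ)) ρ / 2)
    · exact (hlo.div_const 2).mono_left nhdsWithin_le_nhds
    · exact (hhi.div_const 2).mono_left nhdsWithin_le_nhds
    · apply Filter.eventually_of_mem hmem
      intro ρ hρ
      have hb := (aux_lam_bounds n r hr hn H hH I q lam hI hq hlam ρ hρ.1
        (hu' ρ hρ.1 hρ.2)).1
      rw [le_div_iff₀ (pow_pos hρ.1 2)]
      calc auxLo H ((r:ℝ)-1) (2*((n:ℝ)-(r:ℝ))/(r:ℝ)) (2/(r:ℝ)) ρ / 2 * ρ^2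
          = auxLo H ((r:ℝ)-1) (2*((n:ℝ)-(r:ℝ))/(r:ℝ)) (2/(r:ℝ)) ρ * (ρ^2/2) := by ring
        _ ≤ lam ρ := hb
    · apply Filter.eventually_of_mem hmem
      intro ρ hρ
      have hb := (aux_lam_bounds n r hr hn H hH I q lam hI hq hlam ρ hρ.1
        (hu' ρ hρ.1 hρ.2)).2
      rw [div_le_iff₀ (pow_pos hρ.1 2)]
      calc lam ρ ≤ auxHi H ((n:ℝ)-1) (2/(r:ℝ)) ρ * (ρ^2/2) := hb
        _ = auxHi H ((n:ℝ)-1) (2/(r:ℝ)) ρ / 2 * ρ^2 := by ring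
end

section
/- For all integers n > r ≥ 2 and every real ξ > 0: sinh(ξ)^{n−2}·cosh(ξ)^{2−r} > (n−r)·∫₀^ξ sinh(s)^{n−1}/cosh(s)^{r−1} ds. -/
open Real intervalIntegral in
private lemma stmt8_aux (a b : ℝ) (hb : 2 ≤ b) (hab : b + 1 ≤ a) (ξ : ℝ) (hξ : 0 < ξ) :
    Real.sinh ξ ^ (a - 2) * Real.cosh ξ ^ (2 - b)
      > (a - b) * ∫ s in (0 : ℝ)..ξ, Real.sinh s ^ (a - 1) / Real.cosh s ^ (b - 1) := by
  have ha3 : 3 ≤ a := by linarith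
  -- the integrand
  set g : ℝ → ℝ := fun s => Real.sinh s ^ (a - 1) / Real.cosh s ^ (b - 1) with hg
  have hgcont : Continuous g := by
    apply Continuous.div
    · exact Real.continuous_sinh.rpow_const (fun x => Or.inr (by linarith))
    · exact Real.continuous_cosh.rpow_const (fun x => Or.inr (by linarith))
    · intro x
      exact (Real.rpow_pos_of_pos (Real.cosh_pos x) _).ne'
  set F : ℝ → ℝ := fun x => ∫ s in (0 : ℝ)..x, g s with hF
  have hFderiv : ∀ x : ℝ, HasDerivAt F (g x) x := by
    intro x
    exact intervalIntegral.integral_hasDerivAt_right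
      (hgcont.intervalIntegrable 0 x)
      (hgcont.stronglyMeasurableAtFilter _ _)
      hgcont.continuousAt
  set f : ℝ → ℝ := fun x =>
    Real.sinh x ^ (a - 2) * Real.cosh x ^ (2 - b) - (a - b) * F x with hf
  have hfd : ∀ x ∈ Set.Ioo 0 ξ, HasDerivAt f
      (((a - 2) * Real.sinh x ^ (a - 2 - 1) * Real.cosh x) * Real.cosh x ^ (2 - b)
        + Real.sinh x ^ (a - 2) * ((2 - b) * Real.cosh x ^ (2 - b - 1) * Real.sinh x)
        - (a - b) * g x) x := by
    intro x hx
    have hS : 0 < Real.sinh x := Real.sinh_pos_iff.2 hx.1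
    have h1 : HasDerivAt (fun x => Real.sinh x ^ (a - 2))
        ((a - 2) * Real.sinh x ^ (a - 2 - 1) * Real.cosh x) x := by
      simpa [mul_comm, mul_assoc, mul_left_comm] using
        (Real.hasDerivAt_sinh x).rpow_const (p := a - 2) (Or.inl hS.ne')
    have h2 : HasDerivAt (fun x => Real.cosh x ^ (2 - b))
        ((2 - b) * Real.cosh x ^ (2 - b - 1) * Real.sinh x) x := by
      simpa [mul_comm, mul_assoc, mul_left_comm] using
        (Real.hasDerivAt_cosh x).rpow_const (p := 2 - b) (Or.inl (Real.cosh_pos x).ne')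
    exact (h1.mul h2).sub (((hFderiv x).const_mul (a - b)))
  have hderiv_pos : ∀ x ∈ Set.Ioo 0 ξ,
      0 < ((a - 2) * Real.sinh x ^ (a - 2 - 1) * Real.cosh x) * Real.cosh x ^ (2 - b)
        + Real.sinh x ^ (a - 2) * ((2 - b) * Real.cosh x ^ (2 - b - 1) * Real.sinh x)
        - (a - b) * g x := by
    intro x hx
    have hS : 0 < Real.sinh x := Real.sinh_pos_iff.2 hx.1
    have hC : 0 < Real.cosh x := Real.cosh_pos x
    set S := Real.sinh x
    set C := Real.cosh x
    have hP : (0:ℝ) < S ^ (a - 3) := Real.rpow_pos_of_pos hS _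
    have hQ : (0:ℝ) < C ^ (1 - b) := Real.rpow_pos_of_pos hC _
    have e1 : S ^ (a - 2) = S ^ (a - 3) * S := by
      rw [show a - 2 = (a - 3) + 1 by ring, Real.rpow_add_one hS.ne']
    have e2 : S ^ (a - 2 - 1) = S ^ (a - 3) := by rw [show a - 2 - 1 = a - 3 by ring]
    have e3 : C ^ (2 - b) = C ^ (1 - b) * C := by
      rw [show 2 - b = (1 - b) + 1 by ring, Real.rpow_add_one hC.ne']
    have e4 : C ^ (2 - b - 1) = C ^ (1 - b) := by rw [show 2 - b - 1 = 1 - b by ring]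
    have e5 : g x = S ^ (a - 3) * S ^ 2 * C ^ (1 - b) := by
      rw [hg]
      show S ^ (a - 1) / C ^ (b - 1) = _
      rw [show a - 1 = (a - 3) + 2 by ring, Real.rpow_add hS,
        show (1 : ℝ) - b = -(b - 1) by ring, Real.rpow_neg hC.le,
        Real.rpow_two]
      ring
    have hcs : C ^ 2 - S ^ 2 = 1 := by
      have := Real.cosh_sq_sub_sinh_sq x
      nlinarith [this]
    rw [e1, e2, e3, e4, e5]
    have key : ((a - 2) * S ^ (a - 3) * C) * (C ^ (1 - b) * C)
        + (S ^ (a - 3) * S) * ((2 - b) * C ^ (1 - b) * S)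
        - (a - b) * (S ^ (a - 3) * S ^ 2 * C ^ (1 - b))
        = (a - 2) * (S ^ (a - 3) * C ^ (1 - b)) * (C ^ 2 - S ^ 2) := by ring
    rw [key, hcs]
    have : 0 < a - 2 := by linarith
    positivity
  have hcont : ContinuousOn f (Set.Icc 0 ξ) := by
    apply ContinuousOn.sub
    · exact ((Real.continuous_sinh.rpow_const (fun x => Or.inr (by linarith))).mul
        (Real.continuous_cosh.rpow_const (fun x => Or.inl (Real.cosh_pos x).ne'))).continuousOn
    · exact (continuous_const.mul (continuous_iff_continuousAt.2
        fun x => (hFderiv x).differentiableAt.continuousAt)).continuousOn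
  have hmono : StrictMonoOn f (Set.Icc 0 ξ) := by
    apply strictMonoOn_of_deriv_pos (convex_Icc 0 ξ) hcont
    intro x hx
    rw [interior_Icc] at hx
    rw [(hfd x hx).deriv]
    exact hderiv_pos x hx
  have h0 : f 0 = 0 := by
    have ha2 : a - 2 ≠ 0 := sub_ne_zero.2 (by linarith)
    simp [hf, hF, Real.zero_rpow ha2, Real.sinh_zero]
  have := hmono (Set.left_mem_Icc.2 hξ.le) (Set.right_mem_Icc.2 hξ.le) hξ
  rw [h0] at this
  have hfin : 0 < Real.sinh ξ ^ (a - 2) * Real.cosh ξ ^ (2 - b) - (a - b) * F ξ := this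
  linarith

/-- for `n > r ≥ 2` and `ξ > 0`,
`sinh(ξ)^(n−2)·cosh(ξ)^(2−r) > (n−r)·∫₀^ξ sinh(s)^(n−1)/cosh(s)^(r−1) ds`. -/
theorem stmt8 (n r : ℕ) (hr : 2 ≤ r) (hnr : r < n) (ξ : ℝ) (hξ : 0 < ξ) :
    Real.sinh ξ ^ ((n : ℝ) - 2) * Real.cosh ξ ^ (2 - (r : ℝ))
      > ((n : ℝ) - r) *
        ∫ s in (0 : ℝ)..ξ, Real.sinh s ^ ((n : ℝ) - 1) / Real.cosh s ^ ((r : ℝ) - 1) := by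
  have hb : (2 : ℝ) ≤ r := by exact_mod_cast hr
  have hab : (r : ℝ) + 1 ≤ n := by exact_mod_cast hnr
  exact stmt8_aux n r hb hab ξ hξ
end

section
/- For all integers n > r ≥ 2 and every real ξ > 0: sinh(ξ)^n > (n−r)·cosh(ξ)^r·∫₀^ξ sinh(s)^{n−1}/cosh(s)^{r−1} ds. -/
open Real intervalIntegral

/-- for `n > r ≥ 2` and `ξ > 0`,
`sinh(ξ)^n > (n−r)·cosh(ξ)^r·∫₀^ξ sinh(s)^(n−1)/cosh(s)^(r−1) ds`. -/
theorem stmt9 (n r : ℕ) (hr : 2 ≤ r) (hnr : r < n) (ξ : ℝ) (hξ : 0 < ξ) :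
    Real.sinh ξ ^ (n : ℝ)
      > ((n : ℝ) - r) * Real.cosh ξ ^ (r : ℝ) *
        ∫ s in (0 : ℝ)..ξ, Real.sinh s ^ ((n : ℝ) - 1) / Real.cosh s ^ ((r : ℝ) - 1) := by
  obtain ⟨a, rfl⟩ : ∃ a, r = a + 2 := ⟨r - 2, by omega⟩
  obtain ⟨b, rfl⟩ : ∃ b, n = a + b + 3 := ⟨n - (a + 3), by omega⟩
  clear hr hnr
  -- convert rpow to natural powers
  have e1 : ((a + b + 3 : ℕ) : ℝ) - 1 = ((a + b + 2 : ℕ) : ℝ) := by push_cast; ring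
  have e2 : ((a + 2 : ℕ) : ℝ) - 1 = ((a + 1 : ℕ) : ℝ) := by push_cast; ring
  simp only [e1, e2, Real.rpow_natCast]
  have eK : ((a + b + 3 : ℕ) : ℝ) - ((a + 2 : ℕ) : ℝ) = (b : ℝ) + 1 := by push_cast; ring
  rw [eK]
  -- the derivative of sinh^n/cosh^r
  set D : ℝ → ℝ := fun s =>
    (((a : ℝ) + b + 3) * Real.sinh s ^ (a + b + 2) * Real.cosh s * Real.cosh s ^ (a + 2)
      - Real.sinh s ^ (a + b + 3) * (((a : ℝ) + 2) * Real.cosh s ^ (a + 1) * Real.sinh s))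
      / (Real.cosh s ^ (a + 2)) ^ 2 with hDdef
  have hD : ∀ s : ℝ, HasDerivAt
      (fun t => Real.sinh t ^ (a + b + 3) / Real.cosh t ^ (a + 2)) (D s) s := by
    intro s
    have h1 := ((Real.hasDerivAt_sinh s).pow (a + b + 3)).div
      ((Real.hasDerivAt_cosh s).pow (a + 2)) (pow_ne_zero _ (Real.cosh_pos s).ne')
    have ea : a + b + 3 - 1 = a + b + 2 := by omega
    have eb : a + 2 - 1 = a + 1 := by omega
    rw [ea, eb] at h1
    push_cast at h1
    simp only [hDdef]
    exact h1
  have hcont : Continuous D := by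
    apply Continuous.div
    · fun_prop
    · fun_prop
    · intro s
      have := Real.cosh_pos s
      positivity
  have hgcont : Continuous (fun s => Real.sinh s ^ (a + b + 2) / Real.cosh s ^ (a + 1)) := by
    apply Continuous.div
    · fun_prop
    · fun_prop
    · intro s
      have := Real.cosh_pos s
      positivity
  have hFTC : ∫ s in (0:ℝ)..ξ, D s
      = Real.sinh ξ ^ (a + b + 3) / Real.cosh ξ ^ (a + 2) := by
    rw [intervalIntegral.integral_eq_sub_of_hasDerivAt (fun s _ => hD s)
      (hcont.intervalIntegrable 0 ξ)]
    simp
  -- strict comparison of integrals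
  have hpos : 0 < ∫ s in (0:ℝ)..ξ,
      (D s - ((b : ℝ) + 1) * (Real.sinh s ^ (a + b + 2) / Real.cosh s ^ (a + 1))) := by
    apply intervalIntegral.intervalIntegral_pos_of_pos_on
    · exact (hcont.sub (continuous_const.mul hgcont)).intervalIntegrable 0 ξ
    · intro s hs
      have hs0 : 0 < Real.sinh s := Real.sinh_pos_iff.2 hs.1
      have hc0 : 0 < Real.cosh s := Real.cosh_pos s
      have h2 : Real.cosh s ^ 2 - Real.sinh s ^ 2 = 1 := Real.cosh_sq_sub_sinh_sq s
      rw [sub_pos, hDdef]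
      rw [← mul_div_assoc, div_lt_div_iff₀ (by positivity) (by positivity)]
      have key : (((a : ℝ) + b + 3) * Real.sinh s ^ (a + b + 2) * Real.cosh s * Real.cosh s ^ (a + 2)
          - Real.sinh s ^ (a + b + 3) * (((a : ℝ) + 2) * Real.cosh s ^ (a + 1) * Real.sinh s))
          * Real.cosh s ^ (a + 1)
          - ((b : ℝ) + 1) * Real.sinh s ^ (a + b + 2) * (Real.cosh s ^ (a + 2)) ^ 2
          = ((a : ℝ) + 2) * Real.sinh s ^ (a + b + 2) * (Real.cosh s ^ (a + 1)) ^ 2 := by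
        linear_combination (((a : ℝ) + 2) * Real.sinh s ^ (a + b + 2)
          * (Real.cosh s ^ (a + 1)) ^ 2) * h2
      nlinarith [pow_pos hs0 (a + b + 2), pow_pos hc0 (a + 1),
        mul_pos (pow_pos hs0 (a + b + 2)) (pow_pos (pow_pos hc0 (a + 1)) 2)]
    · exact hξ
  rw [intervalIntegral.integral_sub (hcont.intervalIntegrable 0 ξ)
    (by exact (continuous_const.mul hgcont).intervalIntegrable 0 ξ : IntervalIntegrable (fun s => ((b : ℝ) + 1) * (Real.sinh s ^ (a + b + 2) / Real.cosh s ^ (a + 1))) MeasureTheory.volume 0 ξ),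
    intervalIntegral.integral_const_mul, hFTC, sub_pos] at hpos
  have hcξ : 0 < Real.cosh ξ ^ (a + 2) := pow_pos (Real.cosh_pos ξ) _
  rw [lt_div_iff₀ hcξ] at hpos
  calc ((b : ℝ) + 1) * Real.cosh ξ ^ (a + 2)
        * ∫ s in (0:ℝ)..ξ, Real.sinh s ^ (a + b + 2) / Real.cosh s ^ (a + 1)
      = (((b : ℝ) + 1) * ∫ s in (0:ℝ)..ξ, Real.sinh s ^ (a + b + 2) / Real.cosh s ^ (a + 1))
        * Real.cosh ξ ^ (a + 2) := by ring
    _ < Real.sinh ξ ^ (a + b + 3) := hpos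
end

section
/- Let n > r ≥ 2 be integers and let H be a real number with 0 < H ≤ (n−r)/n. Then for every ξ > 0: sinh(ξ)^{n−r} > n·H·∫₀^ξ sinh(s)^{n−1}/cosh(s)^{r−1} ds. Consequently q(ξ) = sinh(ξ)^{2(n−r)/r} − (n·H·I(ξ))^{2/r} > 0 for all ξ > 0, so the rotational profile λ(ρ) = ∫₀^ρ √( (n·H·I(ξ))^{2/r} / q(ξ) ) dξ is defined for every ρ ∈ [0, ∞). -/
open Real MeasureTheory Set intervalIntegral

namespace Stmt10Aux

lemma integrand_eq {n r : ℕ} (hn : 1 ≤ n) (hr : 1 ≤ r) (s : ℝ) :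
    Real.sinh s ^ ((n : ℝ) - 1) / Real.cosh s ^ ((r : ℝ) - 1)
      = Real.sinh s ^ (n - 1) / Real.cosh s ^ (r - 1) := by
  have h1 : ((n - 1 : ℕ) : ℝ) = (n : ℝ) - 1 := by simp [Nat.cast_sub hn]
  have h2 : ((r - 1 : ℕ) : ℝ) = (r : ℝ) - 1 := by simp [Nat.cast_sub hr]
  rw [← h1, ← h2, Real.rpow_natCast, Real.rpow_natCast]

lemma cont_f (n r : ℕ) :
    Continuous (fun s : ℝ => Real.sinh s ^ (n - 1) / Real.cosh s ^ (r - 1)) :=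
  (Real.continuous_sinh.pow _).div (Real.continuous_cosh.pow _) (fun s => by positivity)

lemma key (n r : ℕ) (hr : 2 ≤ r) (hnr : r < n) (H : ℝ) (hH : 0 < H)
    (hHle : H ≤ ((n : ℝ) - r) / n) {ξ : ℝ} (hξ : 0 < ξ) :
    (n : ℝ) * H * (∫ s in (0 : ℝ)..ξ, Real.sinh s ^ (n - 1) / Real.cosh s ^ (r - 1))
      < Real.sinh ξ ^ (n - r) := by
  have hn0 : (0 : ℝ) < (n : ℝ) := Nat.cast_pos.2 (by omega)
  have hnH : (n : ℝ) * H ≤ ((n : ℝ) - r) := by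
    rw [le_div_iff₀ hn0] at hHle; linarith
  obtain ⟨k, rfl⟩ : ∃ k, n = r + k + 1 := ⟨n - r - 1, by omega⟩
  have he1 : r + k + 1 - 1 = r + k := by omega
  have he2 : r + k + 1 - r = k + 1 := by omega
  rw [he1, he2]
  have hcast : ((r + k + 1 : ℕ) : ℝ) - (r : ℝ) = ((k : ℝ) + 1) := by push_cast; ring
  -- FTC for sinh^(k+1)
  have hderiv : ∀ s ∈ Set.uIcc (0 : ℝ) ξ,
      HasDerivAt (fun t => Real.sinh t ^ (k + 1))
        (((k : ℝ) + 1) * Real.sinh s ^ k * Real.cosh s) s := by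
    intro s _
    have := (Real.hasDerivAt_sinh s).fun_pow (k + 1)
    simpa using this
  have hcont1 : Continuous (fun s : ℝ => ((k : ℝ) + 1) * Real.sinh s ^ k * Real.cosh s) := by
    continuity
  have hFTC : ∫ s in (0 : ℝ)..ξ, ((k : ℝ) + 1) * Real.sinh s ^ k * Real.cosh s
      = Real.sinh ξ ^ (k + 1) := by
    rw [intervalIntegral.integral_eq_sub_of_hasDerivAt hderiv
      (hcont1.intervalIntegrable 0 ξ)]
    simp
  have hint1 : IntervalIntegrable
      (fun s : ℝ => ((k : ℝ) + 1) * Real.sinh s ^ k * Real.cosh s) volume 0 ξ :=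
    hcont1.intervalIntegrable 0 ξ
  have hcont2 : Continuous (fun s : ℝ =>
      ((r + k + 1 : ℕ) : ℝ) * H * (Real.sinh s ^ (r + k) / Real.cosh s ^ (r - 1))) :=
    continuous_const.mul ((Real.continuous_sinh.pow _).div
      (Real.continuous_cosh.pow _) (fun s => by positivity))
  have hint2 : IntervalIntegrable (fun s : ℝ =>
      ((r + k + 1 : ℕ) : ℝ) * H * (Real.sinh s ^ (r + k) / Real.cosh s ^ (r - 1)))
      volume 0 ξ := hcont2.intervalIntegrable 0 ξ
  have hpos : 0 < ∫ s in (0 : ℝ)..ξ,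
      (((k : ℝ) + 1) * Real.sinh s ^ k * Real.cosh s
        - ((r + k + 1 : ℕ) : ℝ) * H * (Real.sinh s ^ (r + k) / Real.cosh s ^ (r - 1))) := by
    apply intervalIntegral_pos_of_pos_on (hint1.sub hint2) _ hξ
    intro s hs
    have hs0 : 0 < Real.sinh s := Real.sinh_pos_iff.mpr hs.1
    have hsc : Real.sinh s < Real.cosh s := Real.sinh_lt_cosh s
    have hc0 : 0 < Real.cosh s := Real.cosh_pos s
    have hX : 0 < Real.sinh s ^ (r + k) / Real.cosh s ^ (r - 1) := by positivity
    have h1 : Real.sinh s ^ (r + k) / Real.cosh s ^ (r - 1)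
        < Real.sinh s ^ k * Real.cosh s := by
      rw [div_lt_iff₀ (by positivity)]
      have hpow : Real.sinh s ^ r < Real.cosh s ^ r :=
        pow_lt_pow_left₀ hsc hs0.le (by omega)
      calc Real.sinh s ^ (r + k) = Real.sinh s ^ k * Real.sinh s ^ r := by
            rw [← pow_add]; ring_nf
        _ < Real.sinh s ^ k * Real.cosh s ^ r :=
            mul_lt_mul_of_pos_left hpow (pow_pos hs0 k)
        _ = Real.sinh s ^ k * Real.cosh s * Real.cosh s ^ (r - 1) := by
            rw [show Real.cosh s ^ r = Real.cosh s ^ (r - 1) * Real.cosh s by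
              rw [← pow_succ]; congr 1; omega]
            ring
    have h2 : ((r + k + 1 : ℕ) : ℝ) * H ≤ (k : ℝ) + 1 := by rw [← hcast]; linarith
    have h3 : ((r + k + 1 : ℕ) : ℝ) * H * (Real.sinh s ^ (r + k) / Real.cosh s ^ (r - 1))
        ≤ ((k : ℝ) + 1) * (Real.sinh s ^ (r + k) / Real.cosh s ^ (r - 1)) :=
      mul_le_mul_of_nonneg_right h2 hX.le
    nlinarith [mul_lt_mul_of_pos_left h1 (show (0:ℝ) < (k : ℝ) + 1 by positivity)]
  rw [intervalIntegral.integral_sub hint1 hint2, hFTC,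
    intervalIntegral.integral_const_mul] at hpos
  linarith

end Stmt10Aux

open Stmt10Aux

/-- for `n > r ≥ 2` and `0 < H ≤ (n−r)/n`, one has
`sinh(ξ)^(n−r) > nH·I(ξ)` for all `ξ > 0`, hence `q > 0` on `(0,∞)` and the rotational
profile `λ(ρ)` is defined (the integral converges) for every `ρ ≥ 0`. -/
theorem stmt10 (n r : ℕ) (hr : 2 ≤ r) (hnr : r < n) (H : ℝ) (hH : 0 < H)
    (hHle : H ≤ ((n : ℝ) - r) / n) (I q : ℝ → ℝ)
    (hI : ∀ ξ : ℝ, I ξ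
      = ∫ s in (0 : ℝ)..ξ, Real.sinh s ^ ((n : ℝ) - 1) / Real.cosh s ^ ((r : ℝ) - 1))
    (hq : ∀ ξ : ℝ, q ξ
      = Real.sinh ξ ^ (2 * ((n : ℝ) - r) / r) - ((n : ℝ) * H * I ξ) ^ (2 / (r : ℝ))) :
    (∀ ξ : ℝ, 0 < ξ → Real.sinh ξ ^ ((n : ℝ) - r) > (n : ℝ) * H * I ξ) ∧
    (∀ ξ : ℝ, 0 < ξ → 0 < q ξ) ∧
    (∀ ρ : ℝ, 0 ≤ ρ →
      IntervalIntegrable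
        (fun ξ : ℝ => Real.sqrt ((((n : ℝ) * H * I ξ) ^ (2 / (r : ℝ))) / q ξ))
        MeasureTheory.volume 0 ρ) := by
  have hn1 : 1 ≤ n := by omega
  have hr1 : 1 ≤ r := by omega
  have hIeq : ∀ ξ : ℝ, I ξ
      = ∫ s in (0 : ℝ)..ξ, Real.sinh s ^ (n - 1) / Real.cosh s ^ (r - 1) := by
    intro ξ; rw [hI ξ]
    exact intervalIntegral.integral_congr fun s _ => integrand_eq hn1 hr1 s
  have key1 : ∀ ξ : ℝ, 0 < ξ → (n : ℝ) * H * I ξ < Real.sinh ξ ^ (n - r) := by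
    intro ξ hξ
    rw [hIeq]
    exact key n r hr hnr H hH hHle hξ
  have hpow_eq : ∀ ξ : ℝ, Real.sinh ξ ^ ((n : ℝ) - (r : ℝ)) = Real.sinh ξ ^ (n - r : ℕ) := by
    intro ξ; rw [← Nat.cast_sub hnr.le, Real.rpow_natCast]
  have hInn : ∀ ξ : ℝ, 0 ≤ ξ → 0 ≤ I ξ := by
    intro ξ hξ
    rw [hIeq]
    apply intervalIntegral.integral_nonneg hξ
    intro s hs
    have h0 : 0 ≤ Real.sinh s := Real.sinh_nonneg_iff.mpr hs.1
    positivity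
  have h2r : 0 < 2 / (r : ℝ) := by
    apply div_pos two_pos (Nat.cast_pos.2 (by omega))
  have hS' : ∀ ξ : ℝ, 0 ≤ ξ →
      Real.sinh ξ ^ (2 * ((n : ℝ) - r) / r)
        = (Real.sinh ξ ^ (n - r : ℕ)) ^ ((2 : ℝ) / r) := by
    intro ξ hξ
    rw [← Real.rpow_natCast (Real.sinh ξ) (n - r),
      ← Real.rpow_mul (Real.sinh_nonneg_iff.mpr hξ)]
    congr 1
    rw [Nat.cast_sub hnr.le]; ring
  have hq_pos : ∀ ξ : ℝ, 0 < ξ → 0 < q ξ := by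
    intro ξ hξ
    have hInn' := hInn ξ hξ.le
    have hA : 0 ≤ (n : ℝ) * H * I ξ := by positivity
    have hlt := key1 ξ hξ
    have h2 : ((n : ℝ) * H * I ξ) ^ ((2 : ℝ) / r)
        < (Real.sinh ξ ^ (n - r : ℕ)) ^ ((2 : ℝ) / r) :=
      Real.rpow_lt_rpow hA hlt h2r
    rw [hq, hS' ξ hξ.le]
    linarith
  refine ⟨fun ξ hξ => by rw [hpow_eq]; exact key1 ξ hξ, hq_pos, ?_⟩
  intro ρ hρ
  -- continuity of I
  have contI : Continuous I := by
    have h := intervalIntegral.continuous_primitive (μ := MeasureTheory.volume)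
      (fun a b => (cont_f n r).intervalIntegrable a b) 0
    exact h.congr fun ξ => (hIeq ξ).symm
  have contN : Continuous fun ξ : ℝ => ((n : ℝ) * H * I ξ) ^ (2 / (r : ℝ)) :=
    (continuous_const.mul contI).rpow_const fun x => Or.inr h2r.le
  have contq : Continuous q := by
    have hrn : (r : ℝ) ≤ (n : ℝ) := Nat.cast_le.2 hnr.le
    have hc : 0 ≤ 2 * ((n : ℝ) - r) / r := by
      apply div_nonneg (by linarith) (Nat.cast_pos.2 (by omega)).le
    have h1 : Continuous fun ξ : ℝ => Real.sinh ξ ^ (2 * ((n : ℝ) - r) / r) :=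
      Real.continuous_sinh.rpow_const fun x => Or.inr hc
    have : q = fun ξ => Real.sinh ξ ^ (2 * ((n : ℝ) - r) / r)
        - ((n : ℝ) * H * I ξ) ^ (2 / (r : ℝ)) := funext hq
    rw [this]; exact h1.sub contN
  set F : ℝ → ℝ := fun ξ => (n : ℝ) * H * I ξ / Real.sinh ξ ^ (n - r : ℕ) with hF
  have hI0 : I 0 = 0 := by rw [hIeq]; simp
  have hF0 : F 0 = 0 := by simp [hF, hI0]
  have hFnn : ∀ ξ ∈ Icc (0 : ℝ) ρ, 0 ≤ F ξ := by
    intro ξ hξ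
    have h0 : 0 ≤ Real.sinh ξ := Real.sinh_nonneg_iff.mpr hξ.1
    have h1 := hInn ξ hξ.1
    apply div_nonneg (by positivity) (by positivity)
  have hFb : ∀ ξ ∈ Icc (0 : ℝ) ρ,
      F ξ ≤ (n : ℝ) * H * ξ * Real.sinh ξ ^ (r - 1) := by
    intro ξ hξ
    rcases eq_or_lt_of_le hξ.1 with h0 | h0
    · rw [← h0, hF0]
      simp
    · have hs0 : 0 < Real.sinh ξ := Real.sinh_pos_iff.mpr h0
      have hIle : I ξ ≤ ξ * Real.sinh ξ ^ (n - 1) := by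
        rw [hIeq]
        have hmono := intervalIntegral.integral_mono_on h0.le
          ((cont_f n r).intervalIntegrable 0 ξ)
          (_root_.intervalIntegrable_const (μ := MeasureTheory.volume) (c := Real.sinh ξ ^ (n - 1)))
          (fun s hs => ?_)
        · simpa using hmono
        · have hsn : 0 ≤ Real.sinh s := Real.sinh_nonneg_iff.mpr hs.1
          have h1 : Real.sinh s ^ (n - 1) / Real.cosh s ^ (r - 1)
              ≤ Real.sinh s ^ (n - 1) :=
            div_le_self (by positivity) (one_le_pow₀ (Real.one_le_cosh s))
          have h2 : Real.sinh s ^ (n - 1) ≤ Real.sinh ξ ^ (n - 1) :=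
            pow_le_pow_left₀ hsn (Real.sinh_le_sinh.mpr hs.2) _
          linarith
      rw [hF, div_le_iff₀ (pow_pos hs0 _)]
      have hpowadd : Real.sinh ξ ^ (r - 1) * Real.sinh ξ ^ (n - r)
          = Real.sinh ξ ^ (n - 1) := by
        rw [← pow_add]; congr 1; omega
      have hnH0 : 0 ≤ (n : ℝ) * H := by positivity
      calc (n : ℝ) * H * I ξ ≤ (n : ℝ) * H * (ξ * Real.sinh ξ ^ (n - 1)) :=
            mul_le_mul_of_nonneg_left hIle hnH0
        _ = (n : ℝ) * H * ξ * Real.sinh ξ ^ (r - 1) * Real.sinh ξ ^ (n - r) := by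
            rw [mul_assoc ((n : ℝ) * H * ξ), hpowadd]; ring
  have hcontF : ContinuousOn F (Icc 0 ρ) := by
    intro x hx
    rcases eq_or_lt_of_le hx.1 with hx0 | hx0
    · rw [← hx0]
      have hb : Continuous fun ξ : ℝ => (n : ℝ) * H * ξ * Real.sinh ξ ^ (r - 1) := by
        continuity
      have hb0 : (n : ℝ) * H * (0 : ℝ) * Real.sinh 0 ^ (r - 1) = 0 := by ring
      unfold ContinuousWithinAt
      rw [hF0]
      refine tendsto_of_tendsto_of_tendsto_of_le_of_le'
        (tendsto_const_nhds)
        ?_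
        (eventually_nhdsWithin_of_forall hFnn)
        (eventually_nhdsWithin_of_forall hFb)
      have := (hb.tendsto 0).mono_left (nhdsWithin_le_nhds (s := Icc (0:ℝ) ρ))
      rwa [hb0] at this
    · have hs0 : 0 < Real.sinh x := Real.sinh_pos_iff.mpr hx0
      apply ContinuousAt.continuousWithinAt
      exact ((continuous_const.mul contI).continuousAt).div
        ((Real.continuous_sinh.pow _).continuousAt)
        (ne_of_gt (pow_pos hs0 _))
  obtain ⟨x₀, hx₀, hmax⟩ := isCompact_Icc.exists_isMaxOn (nonempty_Icc.2 hρ) hcontF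
  have hM0 : 0 ≤ F x₀ := hFnn x₀ hx₀
  have hM1 : F x₀ < 1 := by
    rcases eq_or_lt_of_le hx₀.1 with h0 | h0
    · rw [← h0, hF0]; norm_num
    · have hs0 : 0 < Real.sinh x₀ := Real.sinh_pos_iff.mpr h0
      rw [hF, div_lt_one (pow_pos hs0 _)]
      exact key1 x₀ h0
  set m : ℝ := F x₀ ^ ((2 : ℝ) / r) with hm
  have hm0 : 0 ≤ m := Real.rpow_nonneg hM0 _
  have hm1 : m < 1 := Real.rpow_lt_one hM0 hM1 h2r
  set C : ℝ := m / (1 - m) with hC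
  have hC0 : 0 ≤ C := div_nonneg hm0 (by linarith)
  have hfb : ∀ ξ ∈ Icc (0 : ℝ) ρ,
      ((n : ℝ) * H * I ξ) ^ (2 / (r : ℝ)) / q ξ ≤ C := by
    intro ξ hξ
    rcases eq_or_lt_of_le hξ.1 with h0 | h0
    · rw [← h0]
      rw [hI0]
      rw [show (n : ℝ) * H * 0 = 0 by ring, Real.zero_rpow (ne_of_gt h2r), zero_div]
      exact hC0
    · have hs0 : 0 < Real.sinh ξ := Real.sinh_pos_iff.mpr h0
      have hS : 0 < Real.sinh ξ ^ (n - r : ℕ) := pow_pos hs0 _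
      have hInn' := hInn ξ hξ.1
      have hA0 : 0 ≤ (n : ℝ) * H * I ξ := by positivity
      have hhM : F ξ ≤ F x₀ := hmax hξ
      have hAle : (n : ℝ) * H * I ξ ≤ F x₀ * Real.sinh ξ ^ (n - r : ℕ) := by
        rw [hF] at hhM
        exact (div_le_iff₀ hS).1 hhM
      set S' : ℝ := (Real.sinh ξ ^ (n - r : ℕ)) ^ ((2 : ℝ) / r) with hS'def
      have hS'0 : 0 < S' := Real.rpow_pos_of_pos hS _
      have hN : ((n : ℝ) * H * I ξ) ^ (2 / (r : ℝ)) ≤ m * S' := by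
        calc ((n : ℝ) * H * I ξ) ^ (2 / (r : ℝ))
            ≤ (F x₀ * Real.sinh ξ ^ (n - r : ℕ)) ^ ((2 : ℝ) / r) :=
              Real.rpow_le_rpow hA0 hAle h2r.le
          _ = m * S' := Real.mul_rpow hM0 hS.le
      have hqξ : q ξ = S' - ((n : ℝ) * H * I ξ) ^ (2 / (r : ℝ)) := by
        rw [hq, hS' ξ hξ.1]
      have hq_lb : (1 - m) * S' ≤ q ξ := by rw [hqξ]; nlinarith
      have hden : 0 < (1 - m) * S' := mul_pos (by linarith) hS'0
      have h5 : ((n : ℝ) * H * I ξ) ^ (2 / (r : ℝ)) / q ξ ≤ (m * S') / ((1 - m) * S') :=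
        div_le_div₀ (by positivity) hN hden hq_lb
      rw [mul_div_mul_right _ _ (ne_of_gt hS'0)] at h5
      exact h5
  apply IntervalIntegrable.mono_fun' (g := fun _ : ℝ => Real.sqrt C)
    (intervalIntegrable_const)
  · exact (Real.continuous_sqrt.measurable.comp
      ((contN.measurable).div contq.measurable)).aestronglyMeasurable
  · have hsub : Set.uIoc (0 : ℝ) ρ ⊆ Icc 0 ρ := by
      rw [uIoc_of_le hρ]; exact Ioc_subset_Icc_self
    refine (ae_restrict_iff' measurableSet_uIoc).2 (Filter.Eventually.of_forall fun x hx => ?_)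
    have hx' := hsub hx
    simpa [Real.norm_eq_abs, abs_of_nonneg (Real.sqrt_nonneg _)] using
      Real.sqrt_le_sqrt (hfb x hx')
end

section
/- Let n ≥ r ≥ 2 be integers and let H > (n−r)/n be a real number. Define g(ξ) = sinh(ξ)^{n−r} − n·H·∫₀^ξ sinh(s)^{n−1}/cosh(s)^{r−1} ds for ξ ≥ 0. Then there exists a unique ρ₀ ∈ (0, ∞) with g(ρ₀) = 0; moreover g(ξ) > 0 for all ξ ∈ (0, ρ₀), g(ξ) < 0 for all ξ > ρ₀, g attains its maximum on (0,∞) at artanh( ((n−r)/(n·H))^{1/r} ), and ρ₀ > artanh( ((n−r)/(n·H))^{1/r} ). -/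
open Real Set

private lemma tanh_formula (x : ℝ) : Real.tanh x = 1 - 2 / (Real.exp (2*x) + 1) := by
  rw [Real.tanh_eq_sinh_div_cosh, Real.sinh_eq, Real.cosh_eq, Real.exp_neg]
  have h : 0 < Real.exp x := Real.exp_pos x
  have h2 : Real.exp (2*x) = Real.exp x * Real.exp x := by rw [two_mul, Real.exp_add]
  rw [h2]
  field_simp
  ring

private lemma tanh_strictMono : StrictMono Real.tanh := by
  intro a b hab
  rw [tanh_formula, tanh_formula]
  have h1 : Real.exp (2*a) < Real.exp (2*b) := Real.exp_lt_exp.2 (by linarith)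
  have h2 : 0 < Real.exp (2*a) + 1 := by positivity
  gcongr

private lemma tanh_nonneg' {x : ℝ} (hx : 0 ≤ x) : 0 ≤ Real.tanh x := by
  rw [Real.tanh_eq_sinh_div_cosh]
  exact div_nonneg (Real.sinh_nonneg_iff.2 hx) (Real.cosh_pos x).le

private lemma exists_tanh_gt {t : ℝ} (ht : t < 1) : ∃ x, 0 < x ∧ t < Real.tanh x := by
  have h1t : 0 < 1 - t := by linarith
  set M : ℝ := 2 / (1 - t) with hM
  have hM0 : 0 < M := by positivity
  refine ⟨max 1 M, by positivity, ?_⟩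
  rw [tanh_formula]
  have hexp : 2 * max 1 M + 1 ≤ Real.exp (2 * max 1 M) := by
    have := Real.add_one_le_exp (2 * max 1 M); linarith
  have hMle : M ≤ max 1 M := le_max_right _ _
  have hlt : M < Real.exp (2 * max 1 M) + 1 := by nlinarith [le_max_left 1 M]
  have hpos : 0 < Real.exp (2 * max 1 M) + 1 := by positivity
  have : 2 / (Real.exp (2 * max 1 M) + 1) < 2 / M :=
    div_lt_div_of_pos_left (by norm_num) hM0 hlt
  have h2M : 2 / M = 1 - t := by rw [hM]; field_simp
  linarith

set_option maxHeartbeats 1000000 in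
/-- for `n ≥ r ≥ 2` and `H > (n−r)/n`, the function
`g(ξ) = sinh(ξ)^(n−r) − nH·I(ξ)` has a unique positive zero `ρ₀`; `g > 0` on `(0,ρ₀)`,
`g < 0` on `(ρ₀,∞)`, `g` attains its maximum on `(0,∞)` at
`ξ⋆ = artanh(((n−r)/(nH))^(1/r))` (characterized by `tanh ξ⋆ = ((n−r)/(nH))^(1/r)`),
and `ρ₀ > ξ⋆`. -/
theorem stmt11 (n r : ℕ) (hr : 2 ≤ r) (hn : r ≤ n) (H : ℝ)
    (hH : ((n : ℝ) - r) / n < H) (g : ℝ → ℝ)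
    (hg : ∀ ξ : ℝ, g ξ
      = Real.sinh ξ ^ ((n : ℝ) - r)
        - (n : ℝ) * H *
          ∫ s in (0 : ℝ)..ξ, Real.sinh s ^ ((n : ℝ) - 1) / Real.cosh s ^ ((r : ℝ) - 1))
    (ξstar : ℝ) (hξstar : Real.tanh ξstar = (((n : ℝ) - r) / ((n : ℝ) * H)) ^ (1 / (r : ℝ)))
    (hξstar0 : 0 ≤ ξstar) :
    ∃ ρ₀ : ℝ, 0 < ρ₀ ∧ g ρ₀ = 0 ∧
      (∀ ξ : ℝ, 0 < ξ → g ξ = 0 → ξ = ρ₀) ∧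
      (∀ ξ ∈ Set.Ioo (0 : ℝ) ρ₀, 0 < g ξ) ∧
      (∀ ξ : ℝ, ρ₀ < ξ → g ξ < 0) ∧
      (∀ ξ : ℝ, 0 < ξ → g ξ ≤ g ξstar) ∧
      ξstar < ρ₀ := by
  set c : ℝ := (n:ℝ) - r with hc_def
  have hr0 : (0:ℝ) < r := by positivity
  have hrR : (2:ℝ) ≤ r := by exact_mod_cast hr
  have hn0 : (0:ℝ) < n := by
    have : (0:ℕ) < n := lt_of_lt_of_le (by omega) hn
    exact_mod_cast this
  have hrn : (r:ℝ) ≤ n := by exact_mod_cast hn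
  have hc0 : 0 ≤ c := by rw [hc_def]; linarith
  have hH0 : 0 < H := lt_of_le_of_lt (div_nonneg hc0 hn0.le) hH
  have hcnH : c < n * H := by
    have := (div_lt_iff₀ hn0).mp hH
    linarith
  have hnH0 : 0 < (n:ℝ) * H := by positivity
  set t : ℝ := c / ((n:ℝ) * H) with ht_def
  have ht0 : 0 ≤ t := div_nonneg hc0 hnH0.le
  have ht1 : t < 1 := (div_lt_one hnH0).mpr hcnH
  have htc : (n:ℝ) * H * t = c := by rw [ht_def]; field_simp
  have hpow_inv : ∀ u : ℝ, 0 ≤ u → (u ^ (1/(r:ℝ))) ^ ((r:ℝ)) = u := by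
    intro u hu
    rw [← Real.rpow_mul hu, one_div, inv_mul_cancel₀ (ne_of_gt hr0), Real.rpow_one]
  set tstar : ℝ := t ^ (1 / (r:ℝ)) with htstar_def
  have htanh : Real.tanh ξstar = tstar := hξstar
  have htstar0 : 0 ≤ tstar := Real.rpow_nonneg ht0 _
  have htstar1 : tstar < 1 := by
    rcases eq_or_lt_of_le ht0 with h | h
    · rw [htstar_def, ← h, Real.zero_rpow (by positivity : 1/(r:ℝ) ≠ 0)]; norm_num
    · exact Real.rpow_lt_one ht0 ht1 (by positivity)
  have htstar_pow : tstar ^ ((r:ℝ)) = t := hpow_inv t ht0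
  -- the integrand
  set f : ℝ → ℝ := fun s => Real.sinh s ^ ((n : ℝ) - 1) / Real.cosh s ^ ((r : ℝ) - 1)
    with hf_def
  have hf_cont : Continuous f := by
    apply Continuous.div
    · exact Real.continuous_sinh.rpow_const fun x => Or.inr (by linarith)
    · exact Real.continuous_cosh.rpow_const fun x => Or.inr (by linarith)
    · intro x
      exact (Real.rpow_pos_of_pos (Real.cosh_pos x) _).ne'
  -- primitive
  set F : ℝ → ℝ := fun x => ∫ s in (0:ℝ)..x, f s with hF_def
  have hF_deriv : ∀ ξ : ℝ, HasDerivAt F (f ξ) ξ := by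
    intro ξ
    exact intervalIntegral.integral_hasDerivAt_right
      (hf_cont.intervalIntegrable _ _)
      hf_cont.stronglyMeasurable.stronglyMeasurableAtFilter
      hf_cont.continuousAt
  have hF_diff : Differentiable ℝ F := fun x => (hF_deriv x).differentiableAt
  have hF_cont : Continuous F := hF_diff.continuous
  have hgfun : ∀ ξ, g ξ = Real.sinh ξ ^ c - (n:ℝ) * H * F ξ := fun ξ => hg ξ
  have hg_cont : Continuous g := by
    have : g = fun ξ => Real.sinh ξ ^ c - (n:ℝ) * H * F ξ := funext hgfun
    rw [this]
    exact (Real.continuous_sinh.rpow_const fun x => Or.inr hc0).sub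
      (continuous_const.mul hF_cont)
  -- derivative of g
  set dg : ℝ → ℝ := fun ξ =>
    Real.sinh ξ ^ (c - 1) * Real.cosh ξ * (c - (n:ℝ) * H * Real.tanh ξ ^ ((r:ℝ)))
    with hdg_def
  have hg_deriv : ∀ ξ : ℝ, 0 < ξ → HasDerivAt g (dg ξ) ξ := by
    intro ξ hξ
    have hs : 0 < Real.sinh ξ := Real.sinh_pos_iff.2 hξ
    have hch : 0 < Real.cosh ξ := Real.cosh_pos ξ
    have h1 : HasDerivAt (fun x => Real.sinh x ^ c)
        (Real.cosh ξ * c * Real.sinh ξ ^ (c - 1)) ξ :=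
      (Real.hasDerivAt_sinh ξ).rpow_const (Or.inl hs.ne')
    have h2 := (hF_deriv ξ).const_mul ((n:ℝ) * H)
    have h3 := h1.sub h2
    have hgf : g = fun ξ => Real.sinh ξ ^ c - (n:ℝ) * H * F ξ := funext hgfun
    rw [hgf]
    refine h3.congr_deriv ?_
    have hexp1 : c - 1 + (r:ℝ) = (n:ℝ) - 1 := by rw [hc_def]; ring
    have key : Real.sinh ξ ^ ((n:ℝ) - 1)
        = Real.sinh ξ ^ (c - 1) * Real.sinh ξ ^ ((r:ℝ)) := by
      rw [← Real.rpow_add hs, hexp1]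
    have hchr : Real.cosh ξ ^ ((r:ℝ)) = Real.cosh ξ ^ ((r:ℝ) - 1) * Real.cosh ξ := by
      rw [← Real.rpow_add_one hch.ne' ((r:ℝ) - 1), sub_add_cancel]
    have htanhr : Real.tanh ξ ^ ((r:ℝ))
        = Real.sinh ξ ^ ((r:ℝ)) / Real.cosh ξ ^ ((r:ℝ)) := by
      rw [Real.tanh_eq_sinh_div_cosh, Real.div_rpow hs.le hch.le]
    have hch1 : (0:ℝ) < Real.cosh ξ ^ ((r:ℝ) - 1) := Real.rpow_pos_of_pos hch _
    simp only [hdg_def, hf_def]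
    rw [htanhr, key, hchr]
    field_simp
  -- sign of dg
  have hdg_pos : ∀ ξ ∈ Set.Ioo (0:ℝ) ξstar, 0 < dg ξ := by
    intro ξ hξ
    have hs : 0 < Real.sinh ξ := Real.sinh_pos_iff.2 hξ.1
    have hch : 0 < Real.cosh ξ := Real.cosh_pos ξ
    have htl : Real.tanh ξ < tstar := htanh ▸ tanh_strictMono hξ.2
    have htn : 0 ≤ Real.tanh ξ := tanh_nonneg' hξ.1.le
    have hpow : Real.tanh ξ ^ ((r:ℝ)) < t := by
      calc Real.tanh ξ ^ ((r:ℝ)) < tstar ^ ((r:ℝ)) := Real.rpow_lt_rpow htn htl hr0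
        _ = t := htstar_pow
    have hbr : 0 < c - (n:ℝ) * H * Real.tanh ξ ^ ((r:ℝ)) := by
      have h' : (n:ℝ) * H * Real.tanh ξ ^ ((r:ℝ)) < (n:ℝ) * H * t :=
        (mul_lt_mul_iff_right₀ hnH0).2 hpow
      linarith
    exact mul_pos (mul_pos (Real.rpow_pos_of_pos hs _) hch) hbr
  have hdg_neg : ∀ ξ : ℝ, ξstar < ξ → dg ξ < 0 := by
    intro ξ hξ
    have hξ0 : 0 < ξ := lt_of_le_of_lt hξstar0 hξ
    have hs : 0 < Real.sinh ξ := Real.sinh_pos_iff.2 hξ0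
    have hch : 0 < Real.cosh ξ := Real.cosh_pos ξ
    have htl : tstar < Real.tanh ξ := htanh ▸ tanh_strictMono hξ
    have hpow : t < Real.tanh ξ ^ ((r:ℝ)) := by
      calc t = tstar ^ ((r:ℝ)) := htstar_pow.symm
        _ < Real.tanh ξ ^ ((r:ℝ)) := Real.rpow_lt_rpow htstar0 htl hr0
    have hbr : c - (n:ℝ) * H * Real.tanh ξ ^ ((r:ℝ)) < 0 := by
      have h' : (n:ℝ) * H * t < (n:ℝ) * H * Real.tanh ξ ^ ((r:ℝ)) :=
        (mul_lt_mul_iff_right₀ hnH0).2 hpow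
      linarith
    exact mul_neg_of_pos_of_neg (mul_pos (Real.rpow_pos_of_pos hs _) hch) hbr
  -- monotone structure
  have hmono : StrictMonoOn g (Set.Icc 0 ξstar) := by
    apply strictMonoOn_of_deriv_pos (convex_Icc 0 ξstar) hg_cont.continuousOn
    intro x hx
    rw [interior_Icc] at hx
    rw [(hg_deriv x hx.1).deriv]
    exact hdg_pos x hx
  have hanti : StrictAntiOn g (Set.Ici ξstar) := by
    apply strictAntiOn_of_deriv_neg (convex_Ici ξstar) hg_cont.continuousOn
    intro x hx
    rw [interior_Ici] at hx
    rw [(hg_deriv x (lt_of_le_of_lt hξstar0 hx)).deriv]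
    exact hdg_neg x hx
  have hF0 : F 0 = 0 := intervalIntegral.integral_same
  have hg0 : 0 ≤ g 0 := by
    rw [hgfun 0, hF0, Real.sinh_zero, mul_zero, sub_zero]
    exact Real.rpow_nonneg le_rfl c
  -- positivity on (0, ξstar]
  have hpos_left : ∀ ξ : ℝ, 0 < ξ → ξ ≤ ξstar → 0 < g ξ := by
    intro ξ h0 h1
    have := hmono (Set.left_mem_Icc.2 hξstar0) ⟨h0.le, h1⟩ h0
    linarith
  -- g ξstar > 0
  have hgstar : 0 < g ξstar := by
    rcases eq_or_lt_of_le hξstar0 with h | h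
    · have htstar_eq : tstar = 0 := by rw [← htanh, ← h, Real.tanh_zero]
      have htz : t = 0 := by
        by_contra hne
        have htpos : 0 < t := lt_of_le_of_ne ht0 (Ne.symm hne)
        have h2 : 0 < tstar := Real.rpow_pos_of_pos htpos _
        rw [htstar_eq] at h2; exact lt_irrefl 0 h2
      have hcz : c = 0 := by
        rw [ht_def, div_eq_zero_iff] at htz
        exact htz.resolve_right hnH0.ne'
      rw [hgfun ξstar, ← h, hF0, Real.sinh_zero, mul_zero, sub_zero, hcz,
        Real.rpow_zero]
      norm_num
    · exact hpos_left ξstar h le_rfl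
  -- δ and the large-ξ negative slope
  set δ : ℝ := ((n:ℝ) * H - c) / 2 with hδ_def
  have hδ0 : 0 < δ := by rw [hδ_def]; linarith
  set t2 : ℝ := (c + (n:ℝ) * H) / (2 * ((n:ℝ) * H)) with ht2_def
  have ht20 : 0 ≤ t2 := by positivity
  have ht21 : t2 < 1 := by
    rw [ht2_def, div_lt_one (by positivity)]
    linarith
  have ht2star1 : t2 ^ (1/(r:ℝ)) < 1 := by
    rcases eq_or_lt_of_le ht20 with h | h
    · rw [← h, Real.zero_rpow (by positivity : 1/(r:ℝ) ≠ 0)]; norm_num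
    · exact Real.rpow_lt_one ht20 ht21 (by positivity)
  obtain ⟨x1, hx10, hx1⟩ := exists_tanh_gt ht2star1
  set a : ℝ := max (max x1 1) ξstar with ha_def
  have hax1 : x1 ≤ a := le_trans (le_max_left _ _) (le_max_left _ _)
  have ha1 : (1:ℝ) ≤ a := le_trans (le_max_right x1 1) (le_max_left _ _)
  have haξ : ξstar ≤ a := le_max_right _ _
  have ha0 : 0 < a := lt_of_lt_of_le one_pos ha1
  have hsinh1 : (1:ℝ) ≤ Real.sinh 1 := by
    rw [Real.sinh_eq]
    have h1 : (2.7182818283:ℝ) < Real.exp 1 := Real.exp_one_gt_d9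
    have h2 : Real.exp (-1) < 1/2 := by
      rw [Real.exp_neg]
      rw [inv_lt_comm₀ (Real.exp_pos 1) (by norm_num)]
      norm_num
      linarith
    linarith
  have hslope : ∀ ξ : ℝ, a ≤ ξ → dg ξ ≤ -δ := by
    intro ξ hξ
    have hξ1 : (1:ℝ) ≤ ξ := le_trans ha1 hξ
    have hξ0 : 0 < ξ := lt_of_lt_of_le one_pos hξ1
    have hs : 0 < Real.sinh ξ := Real.sinh_pos_iff.2 hξ0
    have hch : 0 < Real.cosh ξ := Real.cosh_pos ξ
    have hs1 : (1:ℝ) ≤ Real.sinh ξ :=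
      le_trans hsinh1 (Real.sinh_le_sinh.2 hξ1)
    -- tanh ξ large
    have htl : t2 ^ (1/(r:ℝ)) < Real.tanh ξ :=
      lt_of_lt_of_le hx1 (tanh_strictMono.monotone (le_trans hax1 hξ))
    have ht2n : 0 ≤ t2 ^ (1/(r:ℝ)) := Real.rpow_nonneg ht20 _
    have hpow : t2 < Real.tanh ξ ^ ((r:ℝ)) := by
      calc t2 = (t2 ^ (1/(r:ℝ))) ^ ((r:ℝ)) := (hpow_inv t2 ht20).symm
        _ < Real.tanh ξ ^ ((r:ℝ)) := Real.rpow_lt_rpow ht2n htl hr0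
    have hbr : c - (n:ℝ) * H * Real.tanh ξ ^ ((r:ℝ)) ≤ -δ := by
      have h' : (n:ℝ) * H * t2 < (n:ℝ) * H * Real.tanh ξ ^ ((r:ℝ)) :=
        (mul_lt_mul_iff_right₀ hnH0).2 hpow
      have h'' : (n:ℝ) * H * t2 = (c + (n:ℝ) * H) / 2 := by
        rw [ht2_def]; field_simp
      rw [hδ_def]; linarith
    -- factor at least 1
    have hfac : (1:ℝ) ≤ Real.sinh ξ ^ (c - 1) * Real.cosh ξ := by
      have hsc : Real.sinh ξ ^ (c-1) * Real.sinh ξ = Real.sinh ξ ^ c := by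
        rw [← Real.rpow_add_one hs.ne' (c-1), sub_add_cancel]
      have hcs : Real.sinh ξ ≤ Real.cosh ξ := by
        rw [Real.sinh_eq, Real.cosh_eq]
        have := Real.exp_pos (-ξ)
        linarith
      have h1 : (1:ℝ) ≤ Real.sinh ξ ^ c := by
        calc (1:ℝ) = 1 ^ c := (Real.one_rpow c).symm
          _ ≤ Real.sinh ξ ^ c := Real.rpow_le_rpow (by norm_num) hs1 hc0
      calc (1:ℝ) ≤ Real.sinh ξ ^ c := h1
        _ = Real.sinh ξ ^ (c-1) * Real.sinh ξ := hsc.symm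
        _ ≤ Real.sinh ξ ^ (c-1) * Real.cosh ξ := by
            exact mul_le_mul_of_nonneg_left hcs (Real.rpow_pos_of_pos hs _).le
    have hbr0 : c - (n:ℝ) * H * Real.tanh ξ ^ ((r:ℝ)) ≤ 0 := le_trans hbr (by linarith)
    calc dg ξ = Real.sinh ξ ^ (c-1) * Real.cosh ξ
          * (c - (n:ℝ) * H * Real.tanh ξ ^ ((r:ℝ))) := rfl
      _ ≤ 1 * (c - (n:ℝ) * H * Real.tanh ξ ^ ((r:ℝ))) :=
          mul_le_mul_of_nonpos_right hfac hbr0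
      _ = c - (n:ℝ) * H * Real.tanh ξ ^ ((r:ℝ)) := one_mul _
      _ ≤ -δ := hbr
  -- g goes negative
  set h : ℝ → ℝ := fun x => g x + δ * x with hh_def
  have hh_anti : AntitoneOn h (Set.Ici a) := by
    apply antitoneOn_of_deriv_nonpos (convex_Ici a)
      (hg_cont.add (continuous_const.mul continuous_id)).continuousOn
    · intro x hx
      rw [interior_Ici] at hx
      exact ((hg_deriv x (lt_of_lt_of_le ha0 hx.le)).add
        ((hasDerivAt_id x).const_mul δ)).differentiableAt.differentiableWithinAt
    · intro x hx
      rw [interior_Ici] at hx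
      have hd := (hg_deriv x (lt_of_lt_of_le ha0 hx.le)).add
        ((hasDerivAt_id x).const_mul δ)
      rw [show deriv (g + (fun _ => ((n:ℝ) * H - c) / 2) * id) x = dg x + δ * 1 from hd.deriv]
      have := hslope x hx.le
      simp only [mul_one]
      linarith
  set b : ℝ := max a ((g a + δ * a) / δ) + 1 with hb_def
  have hab : a ≤ b := by
    have := le_max_left a ((g a + δ * a) / δ); rw [hb_def]; linarith
  have hbval : g b < 0 := by
    have h1 : h b ≤ h a := hh_anti Set.self_mem_Ici (Set.mem_Ici.2 hab) hab
    have h2 : (g a + δ * a) / δ ≤ max a ((g a + δ * a) / δ) := le_max_right _ _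
    have h3 : g a + δ * a ≤ max a ((g a + δ * a) / δ) * δ := (div_le_iff₀ hδ0).mp h2
    have h4 : δ * b = δ * max a ((g a + δ * a) / δ) + δ := by rw [hb_def]; ring
    simp only [hh_def] at h1
    clear_value b a δ
    linarith [h1, h3, h4, hδ0]
  have hab' : a < b := by
    have := le_max_left a ((g a + δ * a) / δ); rw [hb_def]; linarith
  have hξb : ξstar < b := lt_of_le_of_lt haξ hab'
  -- IVT
  obtain ⟨ρ₀, hρmem, hρval⟩ : ∃ ρ₀ ∈ Set.Ioo ξstar b, g ρ₀ = 0 := by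
    have hsub := intermediate_value_Ioo' hξb.le hg_cont.continuousOn
    have h0mem : (0:ℝ) ∈ Set.Ioo (g b) (g ξstar) := ⟨hbval, hgstar⟩
    obtain ⟨ρ₀, hρ, hval⟩ := hsub h0mem
    exact ⟨ρ₀, hρ, hval⟩
  have hρξ : ξstar < ρ₀ := hρmem.1
  have hρ0 : 0 < ρ₀ := lt_of_le_of_lt hξstar0 hρξ
  refine ⟨ρ₀, hρ0, hρval, ?_, ?_, ?_, ?_, hρξ⟩
  · -- uniqueness
    intro ξ hξ0 hξval
    by_contra hne
    rcases lt_or_gt_of_ne hne with hlt | hgt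
    · rcases le_or_gt ξ ξstar with hle | hgt2
      · have hp := hpos_left ξ hξ0 hle
        rw [hξval] at hp; exact lt_irrefl 0 hp
      · have := hanti (Set.mem_Ici.2 hgt2.le) (Set.mem_Ici.2 hρξ.le) hlt
        rw [hρval, hξval] at this; exact lt_irrefl 0 this
    · have := hanti (Set.mem_Ici.2 hρξ.le) (Set.mem_Ici.2 (hρξ.le.trans hgt.le)) hgt
      rw [hρval, hξval] at this; exact lt_irrefl 0 this
  · -- positive on (0, ρ₀)
    intro ξ hξ
    rcases le_or_gt ξ ξstar with hle | hgt
    · exact hpos_left ξ hξ.1 hle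
    · have := hanti (Set.mem_Ici.2 hgt.le) (Set.mem_Ici.2 hρξ.le) hξ.2
      rw [hρval] at this
      linarith
  · -- negative after ρ₀
    intro ξ hξ
    have := hanti (Set.mem_Ici.2 hρξ.le) (Set.mem_Ici.2 (hρξ.le.trans hξ.le)) hξ
    rw [hρval] at this
    linarith
  · -- max at ξstar
    intro ξ hξ0
    rcases le_or_gt ξ ξstar with hle | hgt
    · rcases eq_or_lt_of_le hle with heq | hlt
      · rw [heq]
      · exact (hmono ⟨hξ0.le, hle⟩ (Set.right_mem_Icc.2 hξstar0) hlt).le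
    · exact (hanti Set.self_mem_Ici (Set.mem_Ici.2 hgt.le) hgt).le
end

section
/- Let H > 0 and set ρ₀ = arcosh(e^{1/(2H)}). Then the function ξ ↦ √( 2H·ln(cosh ξ) / (1 − 2H·ln(cosh ξ)) ) is integrable on (0, ρ₀); that is, the improper integral ∫₀^{ρ₀} √( 2H·ln(cosh ξ) / (1 − 2H·ln(cosh ξ)) ) dξ converges to a finite value. -/
open MeasureTheory

private lemma tanh_mono' {a b : ℝ} (h : a ≤ b) : Real.tanh a ≤ Real.tanh b := by
  rw [Real.tanh_eq_sinh_div_cosh, Real.tanh_eq_sinh_div_cosh,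
    div_le_div_iff₀ (Real.cosh_pos a) (Real.cosh_pos b)]
  have h1 : Real.sinh (a - b) ≤ 0 := by
    rw [← Real.sinh_zero]; exact Real.sinh_le_sinh.2 (by linarith)
  rw [Real.sinh_sub] at h1
  linarith

private lemma hasDerivAt_logcosh (x : ℝ) :
    HasDerivAt (fun x => Real.log (Real.cosh x)) (Real.tanh x) x := by
  have := (Real.hasDerivAt_cosh x).log (Real.cosh_pos x).ne'
  simpa [Real.tanh_eq_sinh_div_cosh] using this

private lemma contlogcosh : Continuous fun x : ℝ => Real.log (Real.cosh x) :=
  Real.continuous_cosh.log fun x => (Real.cosh_pos x).ne'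

/-- for `H > 0` and `ρ₀ = arcosh(e^(1/(2H)))` (characterized by `ρ₀ > 0` and
`cosh ρ₀ = e^(1/(2H))`), the function `ξ ↦ √(2H·ln(cosh ξ)/(1 − 2H·ln(cosh ξ)))` is
integrable on `(0, ρ₀)`, i.e. the improper integral converges to a finite value. -/
theorem stmt13 (H : ℝ) (hH : 0 < H) (ρ₀ : ℝ) (hρ₀pos : 0 < ρ₀)
    (hρ₀ : Real.cosh ρ₀ = Real.exp (1 / (2 * H))) :
    IntegrableOn
      (fun ξ : ℝ => Real.sqrt (2 * H * Real.log (Real.cosh ξ) /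
        (1 - 2 * H * Real.log (Real.cosh ξ))))
      (Set.Ioo 0 ρ₀) := by
  set f : ℝ → ℝ := fun ξ => Real.sqrt (2 * H * Real.log (Real.cosh ξ) /
      (1 - 2 * H * Real.log (Real.cosh ξ))) with hfdef
  set m : ℝ := ρ₀ / 2 with hmdef
  have hm0 : 0 < m := by positivity
  have hmρ : m < ρ₀ := by rw [hmdef]; linarith
  have hLρ : Real.log (Real.cosh ρ₀) = 1 / (2 * H) := by rw [hρ₀, Real.log_exp]
  have hnum : ∀ ξ : ℝ, 0 ≤ 2 * H * Real.log (Real.cosh ξ) := fun ξ => by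
    have := Real.log_nonneg (Real.one_le_cosh ξ); positivity
  have hden : ∀ ξ ∈ Set.Ico (0:ℝ) ρ₀, 0 < 1 - 2 * H * Real.log (Real.cosh ξ) := by
    rintro ξ ⟨h0, h1⟩
    have hc : Real.cosh ξ < Real.cosh ρ₀ := by
      rw [Real.cosh_lt_cosh, abs_of_nonneg h0, abs_of_pos hρ₀pos]; exact h1
    have hl := Real.log_lt_log (Real.cosh_pos ξ) hc
    rw [hLρ] at hl
    have h2 : 2 * H * Real.log (Real.cosh ξ) < 2 * H * (1 / (2 * H)) :=
      mul_lt_mul_of_pos_left hl (by positivity)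
    have h3 : 2 * H * (1 / (2 * H)) = 1 := by field_simp
    linarith
  have hmeas : Measurable f := by
    apply Measurable.sqrt
    exact ((measurable_const.mul contlogcosh.measurable).div
      (measurable_const.sub (measurable_const.mul contlogcosh.measurable)))
  -- integrable on (0, m]
  have h1 : IntegrableOn f (Set.Ioc 0 m) := by
    have hcont : ContinuousOn f (Set.Icc 0 m) := by
      apply Real.continuous_sqrt.comp_continuousOn
      apply ContinuousOn.div
      · exact (continuous_const.mul contlogcosh).continuousOn
      · exact (continuous_const.sub (continuous_const.mul contlogcosh)).continuousOn
      · rintro ξ ⟨h0, h1⟩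
        exact (hden ξ ⟨h0, lt_of_le_of_lt h1 hmρ⟩).ne'
    exact (hcont.integrableOn_compact isCompact_Icc).mono_set Set.Ioc_subset_Icc_self
  -- key lower bound on the denominator near ρ₀
  have htm0 : 0 < Real.tanh m := by
    rw [Real.tanh_eq_sinh_div_cosh]
    apply div_pos _ (Real.cosh_pos m)
    rw [← Real.sinh_zero]; exact Real.sinh_lt_sinh.2 hm0
  set K : ℝ := 2 * H * Real.tanh m with hKdef
  have hK0 : 0 < K := by positivity
  have hkey : ∀ ξ ∈ Set.Ico m ρ₀, K * (ρ₀ - ξ) ≤ 1 - 2 * H * Real.log (Real.cosh ξ) := by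
    rintro ξ ⟨hξm, hξρ⟩
    obtain ⟨c, hc, hderiv⟩ := exists_hasDerivAt_eq_slope (fun x => Real.log (Real.cosh x))
      Real.tanh hξρ contlogcosh.continuousOn (fun x _ => hasDerivAt_logcosh x)
    have htm : Real.tanh m ≤ Real.tanh c := tanh_mono' (le_of_lt (lt_of_le_of_lt hξm hc.1))
    have hpos : 0 < ρ₀ - ξ := by linarith
    have h2 : Real.tanh c * (ρ₀ - ξ) = Real.log (Real.cosh ρ₀) - Real.log (Real.cosh ξ) := by
      rw [hderiv]; field_simp
    have h3 : 1 - 2 * H * Real.log (Real.cosh ξ)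
        = 2 * H * (Real.log (Real.cosh ρ₀) - Real.log (Real.cosh ξ)) := by
      rw [hLρ]; field_simp
    rw [h3, ← h2, hKdef]
    have h4 : Real.tanh m * (ρ₀ - ξ) ≤ Real.tanh c * (ρ₀ - ξ) :=
      mul_le_mul_of_nonneg_right htm hpos.le
    nlinarith
  -- integrable on (m, ρ₀) by comparison with C * (ρ₀ - ξ)^(-1/2)
  have h2 : IntegrableOn f (Set.Ioo m ρ₀) := by
    have hdom : IntegrableOn (fun ξ : ℝ =>
        (Real.sqrt K)⁻¹ * (ρ₀ - ξ) ^ (-(1/2) : ℝ)) (Set.Ioo m ρ₀) := by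
      have hbase : IntervalIntegrable (fun x : ℝ => x ^ (-(1/2) : ℝ)) volume (ρ₀ - m) 0 :=
        intervalIntegral.intervalIntegrable_rpow' (by norm_num)
      have := hbase.comp_sub_left ρ₀
      simp only [sub_sub_cancel, sub_zero] at this
      have h5 : IntegrableOn (fun x : ℝ => (ρ₀ - x) ^ (-(1/2) : ℝ)) (Set.Ioc m ρ₀) := by
        have := intervalIntegrable_iff.mp this
        rwa [Set.uIoc_of_le hmρ.le] at this
      exact (h5.mono_set Set.Ioo_subset_Ioc_self).const_mul _
    apply Integrable.mono' hdom (hmeas.aestronglyMeasurable.restrict)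
    filter_upwards [ae_restrict_mem measurableSet_Ioo] with ξ hξ
    obtain ⟨hξm, hξρ⟩ := hξ
    have hξ0 : (0:ℝ) < ξ := lt_of_lt_of_le hm0 hξm.le
    have hdpos := hden ξ ⟨hξ0.le, hξρ⟩
    have hnlt : 2 * H * Real.log (Real.cosh ξ) ≤ 1 := by linarith
    have hKt : 0 < K * (ρ₀ - ξ) := by
      apply mul_pos hK0; linarith
    have hKd : K * (ρ₀ - ξ) ≤ 1 - 2 * H * Real.log (Real.cosh ξ) :=
      hkey ξ ⟨hξm.le, hξρ⟩
    have hdivle : 2 * H * Real.log (Real.cosh ξ) / (1 - 2 * H * Real.log (Real.cosh ξ))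
        ≤ 1 / (K * (ρ₀ - ξ)) := div_le_div₀ (by norm_num) hnlt hKt hKd
    have hfle : f ξ ≤ Real.sqrt (1 / (K * (ρ₀ - ξ))) := Real.sqrt_le_sqrt hdivle
    have heq : Real.sqrt (1 / (K * (ρ₀ - ξ)))
        = (Real.sqrt K)⁻¹ * (ρ₀ - ξ) ^ (-(1/2) : ℝ) := by
      have ht0 : (0:ℝ) < ρ₀ - ξ := by linarith
      rw [one_div, Real.sqrt_inv, Real.sqrt_mul hK0.le, mul_inv,
        Real.rpow_neg ht0.le, Real.sqrt_eq_rpow (ρ₀ - ξ)]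
    rw [Real.norm_eq_abs, abs_of_nonneg (Real.sqrt_nonneg _)]
    calc f ξ ≤ Real.sqrt (1 / (K * (ρ₀ - ξ))) := hfle
      _ = _ := heq
  -- combine
  apply (h1.union h2).mono_set
  rintro ξ ⟨h0, h1⟩
  rcases le_or_gt ξ m with h | h
  · exact Or.inl ⟨h0, h⟩
  · exact Or.inr ⟨h, h1⟩
end

section
/- Let n ≥ r ≥ 2 be integers and ρ > 0. For H > 0 write I(ξ) = ∫₀^ξ sinh(s)^{n−1}/cosh(s)^{r−1} ds, q_H(ξ) = sinh(ξ)^{2(n−r)/r} − (n·H·I(ξ))^{2/r}, and λ_H(ρ) = ∫₀^ρ √( (n·H·I(ξ))^{2/r} / q_H(ξ) ) dξ. If 0 < H₁ < H₂ and q_{H₂}(ξ) > 0 for all ξ ∈ (0, ρ), then q_{H₁}(ξ) > 0 for all ξ ∈ (0, ρ) and λ_{H₁}(ρ) < λ_{H₂}(ρ). -/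
open Real MeasureTheory intervalIntegral Set

noncomputable def auxJ (n r : ℕ) : ℝ → ℝ :=
  fun s => Real.sinh s ^ (n - 1) / Real.cosh s ^ (r - 1)

noncomputable def auxI (n r : ℕ) : ℝ → ℝ :=
  fun ξ => ∫ s in (0:ℝ)..ξ, auxJ n r s

lemma auxJ_cont (n r : ℕ) : Continuous (auxJ n r) := by
  apply Continuous.div
  · exact (Real.continuous_sinh.pow _)
  · exact (Real.continuous_cosh.pow _)
  · intro x
    positivity

lemma auxJ_nonneg (n r : ℕ) {s : ℝ} (hs : 0 ≤ s) : 0 ≤ auxJ n r s := by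
  unfold auxJ
  have := Real.sinh_nonneg_iff.mpr hs
  positivity

lemma auxJ_pos (n r : ℕ) {s : ℝ} (hs : 0 < s) : 0 < auxJ n r s := by
  unfold auxJ
  have := Real.sinh_pos_iff.mpr hs
  positivity

lemma auxI_cont (n r : ℕ) : Continuous (auxI n r) :=
  intervalIntegral.continuous_primitive
    (fun a b => ((auxJ_cont n r).intervalIntegrable a b)) 0

lemma auxI_hasDeriv (n r : ℕ) (ξ : ℝ) : HasDerivAt (auxI n r) (auxJ n r ξ) ξ :=
  intervalIntegral.integral_hasDerivAt_right
    ((auxJ_cont n r).intervalIntegrable 0 ξ)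
    ((auxJ_cont n r).stronglyMeasurableAtFilter _ _)
    (auxJ_cont n r).continuousAt

lemma auxI_zero (n r : ℕ) : auxI n r 0 = 0 := by
  simp [auxI]

lemma auxI_nonneg (n r : ℕ) {ξ : ℝ} (hξ : 0 ≤ ξ) : 0 ≤ auxI n r ξ :=
  intervalIntegral.integral_nonneg hξ (fun s hs => auxJ_nonneg n r hs.1)

lemma auxI_pos (n r : ℕ) {ξ : ℝ} (hξ : 0 < ξ) : 0 < auxI n r ξ :=
  intervalIntegral.intervalIntegral_pos_of_pos_on
    ((auxJ_cont n r).intervalIntegrable 0 ξ)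
    (fun s hs => auxJ_pos n r hs.1) hξ

lemma auxI_mono (n r : ℕ) {ξ η : ℝ} (h0 : 0 ≤ ξ) (h : ξ ≤ η) :
    auxI n r ξ ≤ auxI n r η := by
  have h2 : auxI n r η = auxI n r ξ + ∫ s in ξ..η, auxJ n r s := by
    rw [auxI, auxI,
      intervalIntegral.integral_add_adjacent_intervals
        ((auxJ_cont n r).intervalIntegrable 0 ξ) ((auxJ_cont n r).intervalIntegrable ξ η)]
  rw [h2]
  have : 0 ≤ ∫ s in ξ..η, auxJ n r s :=
    intervalIntegral.integral_nonneg h (fun s hs => auxJ_nonneg n r (h0.trans hs.1))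
  linarith

lemma auxI_le (n r : ℕ) {ξ : ℝ} (hξ : 0 ≤ ξ) :
    auxI n r ξ ≤ ξ * Real.sinh ξ ^ (n - 1) := by
  have hb : ∀ s ∈ Set.uIoc (0:ℝ) ξ, ‖auxJ n r s‖ ≤ Real.sinh ξ ^ (n - 1) := by
    intro s hs
    rw [Set.uIoc_of_le hξ] at hs
    have hs0 : 0 < s := hs.1
    rw [Real.norm_of_nonneg (auxJ_nonneg n r hs0.le)]
    unfold auxJ
    have h1 : Real.sinh s ^ (n-1) / Real.cosh s ^ (r-1) ≤ Real.sinh s ^ (n-1) := by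
      apply div_le_self (by positivity)
      exact one_le_pow₀ (Real.one_le_cosh s)
    refine h1.trans ?_
    exact pow_le_pow_left₀ (Real.sinh_nonneg_iff.mpr hs0.le)
      (Real.sinh_le_sinh.mpr hs.2) _
  have := intervalIntegral.norm_integral_le_of_norm_le_const hb
  rw [sub_zero] at this
  have h2 : auxI n r ξ ≤ |auxI n r ξ| := le_abs_self _
  calc auxI n r ξ ≤ ‖auxI n r ξ‖ := h2
    _ ≤ Real.sinh ξ ^ (n-1) * |ξ| := this
    _ = ξ * Real.sinh ξ ^ (n-1) := by rw [abs_of_nonneg hξ]; ring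
lemma aux_key (n r : ℕ) (hr : 2 ≤ r) (hn : r ≤ n) {ρ : ℝ} (hρ : 0 < ρ) :
    ((n - r : ℕ) : ℝ) * auxI n r ρ * Real.cosh ρ ^ r < Real.sinh ρ ^ n := by
  have hsρ : 0 < Real.sinh ρ := Real.sinh_pos_iff.mpr hρ
  rcases eq_or_lt_of_le hn with heq | hlt
  · rw [← heq, Nat.sub_self]
    push_cast
    simpa using pow_pos hsρ r
  · set k : ℕ := n - r with hk
    have hk1 : 1 ≤ k := by omega
    have hkpos : (0:ℝ) < (k:ℝ) := by exact_mod_cast hk1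
    have hnkr : (n:ℝ) = (k:ℝ) + (r:ℝ) := by
      have : n = k + r := by omega
      exact_mod_cast this
    set G : ℝ → ℝ := fun ξ =>
      Real.sinh ξ ^ n / ((k:ℝ) * Real.cosh ξ ^ r) - auxI n r ξ with hG
    have hdenom : ∀ ξ : ℝ, (k:ℝ) * Real.cosh ξ ^ r ≠ 0 := by
      intro ξ
      have := Real.cosh_pos ξ
      positivity
    have hGderiv : ∀ ξ : ℝ, HasDerivAt G
        (((n:ℝ) * Real.sinh ξ ^ (n-1) * Real.cosh ξ * ((k:ℝ) * Real.cosh ξ ^ r)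
          - Real.sinh ξ ^ n * ((k:ℝ) * ((r:ℝ) * Real.cosh ξ ^ (r-1) * Real.sinh ξ)))
          / ((k:ℝ) * Real.cosh ξ ^ r) ^ 2 - auxJ n r ξ) ξ := by
      intro ξ
      have hu : HasDerivAt (fun ξ => Real.sinh ξ ^ n)
          ((n:ℝ) * Real.sinh ξ ^ (n-1) * Real.cosh ξ) ξ :=
        (Real.hasDerivAt_sinh ξ).pow n
      have hv : HasDerivAt (fun ξ => (k:ℝ) * Real.cosh ξ ^ r)
          ((k:ℝ) * ((r:ℝ) * Real.cosh ξ ^ (r-1) * Real.sinh ξ)) ξ :=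
        ((Real.hasDerivAt_cosh ξ).pow r).const_mul _
      exact (hu.div hv (hdenom ξ)).sub (auxI_hasDeriv n r ξ)
    have hDpos : ∀ ξ ∈ Set.Ioo (0:ℝ) ρ,
        0 < ((n:ℝ) * Real.sinh ξ ^ (n-1) * Real.cosh ξ * ((k:ℝ) * Real.cosh ξ ^ r)
          - Real.sinh ξ ^ n * ((k:ℝ) * ((r:ℝ) * Real.cosh ξ ^ (r-1) * Real.sinh ξ)))
          / ((k:ℝ) * Real.cosh ξ ^ r) ^ 2 - auxJ n r ξ := by
      intro ξ hξ
      have hs : 0 < Real.sinh ξ := Real.sinh_pos_iff.mpr hξ.1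
      have hc : 0 < Real.cosh ξ := Real.cosh_pos ξ
      have hS : 0 < Real.sinh ξ ^ (n-1) := pow_pos hs _
      have hC : 0 < Real.cosh ξ ^ (r-1) := pow_pos hc _
      rw [sub_pos, auxJ, div_lt_div_iff₀ hC (by positivity)]
      have e1 : Real.sinh ξ ^ n = Real.sinh ξ ^ (n-1) * Real.sinh ξ := by
        rw [← pow_succ]; congr 1; omega
      have e2 : Real.cosh ξ ^ r = Real.cosh ξ ^ (r-1) * Real.cosh ξ := by
        rw [← pow_succ]; congr 1; omega
      rw [e1, e2]
      have hc2 : Real.cosh ξ ^ 2 = Real.sinh ξ ^ 2 + 1 := by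
        have := Real.cosh_sq ξ; linarith
      have hrpos : (0:ℝ) < (r:ℝ) := by positivity
      have hrw : ((n:ℝ) * Real.sinh ξ ^ (n-1) * Real.cosh ξ *
            ((k:ℝ) * (Real.cosh ξ ^ (r-1) * Real.cosh ξ))
          - Real.sinh ξ ^ (n-1) * Real.sinh ξ *
            ((k:ℝ) * ((r:ℝ) * Real.cosh ξ ^ (r-1) * Real.sinh ξ))) * Real.cosh ξ ^ (r-1)
          - Real.sinh ξ ^ (n-1) * ((k:ℝ) * (Real.cosh ξ ^ (r-1) * Real.cosh ξ)) ^ 2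
          = (k:ℝ) * (r:ℝ) * Real.sinh ξ ^ (n-1) * (Real.cosh ξ ^ (r-1)) ^ 2 := by
        rw [hnkr]
        linear_combination ((k:ℝ) * (r:ℝ) * Real.sinh ξ ^ (n-1)
          * (Real.cosh ξ ^ (r-1)) ^ 2) * hc2
      nlinarith [hrw, mul_pos (mul_pos (mul_pos hkpos hrpos) hS) (mul_pos hC hC)]
    have hGcont : ContinuousOn G (Set.Icc 0 ρ) := by
      apply Continuous.continuousOn
      exact ((Real.continuous_sinh.pow n).div
        (continuous_const.mul (Real.continuous_cosh.pow r)) hdenom).sub (auxI_cont n r)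
    have hmono : StrictMonoOn G (Set.Icc 0 ρ) := by
      apply strictMonoOn_of_deriv_pos (convex_Icc 0 ρ) hGcont
      intro ξ hξ
      rw [interior_Icc] at hξ
      rw [(hGderiv ξ).deriv]
      exact hDpos ξ hξ
    have hG0 : G 0 = 0 := by
      simp [hG, auxI_zero, Real.sinh_zero, zero_pow (by omega : n ≠ 0)]
    have hGρ : 0 < G ρ := by
      have := hmono (Set.left_mem_Icc.mpr hρ.le) (Set.right_mem_Icc.mpr hρ.le) hρ
      rwa [hG0] at this
    have : auxI n r ρ < Real.sinh ρ ^ n / ((k:ℝ) * Real.cosh ρ ^ r) := by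
      simp only [hG, sub_pos] at hGρ
      exact hGρ
    have hcp : 0 < (k:ℝ) * Real.cosh ρ ^ r := by
      have := Real.cosh_pos ρ; positivity
    rw [lt_div_iff₀ hcp] at this
    nlinarith [this]
lemma aux_bnd (n r : ℕ) (hr : 2 ≤ r) (hn : r ≤ n) {H c : ℝ} (hH : 0 < H) (hc : 0 < c)
    (q f : ℝ → ℝ) (hqcont : Continuous q)
    (hqdef : ∀ ξ ∈ Set.Icc (0:ℝ) c, q ξ
      = ((Real.sinh ξ ^ (n-r) : ℝ) ^ (2/(r:ℝ)) - (((n:ℝ)*H*auxI n r ξ)) ^ (2/(r:ℝ))))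
    (hqpos : ∀ ξ ∈ Set.Ioc (0:ℝ) c, 0 < q ξ)
    (hfdef : f = fun ξ => Real.sqrt ((((n:ℝ)*H*auxI n r ξ)) ^ (2/(r:ℝ)) / q ξ)) :
    IntervalIntegrable f volume 0 c := by
  set p : ℝ := 2/(r:ℝ) with hpdef
  have hp : 0 < p := by
    have : (0:ℝ) < (r:ℝ) := by positivity
    positivity
  set κ : ℝ := ((1:ℝ)/2) ^ p with hκdef
  have hκ0 : 0 < κ := Real.rpow_pos_of_pos (by norm_num) _
  have hκ1 : κ < 1 := Real.rpow_lt_one (by norm_num) (by norm_num) hp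
  set Cb : ℝ := Real.sqrt (κ/(1-κ)) with hCb
  -- continuity of the numerator
  have hxcont : Continuous fun ξ => (((n:ℝ)*H*auxI n r ξ)) ^ p := by
    rw [continuous_iff_continuousAt]
    intro ξ
    exact (Real.continuousAt_rpow_const _ _ (Or.inr hp.le)).comp
      ((continuous_const.mul (auxI_cont n r)).continuousAt)
  have hfmeas : Measurable f := by
    rw [hfdef]
    exact Real.continuous_sqrt.measurable.comp
      (hxcont.measurable.div hqcont.measurable)
  -- small interval
  have hφ : Continuous fun ξ : ℝ => (n:ℝ)*H*ξ*Real.sinh ξ ^ (r-1) := by continuity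
  have hφ0 : Filter.Tendsto (fun ξ : ℝ => (n:ℝ)*H*ξ*Real.sinh ξ ^ (r-1)) (nhds 0)
      (nhds 0) := by
    have := hφ.tendsto 0
    simpa using this
  have hev : ∀ᶠ ξ in nhds (0:ℝ), (n:ℝ)*H*ξ*Real.sinh ξ ^ (r-1) < 1/2 :=
    hφ0.eventually_lt_const (by norm_num)
  obtain ⟨δ, hδ0, hδ⟩ := Metric.eventually_nhds_iff.mp hev
  set d : ℝ := min (δ/2) c with hddef
  have hd0 : 0 < d := lt_min (by linarith) hc
  have hdc : d ≤ c := min_le_right _ _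
  have hbound : ∀ ξ ∈ Set.uIoc (0:ℝ) d, ‖f ξ‖ ≤ Cb := by
    intro ξ hξ
    rw [Set.uIoc_of_le hd0.le] at hξ
    have hξ0 : 0 < ξ := hξ.1
    have hξc : ξ ≤ c := hξ.2.trans hdc
    have hs : 0 < Real.sinh ξ := Real.sinh_pos_iff.mpr hξ0
    have hφξ : (n:ℝ)*H*ξ*Real.sinh ξ ^ (r-1) < 1/2 := by
      apply hδ
      rw [Real.dist_eq, sub_zero, abs_of_nonneg hξ0.le]
      calc ξ ≤ d := hξ.2
        _ ≤ δ/2 := min_le_left _ _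
        _ < δ := by linarith
    have hInn : 0 ≤ (n:ℝ)*H*auxI n r ξ := by
      have := auxI_nonneg n r hξ0.le
      positivity
    have hb : (n:ℝ)*H*auxI n r ξ ≤ (1/2) * Real.sinh ξ ^ (n-r) := by
      have h1 : auxI n r ξ ≤ ξ * Real.sinh ξ ^ (n-1) := auxI_le n r hξ0.le
      have h2 : Real.sinh ξ ^ (n-1) = Real.sinh ξ ^ (r-1) * Real.sinh ξ ^ (n-r) := by
        rw [← pow_add]; congr 1; omega
      have h3 : (n:ℝ)*H*auxI n r ξ ≤ ((n:ℝ)*H*ξ*Real.sinh ξ ^ (r-1)) *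
          Real.sinh ξ ^ (n-r) := by
        calc (n:ℝ)*H*auxI n r ξ ≤ (n:ℝ)*H*(ξ * Real.sinh ξ ^ (n-1)) := by
              apply mul_le_mul_of_nonneg_left h1 (by positivity)
          _ = ((n:ℝ)*H*ξ*Real.sinh ξ ^ (r-1)) * Real.sinh ξ ^ (n-r) := by
              rw [h2]; ring
      refine h3.trans ?_
      exact mul_le_mul_of_nonneg_right hφξ.le (by positivity)
    have hA : 0 < (Real.sinh ξ ^ (n-r) : ℝ) ^ p :=
      Real.rpow_pos_of_pos (by positivity) _
    have hx : (((n:ℝ)*H*auxI n r ξ)) ^ p ≤ κ * (Real.sinh ξ ^ (n-r) : ℝ) ^ p := by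
      calc (((n:ℝ)*H*auxI n r ξ)) ^ p ≤ ((1/2) * Real.sinh ξ ^ (n-r)) ^ p :=
            Real.rpow_le_rpow hInn hb hp.le
        _ = κ * (Real.sinh ξ ^ (n-r) : ℝ) ^ p := by
            rw [Real.mul_rpow (by norm_num) (by positivity)]
    have hqξ : q ξ = (Real.sinh ξ ^ (n-r) : ℝ) ^ p - (((n:ℝ)*H*auxI n r ξ)) ^ p :=
      hqdef ξ ⟨hξ0.le, hξc⟩
    have hqlow : (1-κ) * (Real.sinh ξ ^ (n-r) : ℝ) ^ p ≤ q ξ := by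
      rw [hqξ]; nlinarith [hx]
    have hdivle : (((n:ℝ)*H*auxI n r ξ)) ^ p / q ξ ≤ κ/(1-κ) := by
      have h5 : (((n:ℝ)*H*auxI n r ξ)) ^ p / q ξ ≤
          (κ * (Real.sinh ξ ^ (n-r) : ℝ) ^ p) / ((1-κ) * (Real.sinh ξ ^ (n-r) : ℝ) ^ p) := by
        apply div_le_div₀ (mul_nonneg hκ0.le hA.le) hx (mul_pos (by linarith) hA) hqlow
      refine h5.trans (le_of_eq ?_)
      rw [mul_div_mul_right _ _ hA.ne']
    rw [hfdef]
    rw [Real.norm_of_nonneg (Real.sqrt_nonneg _), hCb]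
    exact Real.sqrt_le_sqrt hdivle
  have hint1 : IntervalIntegrable f volume 0 d := by
    apply IntervalIntegrable.mono_fun' (g := fun _ => Cb)
      (intervalIntegrable_const) (hfmeas.aestronglyMeasurable.restrict)
    exact ae_restrict_of_forall_mem measurableSet_uIoc hbound
  have hint2 : IntervalIntegrable f volume d c := by
    apply ContinuousOn.intervalIntegrable
    rw [Set.uIcc_of_le hdc, hfdef]
    apply Real.continuous_sqrt.comp_continuousOn
    apply ContinuousOn.div hxcont.continuousOn hqcont.continuousOn
    intro ξ hξ
    exact (hqpos ξ ⟨lt_of_lt_of_le hd0 hξ.1, hξ.2⟩).ne'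
  exact hint1.trans hint2
set_option maxHeartbeats 1000000 in
lemma aux_int (n r : ℕ) (hr : 2 ≤ r) (hn : r ≤ n) {H ρ : ℝ} (hH : 0 < H) (hρ : 0 < ρ)
    (q f : ℝ → ℝ) (hqcont : Continuous q)
    (hqdef : ∀ ξ ∈ Set.Icc (0:ℝ) ρ, q ξ
      = ((Real.sinh ξ ^ (n-r) : ℝ) ^ (2/(r:ℝ)) - (((n:ℝ)*H*auxI n r ξ)) ^ (2/(r:ℝ))))
    (hqpos : ∀ ξ ∈ Set.Ioo (0:ℝ) ρ, 0 < q ξ)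
    (hfdef : f = fun ξ => Real.sqrt ((((n:ℝ)*H*auxI n r ξ)) ^ (2/(r:ℝ)) / q ξ)) :
    IntervalIntegrable f volume 0 ρ := by
  set p : ℝ := 2/(r:ℝ) with hpdef
  have hrR : (0:ℝ) < (r:ℝ) := by positivity
  have hp : 0 < p := by positivity
  have hp1 : p ≤ 1 := by
    rw [hpdef, div_le_one hrR]
    exact_mod_cast hr
  have hsρ : 0 < Real.sinh ρ := Real.sinh_pos_iff.mpr hρ
  have hfmeas : Measurable f := by
    have hxcont : Continuous fun ξ => (((n:ℝ)*H*auxI n r ξ)) ^ p := by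
      rw [continuous_iff_continuousAt]
      intro ξ
      exact (Real.continuousAt_rpow_const _ _ (Or.inr hp.le)).comp
        ((continuous_const.mul (auxI_cont n r)).continuousAt)
    rw [hfdef]
    exact Real.continuous_sqrt.measurable.comp
      (hxcont.measurable.div hqcont.measurable)
  -- q ρ ≥ 0
  have hqρnn : 0 ≤ q ρ := by
    by_contra h
    push_neg at h
    have hev : ∀ᶠ ξ in nhds ρ, q ξ < 0 :=
      (hqcont.tendsto ρ).eventually_lt_const h
    obtain ⟨δ, hδ0, hδ⟩ := Metric.eventually_nhds_iff.mp hev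
    set ξ := max (ρ - δ/2) (ρ/2) with hξdef
    have hξρ : ξ < ρ := max_lt (by linarith) (by linarith)
    have hξ0 : 0 < ξ := lt_of_lt_of_le (by linarith) (le_max_right _ _)
    have hd : dist ξ ρ < δ := by
      rw [Real.dist_eq, abs_of_nonpos (by linarith)]
      have : ρ - δ/2 ≤ ξ := le_max_left _ _
      linarith
    exact absurd (hqpos ξ ⟨hξ0, hξρ⟩) (not_lt.mpr (hδ hd).le)
  rcases hqρnn.eq_or_lt with hq0 | hqρpos
  swap
  · -- q ρ > 0 : bounded case on all of [0, ρ]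
    apply aux_bnd n r hr hn hH hρ q f hqcont hqdef _ hfdef
    intro ξ hξ
    rcases eq_or_lt_of_le hξ.2 with he | hl
    · rw [he]; exact hqρpos
    · exact hqpos ξ ⟨hξ.1, hl⟩
  · -- q ρ = 0
    have hIρ : 0 < auxI n r ρ := auxI_pos n r hρ
    -- base equality at ρ
    have hrpoweq : ((Real.sinh ρ ^ (n-r) : ℝ)) ^ p = (((n:ℝ)*H*auxI n r ρ)) ^ p := by
      have := hqdef ρ ⟨hρ.le, le_refl _⟩
      rw [← hq0] at this
      linarith
    have hbase : (Real.sinh ρ ^ (n-r) : ℝ) = (n:ℝ)*H*auxI n r ρ := by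
      have ha0 : (0:ℝ) ≤ Real.sinh ρ ^ (n-r) := by positivity
      have hb0 : (0:ℝ) ≤ (n:ℝ)*H*auxI n r ρ := by positivity
      calc (Real.sinh ρ ^ (n-r) : ℝ)
          = (((Real.sinh ρ ^ (n-r) : ℝ)) ^ p) ^ p⁻¹ := by
            rw [← Real.rpow_mul ha0, mul_inv_cancel₀ hp.ne', Real.rpow_one]
        _ = ((((n:ℝ)*H*auxI n r ρ)) ^ p) ^ p⁻¹ := by rw [hrpoweq]
        _ = (n:ℝ)*H*auxI n r ρ := by
            rw [← Real.rpow_mul hb0, mul_inv_cancel₀ hp.ne', Real.rpow_one]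
    have hnH : (n:ℝ)*H = Real.sinh ρ ^ (n-r) / auxI n r ρ := by
      rw [eq_div_iff hIρ.ne']
      linarith [hbase]
    -- the nat-power difference P and its derivative Pd
    set P : ℝ → ℝ := fun ξ => Real.sinh ξ ^ (n-r) - (n:ℝ)*H*auxI n r ξ with hPdef
    set Pd : ℝ → ℝ := fun ξ =>
      ((n-r:ℕ):ℝ) * Real.sinh ξ ^ (n-r-1) * Real.cosh ξ - (n:ℝ)*H*auxJ n r ξ with hPddef
    have hPderiv : ∀ ξ : ℝ, HasDerivAt P (Pd ξ) ξ := by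
      intro ξ
      exact ((Real.hasDerivAt_sinh ξ).pow (n-r)).sub
        (((auxI_hasDeriv n r ξ).const_mul ((n:ℝ)*H)))
    have hPdcont : Continuous Pd := by
      apply Continuous.sub
      · exact (continuous_const.mul (Real.continuous_sinh.pow _)).mul Real.continuous_cosh
      · exact continuous_const.mul (auxJ_cont n r)
    have hPρ : P ρ = 0 := by
      rw [hPdef]
      simp only
      linarith [hbase]
    -- Pd ρ < 0
    have hJρ : 0 < auxJ n r ρ := auxJ_pos n r hρ
    have hPdρ : Pd ρ < 0 := by
      rw [hPddef]
      simp only [sub_neg]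
      have hn0 : (0:ℝ) < (n:ℝ) := by
        have : 0 < n := by omega
        exact_mod_cast this
      rcases eq_or_lt_of_le hn with heq | hlt
      · have heq' : n - r = 0 := by omega
        rw [heq']
        have : (0:ℝ) < (n:ℝ)*H*auxJ n r ρ := by positivity
        simpa using this
      · have hkey := aux_key n r hr hn hρ
        have hs1 : 0 < Real.sinh ρ ^ (n-r-1) := pow_pos hsρ _
        have h6 : ((n-r:ℕ):ℝ) * auxI n r ρ * Real.cosh ρ ^ r * Real.sinh ρ ^ (n-r-1)
            < Real.sinh ρ ^ n * Real.sinh ρ ^ (n-r-1) :=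
          mul_lt_mul_of_pos_right hkey hs1
        have e3 : Real.sinh ρ ^ n * Real.sinh ρ ^ (n-r-1)
            = Real.sinh ρ ^ (n-1) * Real.sinh ρ ^ (n-r) := by
          rw [← pow_add, ← pow_add]; congr 1; omega
        have e4 : Real.cosh ρ ^ r = Real.cosh ρ ^ (r-1) * Real.cosh ρ := by
          rw [← pow_succ]; congr 1; omega
        rw [hnH, auxJ]
        rw [div_mul_div_comm, lt_div_iff₀ (by positivity)]
        have hcρ : 0 < Real.cosh ρ := Real.cosh_pos ρ
        have h7 := h6
        rw [e3, e4] at h7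
        have e5 : ((n-r:ℕ):ℝ) * Real.sinh ρ ^ (n-r-1) * Real.cosh ρ *
            (auxI n r ρ * Real.cosh ρ ^ (r-1))
            = ((n-r:ℕ):ℝ) * auxI n r ρ * (Real.cosh ρ ^ (r-1) * Real.cosh ρ) *
              Real.sinh ρ ^ (n-r-1) := by ring
        have e6 : Real.sinh ρ ^ (n-r) * Real.sinh ρ ^ (n-1)
            = Real.sinh ρ ^ (n-1) * Real.sinh ρ ^ (n-r) := by ring
        linarith [h7, e5, e6]
    clear_value P Pd
    obtain ⟨ε, hε, hPdρε⟩ : ∃ ε : ℝ, 0 < ε ∧ Pd ρ < -ε :=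
      ⟨-(Pd ρ)/2, by linarith [hPdρ], by linarith [hPdρ]⟩
    have hev2 : ∀ᶠ ξ in nhds ρ, Pd ξ < -ε :=
      (hPdcont.tendsto ρ).eventually_lt_const hPdρε
    obtain ⟨δ, hδ0, hδ⟩ := Metric.eventually_nhds_iff.mp hev2
    set m : ℝ := max (ρ - δ/2) (ρ/2) with hmdef
    have hmρ : m < ρ := max_lt (by linarith) (by linarith)
    have hm0 : 0 < m := lt_of_lt_of_le (by linarith) (le_max_right _ _)
    have hPd_neg : ∀ ξ ∈ Set.Icc m ρ, Pd ξ ≤ -ε := by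
      intro ξ hξ
      apply le_of_lt
      apply hδ
      rw [Real.dist_eq, abs_of_nonpos (by linarith [hξ.2])]
      have h1 : ρ - δ/2 ≤ m := le_max_left _ _
      linarith [hξ.1]
    -- lower bound on P near ρ
    have hPlow : ∀ ξ ∈ Set.Icc m ρ, ε * (ρ - ξ) ≤ P ξ := by
      intro ξ hξ
      have hftc : ∫ t in ξ..ρ, Pd t = P ρ - P ξ :=
        intervalIntegral.integral_eq_sub_of_hasDerivAt
          (fun t _ => hPderiv t) (hPdcont.intervalIntegrable _ _)
      have hmono2 : (∫ t in ξ..ρ, Pd t) ≤ ∫ t in ξ..ρ, (-ε : ℝ) := by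
        apply intervalIntegral.integral_mono_on hξ.2
          (hPdcont.intervalIntegrable _ _) intervalIntegrable_const
        intro t ht
        exact hPd_neg t ⟨le_trans hξ.1 ht.1, ht.2⟩
      rw [intervalIntegral.integral_const, smul_eq_mul] at hmono2
      rw [hftc, hPρ] at hmono2
      linarith
    -- Bernoulli-type bound: q ξ ≥ K * P ξ on [m, ρ]
    set M : ℝ := Real.sinh ρ ^ (n-r) with hMdef
    have hM : 0 < M := by positivity
    set K : ℝ := p * M ^ (p - 1) with hKdef
    have hK : 0 < K := by
      have := Real.rpow_pos_of_pos hM (p-1)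
      positivity
    clear_value M K
    have hgx : Continuous fun t : ℝ => t ^ p := by
      rw [continuous_iff_continuousAt]
      intro t
      exact Real.continuousAt_rpow_const _ _ (Or.inr hp.le)
    have hgm : MonotoneOn (fun t : ℝ => t ^ p - K * t) (Set.Icc 0 M) := by
      have hdiff : ∀ t ∈ Set.Ioo (0:ℝ) M,
          HasDerivAt (fun t : ℝ => t ^ p - K * t) (p * t ^ (p-1) - K) t := by
        intro t ht
        have h1 : HasDerivAt (fun t : ℝ => t ^ p) (p * t ^ (p-1)) t := by
          have := Real.hasDerivAt_rpow_const (x := t) (p := p) (Or.inl ht.1.ne')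
          simpa [mul_comm] using this
        have h2 : HasDerivAt (fun t : ℝ => K * t) K t := by
          simpa using (hasDerivAt_id t).const_mul K
        exact h1.sub h2
      apply monotoneOn_of_deriv_nonneg (convex_Icc _ _)
      · exact (hgx.sub (continuous_const.mul continuous_id)).continuousOn
      · intro t ht
        rw [interior_Icc] at ht
        exact (hdiff t ht).differentiableAt.differentiableWithinAt
      · intro t ht
        rw [interior_Icc] at ht
        rw [(hdiff t ht).deriv]
        have : M ^ (p-1) ≤ t ^ (p-1) :=
          Real.rpow_le_rpow_of_nonpos ht.1 ht.2.le (by linarith)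
        rw [hKdef]
        nlinarith [this]
    have hqlow2 : ∀ ξ ∈ Set.Icc m ρ, K * P ξ ≤ q ξ := by
      intro ξ hξ
      have hξ0 : 0 < ξ := lt_of_lt_of_le hm0 hξ.1
      have hsξ : 0 ≤ Real.sinh ξ := Real.sinh_nonneg_iff.mpr hξ0.le
      have hqξ := hqdef ξ ⟨hξ0.le, hξ.2⟩
      have hqnn : 0 ≤ q ξ := by
        rcases eq_or_lt_of_le hξ.2 with he | hl
        · rw [he, ← hq0]
        · exact (hqpos ξ ⟨hξ0, hl⟩).le
      have hbnn : 0 ≤ (n:ℝ)*H*auxI n r ξ := by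
        have := auxI_nonneg n r hξ0.le
        positivity
      have hba : (n:ℝ)*H*auxI n r ξ ≤ Real.sinh ξ ^ (n-r) := by
        by_contra hab
        push_neg at hab
        have : ((Real.sinh ξ ^ (n-r):ℝ)) ^ p < (((n:ℝ)*H*auxI n r ξ)) ^ p :=
          Real.rpow_lt_rpow (by positivity) hab hp
        rw [hqξ] at hqnn
        linarith
      have haM : Real.sinh ξ ^ (n-r) ≤ M := by
        rw [hMdef]
        exact pow_le_pow_left₀ hsξ (Real.sinh_le_sinh.mpr hξ.2) _
      have hgba := hgm (Set.mem_Icc.mpr ⟨hbnn, hba.trans haM⟩)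
        (Set.mem_Icc.mpr ⟨by positivity, haM⟩) hba
      simp only at hgba
      rw [hqξ, hPdef]
      simp only
      linarith [hgba]
    -- upper bound for the numerator
    set X : ℝ := (((n:ℝ)*H*auxI n r ρ)) ^ p with hXdef
    have hXnn : 0 ≤ X := Real.rpow_nonneg (by positivity) _
    clear_value X
    have hxle : ∀ ξ ∈ Set.Icc (0:ℝ) ρ, (((n:ℝ)*H*auxI n r ξ)) ^ p ≤ X := by
      intro ξ hξ
      have h1 := auxI_mono n r hξ.1 hξ.2
      have h2 : (n:ℝ)*H*auxI n r ξ ≤ (n:ℝ)*H*auxI n r ρ :=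
        mul_le_mul_of_nonneg_left h1 (by positivity)
      have h3 := auxI_nonneg n r hξ.1
      rw [hXdef]
      exact Real.rpow_le_rpow (by positivity) h2 hp.le
    -- the integrable majorant
    set G : ℝ → ℝ := fun ξ => Real.sqrt (X/(K*ε)) * (ρ - ξ) ^ (-(1/2) : ℝ) with hGdef
    have hGint : IntervalIntegrable G volume m ρ := by
      have h8 : IntervalIntegrable (fun t : ℝ => t ^ (-(1/2) : ℝ)) volume 0 (ρ - m) :=
        intervalIntegral.intervalIntegrable_rpow' (by norm_num)
      have h9 := h8.comp_sub_left ρ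
      rw [sub_zero, sub_sub_cancel] at h9
      exact (h9.symm).const_mul _
    have hbound2 : ∀ ξ ∈ Set.uIoc m ρ, ‖f ξ‖ ≤ G ξ := by
      intro ξ hξ
      rw [Set.uIoc_of_le hmρ.le] at hξ
      rw [hfdef, Real.norm_of_nonneg (Real.sqrt_nonneg _)]
      rcases eq_or_lt_of_le hξ.2 with he | hl
      · subst he
        rw [← hq0, div_zero, Real.sqrt_zero, hGdef]
        simp only [sub_self]
        rw [Real.zero_rpow (by norm_num)]
        simp
      · have hξIcc : ξ ∈ Set.Icc m ρ := ⟨hξ.1.le, hξ.2⟩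
        have hξ0 : 0 < ξ := lt_of_lt_of_le hm0 hξ.1.le
        have hqlb : K * ε * (ρ - ξ) ≤ q ξ := by
          have h1 := hPlow ξ hξIcc
          have h2 := hqlow2 ξ hξIcc
          nlinarith [h1, h2]
        have hρξ : 0 < ρ - ξ := by linarith
        have hqp : 0 < q ξ := lt_of_lt_of_le (mul_pos (mul_pos hK hε) hρξ) hqlb
        have hdle : (((n:ℝ)*H*auxI n r ξ)) ^ p / q ξ ≤ X / (K*ε*(ρ-ξ)) :=
          div_le_div₀ hXnn (hxle ξ ⟨hξ0.le, hξ.2⟩) (mul_pos (mul_pos hK hε) hρξ) hqlb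
        refine (Real.sqrt_le_sqrt hdle).trans (le_of_eq ?_)
        rw [hGdef]
        have e5 : X / (K*ε*(ρ-ξ)) = (X/(K*ε)) * (ρ-ξ)⁻¹ := by
          field_simp
        rw [e5, Real.sqrt_mul (by positivity), Real.sqrt_inv]
        congr 1
        rw [Real.rpow_neg (by linarith), ← Real.sqrt_eq_rpow]
    have hint2 : IntervalIntegrable f volume m ρ := by
      apply IntervalIntegrable.mono_fun' (g := G) hGint
        (hfmeas.aestronglyMeasurable.restrict)
      exact ae_restrict_of_forall_mem measurableSet_uIoc hbound2
    have hint1 : IntervalIntegrable f volume 0 m := by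
      apply aux_bnd n r hr hn hH hm0 q f hqcont _ _ hfdef
      · intro ξ hξ
        exact hqdef ξ ⟨hξ.1, hξ.2.trans hmρ.le⟩
      · intro ξ hξ
        exact hqpos ξ ⟨hξ.1, lt_of_le_of_lt hξ.2 hmρ⟩
    exact hint1.trans hint2
/-- monotonicity of the rotational profile height in `H`: if `0 < H₁ < H₂`
and `q_{H₂} > 0` on `(0, ρ)` then `q_{H₁} > 0` on `(0, ρ)` and `λ_{H₁}(ρ) < λ_{H₂}(ρ)`. -/
theorem stmt14 (n r : ℕ) (hr : 2 ≤ r) (hn : r ≤ n) (ρ : ℝ) (hρ : 0 < ρ)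
    (H₁ H₂ : ℝ) (hH₁ : 0 < H₁) (hH₁₂ : H₁ < H₂)
    (I : ℝ → ℝ) (qH : ℝ → ℝ → ℝ) (lamH : ℝ → ℝ → ℝ)
    (hI : ∀ ξ : ℝ, I ξ
      = ∫ s in (0 : ℝ)..ξ, Real.sinh s ^ ((n : ℝ) - 1) / Real.cosh s ^ ((r : ℝ) - 1))
    (hq : ∀ H ξ : ℝ, qH H ξ
      = Real.sinh ξ ^ (2 * ((n : ℝ) - r) / r) - ((n : ℝ) * H * I ξ) ^ (2 / (r : ℝ)))
    (hlam : ∀ H ρ' : ℝ, lamH H ρ'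
      = ∫ ξ in (0 : ℝ)..ρ', Real.sqrt ((((n : ℝ) * H * I ξ) ^ (2 / (r : ℝ))) / qH H ξ))
    (hq₂pos : ∀ ξ ∈ Set.Ioo (0 : ℝ) ρ, 0 < qH H₂ ξ) :
    (∀ ξ ∈ Set.Ioo (0 : ℝ) ρ, 0 < qH H₁ ξ) ∧ lamH H₁ ρ < lamH H₂ ρ := by
  have hH₂ : 0 < H₂ := hH₁.trans hH₁₂
  have hrR : (0:ℝ) < (r:ℝ) := by positivity
  have hnR : (0:ℝ) < (n:ℝ) := by
    have : 0 < n := by omega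
    exact_mod_cast this
  have hp : 0 < 2/(r:ℝ) := by positivity
  -- identify I with auxI
  have hIfun : I = auxI n r := by
    funext ξ
    rw [hI ξ, auxI]
    apply intervalIntegral.integral_congr
    intro s _
    have e1 : ((n:ℝ) - 1) = ((n-1:ℕ):ℝ) := by
      rw [Nat.cast_sub (by omega)]; norm_num
    have e2 : ((r:ℝ) - 1) = ((r-1:ℕ):ℝ) := by
      rw [Nat.cast_sub (by omega)]; norm_num
    simp only [auxJ, e1, e2, Real.rpow_natCast]
  subst hIfun
  -- rewrite q in nat-power form on [0, ρ]
  have hqdef : ∀ H' : ℝ, ∀ ξ ∈ Set.Icc (0:ℝ) ρ, qH H' ξ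
      = ((Real.sinh ξ ^ (n-r) : ℝ) ^ (2/(r:ℝ))
        - (((n:ℝ)*H'*auxI n r ξ)) ^ (2/(r:ℝ))) := by
    intro H' ξ hξ
    rw [hq H' ξ]
    congr 1
    have hsξ : 0 ≤ Real.sinh ξ := Real.sinh_nonneg_iff.mpr hξ.1
    rw [← Real.rpow_natCast (Real.sinh ξ) (n-r), ← Real.rpow_mul hsξ]
    congr 1
    rw [Nat.cast_sub hn]
    ring
  -- first conjunct
  have hxlt : ∀ ξ ∈ Set.Ioo (0:ℝ) ρ,
      (((n:ℝ)*H₁*auxI n r ξ)) ^ (2/(r:ℝ)) < (((n:ℝ)*H₂*auxI n r ξ)) ^ (2/(r:ℝ)) := by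
    intro ξ hξ
    have hIξ : 0 < auxI n r ξ := auxI_pos n r hξ.1
    apply Real.rpow_lt_rpow (by positivity) _ hp
    have : (n:ℝ)*H₁ < (n:ℝ)*H₂ := by nlinarith
    exact mul_lt_mul_of_pos_right this hIξ
  have hq₁pos : ∀ ξ ∈ Set.Ioo (0:ℝ) ρ, 0 < qH H₁ ξ := by
    intro ξ hξ
    have h1 := hq₂pos ξ hξ
    have h2 := hxlt ξ hξ
    rw [hq H₁ ξ]
    rw [hq H₂ ξ] at h1
    linarith
  refine ⟨hq₁pos, ?_⟩
  -- continuity of qH H'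
  have hqcont : ∀ H' : ℝ, Continuous (qH H') := by
    intro H'
    have : qH H' = fun ξ => Real.sinh ξ ^ (2 * ((n:ℝ) - r) / r)
        - ((n:ℝ) * H' * auxI n r ξ) ^ (2 / (r:ℝ)) := funext (hq H')
    rw [this]
    apply Continuous.sub
    · rw [continuous_iff_continuousAt]
      intro ξ
      apply (Real.continuousAt_rpow_const _ _ (Or.inr _)).comp
        Real.continuous_sinh.continuousAt
      have : (0:ℝ) ≤ (n:ℝ) - (r:ℝ) := by
        have : (r:ℝ) ≤ (n:ℝ) := by exact_mod_cast hn
        linarith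
      positivity
    · rw [continuous_iff_continuousAt]
      intro ξ
      exact (Real.continuousAt_rpow_const _ _ (Or.inr hp.le)).comp
        ((continuous_const.mul (auxI_cont n r)).continuousAt)
  -- integrability of both profile integrands
  have hfi₁ : IntervalIntegrable
      (fun ξ => Real.sqrt ((((n:ℝ) * H₁ * auxI n r ξ) ^ (2/(r:ℝ))) / qH H₁ ξ))
      volume 0 ρ :=
    aux_int n r hr hn hH₁ hρ (qH H₁) _ (hqcont H₁) (hqdef H₁) hq₁pos rfl
  have hfi₂ : IntervalIntegrable
      (fun ξ => Real.sqrt ((((n:ℝ) * H₂ * auxI n r ξ) ^ (2/(r:ℝ))) / qH H₂ ξ))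
      volume 0 ρ :=
    aux_int n r hr hn hH₂ hρ (qH H₂) _ (hqcont H₂) (hqdef H₂) hq₂pos rfl
  -- strict pointwise comparison
  have hptwise : ∀ ξ ∈ Set.Ioo (0:ℝ) ρ,
      0 < Real.sqrt ((((n:ℝ) * H₂ * auxI n r ξ) ^ (2/(r:ℝ))) / qH H₂ ξ)
        - Real.sqrt ((((n:ℝ) * H₁ * auxI n r ξ) ^ (2/(r:ℝ))) / qH H₁ ξ) := by
    intro ξ hξ
    have hIξ : 0 < auxI n r ξ := auxI_pos n r hξ.1
    have hx12 := hxlt ξ hξ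
    have hq2 := hq₂pos ξ hξ
    have hq1 := hq₁pos ξ hξ
    have hq21 : qH H₂ ξ < qH H₁ ξ := by
      rw [hq H₁ ξ, hq H₂ ξ]
      linarith
    have hx1nn : 0 ≤ (((n:ℝ)*H₁*auxI n r ξ)) ^ (2/(r:ℝ)) :=
      Real.rpow_nonneg (by positivity) _
    have hdivlt : (((n:ℝ)*H₁*auxI n r ξ)) ^ (2/(r:ℝ)) / qH H₁ ξ
        < (((n:ℝ)*H₂*auxI n r ξ)) ^ (2/(r:ℝ)) / qH H₂ ξ :=
      div_lt_div₀ hx12 hq21.le (Real.rpow_nonneg (by positivity) _) hq2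
    have := Real.sqrt_lt_sqrt (div_nonneg hx1nn hq1.le) hdivlt
    linarith
  have hpos := intervalIntegral.intervalIntegral_pos_of_pos_on
    (hfi₂.sub hfi₁) hptwise hρ
  rw [intervalIntegral.integral_sub hfi₂ hfi₁] at hpos
  rw [hlam H₁ ρ, hlam H₂ ρ]
  linarith
end

section
/- Let n > r ≥ 2 be integers. For each H > (n−r)/n let ρ₀(H) denote the unique positive zero of g_H(ξ) = sinh(ξ)^{n−r} − n·H·∫₀^ξ sinh(s)^{n−1}/cosh(s)^{r−1} ds. Then ρ₀(H) → ∞ as H → ((n−r)/n)⁺; that is, for every A > 0 there exists δ > 0 such that (n−r)/n < H < (n−r)/n + δ implies ρ₀(H) > A. -/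
open Real MeasureTheory intervalIntegral in
lemma stmt15_aux (n r : ℕ) (hr : 2 ≤ r) (hnr : r < n) (A H : ℝ) (hA : 0 < A)
    (hH : 0 < H)
    (hkey : (n : ℝ) * H * (Real.sinh A / Real.cosh A) ^ (r : ℝ) < (n : ℝ) - r) :
    ∀ ξ : ℝ, 0 < ξ → ξ ≤ A →
      0 < Real.sinh ξ ^ ((n : ℝ) - r)
        - (n : ℝ) * H * ∫ s in (0:ℝ)..ξ,
            Real.sinh s ^ ((n : ℝ) - 1) / Real.cosh s ^ ((r : ℝ) - 1) := by
  intro ξ hξ hξA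
  have hnR : (r : ℝ) < (n : ℝ) := by exact_mod_cast hnr
  have hrR : (2 : ℝ) ≤ (r : ℝ) := by exact_mod_cast hr
  have hnr1 : (r : ℝ) + 1 ≤ (n : ℝ) := by exact_mod_cast hnr
  set a : ℝ := (n : ℝ) - r with ha
  have ha1 : 1 ≤ a := by simp only [ha]; linarith
  have cont1 : Continuous fun s : ℝ => a * Real.sinh s ^ (a - 1) * Real.cosh s :=
    ((continuous_const.mul (Real.continuous_sinh.rpow_const
      (fun x => Or.inr (by linarith)))).mul Real.continuous_cosh)
  have cont2 : Continuous fun s : ℝ =>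
      Real.sinh s ^ ((n : ℝ) - 1) / Real.cosh s ^ ((r : ℝ) - 1) :=
    (Real.continuous_sinh.rpow_const (fun x => Or.inr (by linarith))).div
      (Real.continuous_cosh.rpow_const (fun x => Or.inl (Real.cosh_pos x).ne'))
      (fun x => (Real.rpow_pos_of_pos (Real.cosh_pos x) _).ne')
  have hFTC : ∫ s in (0:ℝ)..ξ, a * Real.sinh s ^ (a - 1) * Real.cosh s
      = Real.sinh ξ ^ a := by
    have h := intervalIntegral.integral_eq_sub_of_hasDerivAt
      (f := fun x => Real.sinh x ^ a)
      (f' := fun s => a * Real.sinh s ^ (a - 1) * Real.cosh s) (a := 0) (b := ξ)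
      (fun s _ => by
        have h1 : HasDerivAt (fun x : ℝ => x ^ a) (a * Real.sinh s ^ (a - 1))
            (Real.sinh s) := Real.hasDerivAt_rpow_const (Or.inr ha1)
        exact h1.comp s (Real.hasDerivAt_sinh s))
      (cont1.intervalIntegrable 0 ξ)
    simp only [Real.sinh_zero] at h
    rw [Real.zero_rpow (show a ≠ 0 by simp only [ha]; intro hz; linarith), sub_zero] at h
    exact h
  have hrw : Real.sinh ξ ^ a - (n : ℝ) * H * ∫ s in (0:ℝ)..ξ,
        Real.sinh s ^ ((n : ℝ) - 1) / Real.cosh s ^ ((r : ℝ) - 1)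
      = ∫ s in (0:ℝ)..ξ, (a * Real.sinh s ^ (a - 1) * Real.cosh s
          - (n : ℝ) * H * (Real.sinh s ^ ((n : ℝ) - 1) / Real.cosh s ^ ((r : ℝ) - 1))) := by
    rw [intervalIntegral.integral_sub (cont1.intervalIntegrable 0 ξ)
      ((show Continuous fun s => (n : ℝ) * H * (Real.sinh s ^ ((n : ℝ) - 1) / Real.cosh s ^ ((r : ℝ) - 1)) from continuous_const.mul cont2).intervalIntegrable 0 ξ), hFTC,
      intervalIntegral.integral_const_mul]
  rw [hrw]
  apply intervalIntegral.intervalIntegral_pos_of_pos_on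
    ((show Continuous fun s => a * Real.sinh s ^ (a - 1) * Real.cosh s - (n : ℝ) * H * (Real.sinh s ^ ((n : ℝ) - 1) / Real.cosh s ^ ((r : ℝ) - 1)) from cont1.sub (continuous_const.mul cont2)).intervalIntegrable 0 ξ) _ hξ
  intro s hs
  have hS : 0 < Real.sinh s := Real.sinh_pos_iff.mpr hs.1
  have hC : 0 < Real.cosh s := Real.cosh_pos s
  have hCA : 0 < Real.cosh A := Real.cosh_pos A
  set S := Real.sinh s
  set C := Real.cosh s
  -- tanh monotonicity
  have hsA : s ≤ A := le_trans hs.2.le hξA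
  have hsub : Real.sinh (s - A) ≤ 0 := by
    have : s - A ≤ 0 := by linarith
    calc Real.sinh (s - A) ≤ Real.sinh 0 := by
          rcases eq_or_lt_of_le this with h | h
          · rw [h]
          · exact (Real.sinh_lt_sinh.mpr h).le
      _ = 0 := Real.sinh_zero
  have htanh : S ≤ (Real.sinh A / Real.cosh A) * C := by
    rw [Real.sinh_sub] at hsub
    rw [div_mul_eq_mul_div, le_div_iff₀ hCA]
    nlinarith
  have hstep : (n : ℝ) * H * S ^ (r : ℝ) < a * C ^ (r : ℝ) := by
    have h2 : S ^ (r : ℝ) ≤ ((Real.sinh A / Real.cosh A) * C) ^ (r : ℝ) :=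
      Real.rpow_le_rpow hS.le htanh (by positivity)
    rw [Real.mul_rpow (by positivity) hC.le] at h2
    have hCr : 0 < C ^ (r : ℝ) := Real.rpow_pos_of_pos hC _
    have h3 : (n : ℝ) * H * S ^ (r : ℝ)
        ≤ (n : ℝ) * H * ((Real.sinh A / Real.cosh A) ^ (r : ℝ) * C ^ (r : ℝ)) := by
      apply mul_le_mul_of_nonneg_left h2 (by positivity)
    have h4 : ((n : ℝ) * H * (Real.sinh A / Real.cosh A) ^ (r : ℝ)) * C ^ (r : ℝ)
        < a * C ^ (r : ℝ) := by
      apply mul_lt_mul_of_pos_right _ hCr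
      simpa [ha] using hkey
    nlinarith
  have hSb : S ^ ((n : ℝ) - 1) = S ^ (a - 1) * S ^ (r : ℝ) := by
    rw [← Real.rpow_add hS]; congr 1; simp only [ha]; ring
  have hCq : C ^ ((r : ℝ) - 1) * C = C ^ (r : ℝ) := by
    have h := Real.rpow_add_one hC.ne' ((r : ℝ) - 1)
    rw [sub_add_cancel] at h
    rw [← h]
  have hq : 0 < C ^ ((r : ℝ) - 1) := Real.rpow_pos_of_pos hC _
  have hSa1 : 0 < S ^ (a - 1) := Real.rpow_pos_of_pos hS _
  rw [sub_pos, hSb, mul_div_assoc'] at *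
  rw [div_lt_iff₀ hq]
  have hmain : S ^ (a - 1) * ((n : ℝ) * H * S ^ (r : ℝ))
      < S ^ (a - 1) * (a * C ^ (r : ℝ)) := mul_lt_mul_of_pos_left hstep hSa1
  rw [← hCq] at hmain
  nlinarith [hmain]

/-- for `n > r ≥ 2`, let `ρ₀(H)` denote, for each `H > (n−r)/n`, the unique
positive zero of `g_H(ξ) = sinh(ξ)^(n−r) − nH·I(ξ)`. Then `ρ₀(H) → ∞` as
`H → ((n−r)/n)⁺`: for every `A > 0` there is `δ > 0` such that
`(n−r)/n < H < (n−r)/n + δ` implies `ρ₀(H) > A`. -/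
theorem stmt15 (n r : ℕ) (hr : 2 ≤ r) (hnr : r < n)
    (I : ℝ → ℝ)
    (hI : ∀ ξ : ℝ, I ξ
      = ∫ s in (0 : ℝ)..ξ, Real.sinh s ^ ((n : ℝ) - 1) / Real.cosh s ^ ((r : ℝ) - 1))
    (ρ₀ : ℝ → ℝ)
    (hρ₀ : ∀ H : ℝ, ((n : ℝ) - r) / n < H →
      0 < ρ₀ H ∧
      Real.sinh (ρ₀ H) ^ ((n : ℝ) - r) - (n : ℝ) * H * I (ρ₀ H) = 0 ∧
      (∀ ξ : ℝ, 0 < ξ →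
        Real.sinh ξ ^ ((n : ℝ) - r) - (n : ℝ) * H * I ξ = 0 → ξ = ρ₀ H)) :
    ∀ A : ℝ, 0 < A → ∃ δ : ℝ, 0 < δ ∧
      ∀ H : ℝ, ((n : ℝ) - r) / n < H → H < ((n : ℝ) - r) / n + δ → A < ρ₀ H := by
  intro A hA
  have hnR : (r : ℝ) < (n : ℝ) := by exact_mod_cast hnr
  have hn0 : (0 : ℝ) < n := by
    have : 0 < n := by omega
    exact_mod_cast this
  set c : ℝ := ((n : ℝ) - r) / n with hc_def
  have hc : 0 < c := by
    apply div_pos (by linarith) hn0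
  set t : ℝ := Real.sinh A / Real.cosh A with ht_def
  have ht0 : 0 < t := div_pos (Real.sinh_pos_iff.mpr hA) (Real.cosh_pos A)
  have ht1 : t < 1 := (div_lt_one (Real.cosh_pos A)).mpr (Real.sinh_lt_cosh A)
  set tr : ℝ := t ^ (r : ℝ) with htr_def
  have htr0 : 0 < tr := Real.rpow_pos_of_pos ht0 _
  have htr1 : tr < 1 := Real.rpow_lt_one ht0.le ht1 (by positivity)
  refine ⟨c / tr - c, ?_, ?_⟩
  · have : c < c / tr := by
      rw [lt_div_iff₀ htr0]; nlinarith
    linarith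
  · intro H hH1 hH2
    have hH0 : 0 < H := lt_trans hc hH1
    have hHc : H < c / tr := by linarith
    have hkey : (n : ℝ) * H * tr < (n : ℝ) - r := by
      have h2 : H * tr < c := (lt_div_iff₀ htr0).mp hHc
      have h3 : (n : ℝ) * c = (n : ℝ) - r := by
        rw [hc_def]; field_simp [hn0.ne']
      nlinarith
    by_contra hcon
    push_neg at hcon
    obtain ⟨hpos, hzero, -⟩ := hρ₀ H hH1
    have hgt := stmt15_aux n r hr hnr A H hA hH0 hkey (ρ₀ H) hpos hcon
    rw [hI] at hzero
    linarith
end
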